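/- arXiv:0901.2923 — 11 statements merged into one kernel-verified Lean document; each statement's English description precedes it below -/
import Mathlib

section
/- For N ≥ 1 and U ∈ O(N), one has ||U||₁ = N·√N if and only if |U_{ij}| = 1/√N for all i,j, i.e. if and only if the matrix H = √N·U has all entries ±1 and pairwise orthogonal rows (H is a Hadamard matrix). -/
open Matrix

/-- A Hadamard matrix of order `N`: all entries are `±1` and the rows are
pairwise orthogonal. -/
def IsHadamard {N : ℕ} (H : Matrix (Fin N) (Fin N) ℝ) : Prop :=
  (∀ i j, H i j = 1 ∨ H i j = -1) ∧
    ∀ i j, i ≠ j → ∑ k, H i k * H j k = 0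

/-- For `N ≥ 1` and `U ∈ O(N)`, one has `‖U‖₁ = N·√N` iff `|Uᵢⱼ| = 1/√N` for
all `i, j`, iff `H = √N·U` is a Hadamard matrix. -/
theorem norm1_eq_iff_hadamard (N : ℕ) (hN : 1 ≤ N)
    (U : Matrix (Fin N) (Fin N) ℝ) (hU : U * Uᵀ = 1) :
    ((∑ i, ∑ j, |U i j|) = (N : ℝ) * Real.sqrt N ↔
      ∀ i j, |U i j| = 1 / Real.sqrt N) ∧
    ((∑ i, ∑ j, |U i j|) = (N : ℝ) * Real.sqrt N ↔
      _root_.IsHadamard (Real.sqrt N • U)) := by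
  set s := Real.sqrt N with hsdef
  have hNpos : (0:ℝ) < N := by exact_mod_cast Nat.lt_of_lt_of_le Nat.zero_lt_one hN
  have hs : 0 < s := Real.sqrt_pos.mpr hNpos
  have hs2 : s * s = N := Real.mul_self_sqrt (le_of_lt hNpos)
  have hrow : ∀ i, ∑ k, U i k * U i k = 1 := by
    intro i
    have := congrFun (congrFun hU i) i
    simpa [Matrix.mul_apply, Matrix.one_apply] using this
  have horth : ∀ i j, i ≠ j → ∑ k, U i k * U j k = 0 := by
    intro i j hij
    have := congrFun (congrFun hU i) j
    simpa [Matrix.mul_apply, Matrix.one_apply, hij] using this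
  -- pointwise bound
  have key : ∀ x : ℝ, |x| ≤ (s * (x * x) + 1 / s) / 2 := by
    intro x
    have h2 : |x| * |x| = x * x := abs_mul_abs_self x
    have h4 : s * (s * (x * x) + 1 / s - |x| * 2) = (s * |x| - 1) ^ 2 := by
      field_simp
      nlinarith [h2]
    have h5 : 0 ≤ s * (s * (x * x) + 1 / s - |x| * 2) := h4 ▸ sq_nonneg _
    have h6 : 0 ≤ s * (x * x) + 1 / s - |x| * 2 := nonneg_of_mul_nonneg_right h5 hs
    linarith
  -- total of RHS
  have hsumrhs : ∑ i : Fin N, ∑ j : Fin N, (s * (U i j * U i j) + 1 / s) / 2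
      = (N : ℝ) * s := by
    have : ∀ i : Fin N, ∑ j : Fin N, (s * (U i j * U i j) + 1 / s) / 2
        = (s * 1 + (N : ℝ) / s) / 2 := by
      intro i
      rw [← Finset.sum_div]
      congr 1
      rw [Finset.sum_add_distrib, ← Finset.mul_sum, hrow i]
      simp [Finset.sum_const, div_eq_mul_inv, mul_comm]
    rw [Finset.sum_congr rfl fun i _ => this i]
    simp only [Finset.sum_const, Finset.card_univ, Fintype.card_fin, nsmul_eq_mul]
    field_simp
    nlinarith [hs2]
  have hQ : (∑ i, ∑ j, |U i j|) = (N : ℝ) * s ↔ ∀ i j, |U i j| = 1 / s := by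
    constructor
    · intro h i j
      have hle : ∀ i : Fin N, ∀ j : Fin N,
          |U i j| ≤ (s * (U i j * U i j) + 1 / s) / 2 := fun i j => key _
      have hsumle : ∀ i : Fin N,
          ∑ j, |U i j| ≤ ∑ j, (s * (U i j * U i j) + 1 / s) / 2 :=
        fun i => Finset.sum_le_sum fun j _ => hle i j
      have houter : (∑ i, ∑ j, |U i j|)
          ≤ ∑ i : Fin N, ∑ j : Fin N, (s * (U i j * U i j) + 1 / s) / 2 :=
        Finset.sum_le_sum fun i _ => hsumle i
      -- equality of sums forces termwise equality
      have hsum_eq : (∑ i, ∑ j, |U i j|)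
          = ∑ i : Fin N, ∑ j : Fin N, (s * (U i j * U i j) + 1 / s) / 2 := by
        rw [h, hsumrhs]
      have hinner : ∀ i ∈ (Finset.univ : Finset (Fin N)),
          ∑ j, |U i j| = ∑ j, (s * (U i j * U i j) + 1 / s) / 2 :=
        (Finset.sum_eq_sum_iff_of_le (fun i _ => hsumle i)).mp hsum_eq
      have hterm : |U i j| = (s * (U i j * U i j) + 1 / s) / 2 :=
        (Finset.sum_eq_sum_iff_of_le (fun j _ => hle i j)).mp
          (hinner i (Finset.mem_univ i)) j (Finset.mem_univ j)
      have h2 : |U i j| * |U i j| = U i j * U i j := abs_mul_abs_self _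
      have hterm' : |U i j| * 2 * s = s * s * (U i j * U i j) + 1 := by
        field_simp at hterm
        linarith [hterm]
      have habs : s * |U i j| = 1 := by
        nlinarith [sq_nonneg (s * |U i j| - 1), h2, hterm']
      field_simp
      linarith [habs]
    · intro h
      have : ∀ i : Fin N, ∑ j : Fin N, |U i j| = (N : ℝ) / s := by
        intro i
        rw [Finset.sum_congr rfl fun j _ => h i j]
        simp [div_eq_mul_inv]
      rw [Finset.sum_congr rfl fun i _ => this i]
      simp only [Finset.sum_const, Finset.card_univ, Fintype.card_fin, nsmul_eq_mul]
      field_simp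
      nlinarith [hs2]
  refine ⟨hQ, hQ.trans ?_⟩
  constructor
  · intro h
    constructor
    · intro i j
      have := h i j
      have habs : |s * U i j| = 1 := by
        rw [abs_mul, abs_of_pos hs, this]
        field_simp
      rcases abs_eq (by norm_num : (0:ℝ) ≤ 1) |>.mp habs with h1 | h1 <;>
        simp [Matrix.smul_apply, smul_eq_mul, h1]
    · intro i j hij
      have := horth i j hij
      simp only [Matrix.smul_apply, smul_eq_mul]
      have : ∑ k, s * U i k * (s * U j k) = s * s * ∑ k, U i k * U j k := by
        rw [Finset.mul_sum]; congr 1; funext k; ring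
      rw [this, horth i j hij, mul_zero]
  · rintro ⟨hpm, -⟩ i j
    rcases hpm i j with h1 | h1 <;>
    · simp only [Matrix.smul_apply, smul_eq_mul] at h1
      have : |s * U i j| = 1 := by rw [h1]; norm_num
      rw [abs_mul, abs_of_pos hs] at this
      field_simp
      linarith [this]
end

section
/- For every orthogonal matrix U ∈ O(3), the 1-norm satisfies ||U||₁ ≤ 5. -/
open Matrix


lemma cs3 (a b c x y z : ℝ) :
    (a*x+b*y+c*z)^2 ≤ (a^2+b^2+c^2)*(x^2+y^2+z^2) := by
  nlinarith [sq_nonneg (a*y-b*x), sq_nonneg (a*z-c*x), sq_nonneg (b*z-c*y)]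

lemma cs9 (x1 x2 x3 x4 x5 x6 x7 x8 x9 y1 y2 y3 y4 y5 y6 y7 y8 y9 : ℝ) :
    (x1*y1+x2*y2+x3*y3+x4*y4+x5*y5+x6*y6+x7*y7+x8*y8+x9*y9)^2 ≤
    (x1^2+x2^2+x3^2+x4^2+x5^2+x6^2+x7^2+x8^2+x9^2)*(y1^2+y2^2+y3^2+y4^2+y5^2+y6^2+y7^2+y8^2+y9^2) := by
  have h := Finset.sum_mul_sq_le_sq_mul_sq Finset.univ
    (![x1,x2,x3,x4,x5,x6,x7,x8,x9] : Fin 9 → ℝ) ![y1,y2,y3,y4,y5,y6,y7,y8,y9]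
  simp [Fin.sum_univ_succ] at h
  linarith [h]

lemma finalB (S A : ℝ) (h1 : (9*S - 3*A)^2 ≤ 72*18) (h2 : A^2 ≤ 3*3) : S ≤ 5 := by
  nlinarith [h1, h2, sq_nonneg (9*S - 3*A - 36), sq_nonneg (A - 3)]

set_option maxHeartbeats 1000000 in
lemma caseB (x1 x2 x3 y1 y2 y3 z1 z2 z3 a1 a2 a3 b1 b2 b3 c1 c2 c3 p q : ℝ)
    (hxx : x1^2+x2^2+x3^2 = 1) (hyy : y1^2+y2^2+y3^2 = 1) (hzz : z1^2+z2^2+z3^2 = 1)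
    (hxy : x1*y1+x2*y2+x3*y3 = 0) (hxz : x1*z1+x2*z2+x3*z3 = 0)
    (hyz : y1*z1+y2*z2+y3*z3 = 0)
    (ha1 : a1^2 = 1) (ha2 : a2^2 = 1) (ha3 : a3^2 = 1)
    (hb1 : b1^2 = 1) (hb2 : b2^2 = 1) (hb3 : b3^2 = 1)
    (hc1 : c1^2 = 1) (hc2 : c2^2 = 1) (hc3 : c3^2 = 1)
    (hp : a1*b1+a2*b2+a3*b3 = p) (hq : a1*c1+a2*c2+a3*c3 = q)
    (hr : b1*c1+b2*c2+b3*c3 = -(p*q))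
    (hp2 : p^2 = 1) (hq2 : q^2 = 1) :
    a1*x1+a2*x2+a3*x3 + (b1*y1+b2*y2+b3*y3) + (c1*z1+c2*z2+c3*z3) ≤ 5 := by
  have hC : (a1-p*b1-q*c1)^2+(a2-p*b2-q*c2)^2+(a3-p*b3-q*c3)^2 = 3 := by
    linear_combination (ha1+ha2+ha3) + p^2*(hb1+hb2+hb3) + q^2*(hc1+hc2+hc3)
      - 2*p*hp - 2*q*hq + 2*p*q*hr + (1 - 2*q^2)*hp2 - hq2
  have hD : (x1-p*y1-q*z1)^2+(x2-p*y2-q*z2)^2+(x3-p*y3-q*z3)^2 = 3 := by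
    linear_combination hxx + p^2*hyy + q^2*hzz - 2*p*hxy - 2*q*hxz + 2*p*q*hyz + hp2 + hq2
  have hA := cs3 (a1-p*b1-q*c1) (a2-p*b2-q*c2) (a3-p*b3-q*c3)
    (x1-p*y1-q*z1) (x2-p*y2-q*z2) (x3-p*y3-q*z3)
  rw [hC, hD] at hA
  have hX : (3*a1-(a1-p*b1-q*c1))^2+(3*a2-(a2-p*b2-q*c2))^2+(3*a3-(a3-p*b3-q*c3))^2
      + (3*b1+p*(a1-p*b1-q*c1))^2+(3*b2+p*(a2-p*b2-q*c2))^2+(3*b3+p*(a3-p*b3-q*c3))^2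
      + (3*c1+q*(a1-p*b1-q*c1))^2+(3*c2+q*(a2-p*b2-q*c2))^2+(3*c3+q*(a3-p*b3-q*c3))^2 = 72 := by
    linear_combination 9*(ha1+ha2+ha3+hb1+hb2+hb3+hc1+hc2+hc3)
      + (p^2+q^2-5)*hC + 3*hp2 + 3*hq2
  have hY : (3*x1-(x1-p*y1-q*z1))^2+(3*x2-(x2-p*y2-q*z2))^2+(3*x3-(x3-p*y3-q*z3))^2
      + (3*y1+p*(x1-p*y1-q*z1))^2+(3*y2+p*(x2-p*y2-q*z2))^2+(3*y3+p*(x3-p*y3-q*z3))^2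
      + (3*z1+q*(x1-p*y1-q*z1))^2+(3*z2+q*(x2-p*y2-q*z2))^2+(3*z3+q*(x3-p*y3-q*z3))^2 = 18 := by
    linear_combination 9*(hxx+hyy+hzz) + (p^2+q^2-5)*hD + 3*hp2 + 3*hq2
  have hXY := cs9 (3*a1-(a1-p*b1-q*c1)) (3*a2-(a2-p*b2-q*c2)) (3*a3-(a3-p*b3-q*c3))
    (3*b1+p*(a1-p*b1-q*c1)) (3*b2+p*(a2-p*b2-q*c2)) (3*b3+p*(a3-p*b3-q*c3))
    (3*c1+q*(a1-p*b1-q*c1)) (3*c2+q*(a2-p*b2-q*c2)) (3*c3+q*(a3-p*b3-q*c3))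
    (3*x1-(x1-p*y1-q*z1)) (3*x2-(x2-p*y2-q*z2)) (3*x3-(x3-p*y3-q*z3))
    (3*y1+p*(x1-p*y1-q*z1)) (3*y2+p*(x2-p*y2-q*z2)) (3*y3+p*(x3-p*y3-q*z3))
    (3*z1+q*(x1-p*y1-q*z1)) (3*z2+q*(x2-p*y2-q*z2)) (3*z3+q*(x3-p*y3-q*z3))
  rw [hX, hY] at hXY
  obtain ⟨S, hS⟩ : ∃ s : ℝ, s = a1*x1+a2*x2+a3*x3 + (b1*y1+b2*y2+b3*y3) + (c1*z1+c2*z2+c3*z3) :=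
    ⟨_, rfl⟩
  obtain ⟨A, hA'⟩ : ∃ s : ℝ, s = (a1-p*b1-q*c1)*(x1-p*y1-q*z1)+(a2-p*b2-q*c2)*(x2-p*y2-q*z2)
      +(a3-p*b3-q*c3)*(x3-p*y3-q*z3) := ⟨_, rfl⟩
  rw [← hA'] at hA
  have hdec : (3*a1-(a1-p*b1-q*c1))*(3*x1-(x1-p*y1-q*z1))
      +(3*a2-(a2-p*b2-q*c2))*(3*x2-(x2-p*y2-q*z2))
      +(3*a3-(a3-p*b3-q*c3))*(3*x3-(x3-p*y3-q*z3))
      +(3*b1+p*(a1-p*b1-q*c1))*(3*y1+p*(x1-p*y1-q*z1))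
      +(3*b2+p*(a2-p*b2-q*c2))*(3*y2+p*(x2-p*y2-q*z2))
      +(3*b3+p*(a3-p*b3-q*c3))*(3*y3+p*(x3-p*y3-q*z3))
      +(3*c1+q*(a1-p*b1-q*c1))*(3*z1+q*(x1-p*y1-q*z1))
      +(3*c2+q*(a2-p*b2-q*c2))*(3*z2+q*(x2-p*y2-q*z2))
      +(3*c3+q*(a3-p*b3-q*c3))*(3*z3+q*(x3-p*y3-q*z3))
      = 9*S - (5 - p^2 - q^2)*A := by
    rw [hS, hA']; ring
  rw [hdec] at hXY
  have hpq : 5 - p^2 - q^2 = 3 := by rw [hp2, hq2]; norm_num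
  rw [hpq] at hXY
  rw [← hS]
  exact finalB S A hXY hA

lemma mulpm (u v : ℝ) (hu : u = 1 ∨ u = -1) (hv : v = 1 ∨ v = -1) :
    u*v = 1 ∨ u*v = -1 := by
  rcases hu with rfl|rfl <;> rcases hv with rfl|rfl <;> norm_num

lemma prodsum (u v w : ℝ) (hu : u = 1 ∨ u = -1) (hv : v = 1 ∨ v = -1)
    (hw : w = 1 ∨ w = -1) (h : (u+v+w)^2 = 1) : u*v*w = -(u+v+w) := by
  rcases hu with rfl|rfl <;> rcases hv with rfl|rfl <;> rcases hw with rfl|rfl <;>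
    (norm_num at h <;> norm_num)

lemma pairCase (a1 a2 a3 b1 b2 b3 : ℝ)
    (ha1 : a1 = 1 ∨ a1 = -1) (ha2 : a2 = 1 ∨ a2 = -1) (ha3 : a3 = 1 ∨ a3 = -1)
    (hb1 : b1 = 1 ∨ b1 = -1) (hb2 : b2 = 1 ∨ b2 = -1) (hb3 : b3 = 1 ∨ b3 = -1) :
    (a1*b1+a2*b2+a3*b3)^2 = 1 ∨ (b1 = a1 ∧ b2 = a2 ∧ b3 = a3)
      ∨ (b1 = -a1 ∧ b2 = -a2 ∧ b3 = -a3) := by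
  rcases ha1 with rfl|rfl <;> rcases ha2 with rfl|rfl <;> rcases ha3 with rfl|rfl <;>
  rcases hb1 with rfl|rfl <;> rcases hb2 with rfl|rfl <;> rcases hb3 with rfl|rfl <;>
    norm_num

lemma caseA (x1 x2 x3 y1 y2 y3 z1 z2 z3 a1 a2 a3 c1 c2 c3 t : ℝ)
    (hxx : x1^2+x2^2+x3^2 = 1) (hyy : y1^2+y2^2+y3^2 = 1) (hzz : z1^2+z2^2+z3^2 = 1)
    (hxy : x1*y1+x2*y2+x3*y3 = 0)
    (ha1 : a1^2 = 1) (ha2 : a2^2 = 1) (ha3 : a3^2 = 1)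
    (hc1 : c1^2 = 1) (hc2 : c2^2 = 1) (hc3 : c3^2 = 1) (ht : t^2 = 1) :
    a1*(x1+t*y1)+a2*(x2+t*y2)+a3*(x3+t*y3) + (c1*z1+c2*z2+c3*z3) ≤ 5 := by
  have h1 := cs3 a1 a2 a3 (x1+t*y1) (x2+t*y2) (x3+t*y3)
  have e1 : a1^2+a2^2+a3^2 = 3 := by linarith
  have e2 : (x1+t*y1)^2+(x2+t*y2)^2+(x3+t*y3)^2 = 2 := by
    linear_combination hxx + t^2*hyy + 2*t*hxy + ht
  rw [e1, e2] at h1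
  have h2 := cs3 c1 c2 c3 z1 z2 z3
  have e3 : c1^2+c2^2+c3^2 = 3 := by linarith
  rw [e3, hzz] at h2
  nlinarith [h1, h2, sq_nonneg (a1*(x1+t*y1)+a2*(x2+t*y2)+a3*(x3+t*y3) - 5/2),
    sq_nonneg (c1*z1+c2*z2+c3*z3 - 7/4)]

set_option maxHeartbeats 1000000 in
lemma key (x1 x2 x3 y1 y2 y3 z1 z2 z3 a1 a2 a3 b1 b2 b3 c1 c2 c3 : ℝ)
    (hxx : x1^2+x2^2+x3^2 = 1) (hyy : y1^2+y2^2+y3^2 = 1) (hzz : z1^2+z2^2+z3^2 = 1)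
    (hxy : x1*y1+x2*y2+x3*y3 = 0) (hxz : x1*z1+x2*z2+x3*z3 = 0)
    (hyz : y1*z1+y2*z2+y3*z3 = 0)
    (ha1 : a1 = 1 ∨ a1 = -1) (ha2 : a2 = 1 ∨ a2 = -1) (ha3 : a3 = 1 ∨ a3 = -1)
    (hb1 : b1 = 1 ∨ b1 = -1) (hb2 : b2 = 1 ∨ b2 = -1) (hb3 : b3 = 1 ∨ b3 = -1)
    (hc1 : c1 = 1 ∨ c1 = -1) (hc2 : c2 = 1 ∨ c2 = -1) (hc3 : c3 = 1 ∨ c3 = -1) :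
    a1*x1+a2*x2+a3*x3 + (b1*y1+b2*y2+b3*y3) + (c1*z1+c2*z2+c3*z3) ≤ 5 := by
  have ha1s : a1^2 = 1 := by rcases ha1 with rfl|rfl <;> norm_num
  have ha2s : a2^2 = 1 := by rcases ha2 with rfl|rfl <;> norm_num
  have ha3s : a3^2 = 1 := by rcases ha3 with rfl|rfl <;> norm_num
  have hb1s : b1^2 = 1 := by rcases hb1 with rfl|rfl <;> norm_num
  have hb2s : b2^2 = 1 := by rcases hb2 with rfl|rfl <;> norm_num
  have hb3s : b3^2 = 1 := by rcases hb3 with rfl|rfl <;> norm_num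
  have hc1s : c1^2 = 1 := by rcases hc1 with rfl|rfl <;> norm_num
  have hc2s : c2^2 = 1 := by rcases hc2 with rfl|rfl <;> norm_num
  have hc3s : c3^2 = 1 := by rcases hc3 with rfl|rfl <;> norm_num
  have hone : (1:ℝ)^2 = 1 := by norm_num
  have hmone : (-1:ℝ)^2 = 1 := by norm_num
  rcases pairCase a1 a2 a3 b1 b2 b3 ha1 ha2 ha3 hb1 hb2 hb3 with hab | ⟨e1,e2,e3⟩ | ⟨e1,e2,e3⟩
  · rcases pairCase a1 a2 a3 c1 c2 c3 ha1 ha2 ha3 hc1 hc2 hc3 with hac | ⟨f1,f2,f3⟩ | ⟨f1,f2,f3⟩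
    · rcases pairCase b1 b2 b3 c1 c2 c3 hb1 hb2 hb3 hc1 hc2 hc3 with hbc | ⟨g1,g2,g3⟩ | ⟨g1,g2,g3⟩
      · -- case B
        have h1 := prodsum (a1*b1) (a2*b2) (a3*b3) (mulpm a1 b1 ha1 hb1)
          (mulpm a2 b2 ha2 hb2) (mulpm a3 b3 ha3 hb3) hab
        have h2 := prodsum (a1*c1) (a2*c2) (a3*c3) (mulpm a1 c1 ha1 hc1)
          (mulpm a2 c2 ha2 hc2) (mulpm a3 c3 ha3 hc3) hac
        have h3 := prodsum (b1*c1) (b2*c2) (b3*c3) (mulpm b1 c1 hb1 hc1)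
          (mulpm b2 c2 hb2 hc2) (mulpm b3 c3 hb3 hc3) hbc
        have hprod : ((a1*b1)*(a2*b2)*(a3*b3)) * ((a1*c1)*(a2*c2)*(a3*c3))
            * ((b1*c1)*(b2*c2)*(b3*c3)) = 1 := by
          linear_combination (b1^2*c1^2*a2^2*b2^2*c2^2*a3^2*b3^2*c3^2)*ha1s
            + (c1^2*a2^2*b2^2*c2^2*a3^2*b3^2*c3^2)*hb1s
            + (a2^2*b2^2*c2^2*a3^2*b3^2*c3^2)*hc1s
            + (b2^2*c2^2*a3^2*b3^2*c3^2)*ha2s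
            + (c2^2*a3^2*b3^2*c3^2)*hb2s
            + (a3^2*b3^2*c3^2)*hc2s
            + (b3^2*c3^2)*ha3s
            + (c3^2)*hb3s
            + hc3s
        have hP : (a1*b1+a2*b2+a3*b3)*(a1*c1+a2*c2+a3*c3)*(b1*c1+b2*c2+b3*c3) = -1 := by
          linear_combination (-1)*hprod
            + ((a1*c1+a2*c2+a3*c3)*(b1*c1+b2*c2+b3*c3))*h1
            + (-((a1*b1)*(a2*b2)*(a3*b3))*(b1*c1+b2*c2+b3*c3))*h2
            + (((a1*b1)*(a2*b2)*(a3*b3))*((a1*c1)*(a2*c2)*(a3*c3)))*h3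
        have hr : b1*c1+b2*c2+b3*c3 = -((a1*b1+a2*b2+a3*b3)*(a1*c1+a2*c2+a3*c3)) := by
          linear_combination ((a1*b1+a2*b2+a3*b3)*(a1*c1+a2*c2+a3*c3))*hP
            - ((b1*c1+b2*c2+b3*c3)*(a1*c1+a2*c2+a3*c3)^2)*hab
            - (b1*c1+b2*c2+b3*c3)*hac
        exact caseB x1 x2 x3 y1 y2 y3 z1 z2 z3 a1 a2 a3 b1 b2 b3 c1 c2 c3
          (a1*b1+a2*b2+a3*b3) (a1*c1+a2*c2+a3*c3)
          hxx hyy hzz hxy hxz hyz ha1s ha2s ha3s hb1s hb2s hb3s hc1s hc2s hc3s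
          rfl rfl hr hab hac
      · rw [g1, g2, g3]
        linarith [caseA y1 y2 y3 z1 z2 z3 x1 x2 x3 b1 b2 b3 a1 a2 a3 1
          hyy hzz hxx hyz hb1s hb2s hb3s ha1s ha2s ha3s hone]
      · rw [g1, g2, g3]
        linarith [caseA y1 y2 y3 z1 z2 z3 x1 x2 x3 b1 b2 b3 a1 a2 a3 (-1)
          hyy hzz hxx hyz hb1s hb2s hb3s ha1s ha2s ha3s hmone]
    · rw [f1, f2, f3]
      linarith [caseA x1 x2 x3 z1 z2 z3 y1 y2 y3 a1 a2 a3 b1 b2 b3 1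
        hxx hzz hyy hxz ha1s ha2s ha3s hb1s hb2s hb3s hone]
    · rw [f1, f2, f3]
      linarith [caseA x1 x2 x3 z1 z2 z3 y1 y2 y3 a1 a2 a3 b1 b2 b3 (-1)
        hxx hzz hyy hxz ha1s ha2s ha3s hb1s hb2s hb3s hmone]
  · rw [e1, e2, e3]
    linarith [caseA x1 x2 x3 y1 y2 y3 z1 z2 z3 a1 a2 a3 c1 c2 c3 1
      hxx hyy hzz hxy ha1s ha2s ha3s hc1s hc2s hc3s hone]
  · rw [e1, e2, e3]
    linarith [caseA x1 x2 x3 y1 y2 y3 z1 z2 z3 a1 a2 a3 c1 c2 c3 (-1)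
      hxx hyy hzz hxy ha1s ha2s ha3s hc1s hc2s hc3s hmone]

/-- For every orthogonal matrix `U ∈ O(3)`, the 1-norm satisfies `‖U‖₁ ≤ 5`. -/
theorem norm1_le_five_of_orthogonal_three
    (U : Matrix (Fin 3) (Fin 3) ℝ) (hU : U * Uᵀ = 1) :
    ∑ i, ∑ j, |U i j| ≤ 5 := by
  have h : ∀ i j : Fin 3, (∑ k, U i k * U j k) = if i = j then 1 else 0 := by
    intro i j
    have := congrFun (congrFun hU i) j
    simpa [Matrix.mul_apply, Matrix.transpose_apply, Matrix.one_apply] using this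
  have h00 := h 0 0; have h11 := h 1 1; have h22 := h 2 2
  have h01 := h 0 1; have h02 := h 0 2; have h12 := h 1 2
  simp only [Fin.sum_univ_three] at h00 h11 h22 h01 h02 h12
  norm_num at h00 h11 h22 h01 h02 h12
  have hxx : (U 0 0)^2 + (U 0 1)^2 + (U 0 2)^2 = 1 := by linear_combination h00
  have hyy : (U 1 0)^2 + (U 1 1)^2 + (U 1 2)^2 = 1 := by linear_combination h11
  have hzz : (U 2 0)^2 + (U 2 1)^2 + (U 2 2)^2 = 1 := by linear_combination h22
  have hE : ∀ i j : Fin 3, (if U i j < 0 then (-1:ℝ) else 1) = 1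
      ∨ (if U i j < 0 then (-1:ℝ) else 1) = -1 := by
    intro i j; split_ifs <;> simp
  have hEU : ∀ i j : Fin 3, |U i j| = (if U i j < 0 then (-1:ℝ) else 1) * U i j := by
    intro i j
    split_ifs with hc
    · rw [abs_of_neg hc]; ring
    · rw [abs_of_nonneg (not_lt.mp hc)]; ring
  simp only [Fin.sum_univ_three]
  rw [hEU 0 0, hEU 0 1, hEU 0 2, hEU 1 0, hEU 1 1, hEU 1 2, hEU 2 0, hEU 2 1, hEU 2 2]
  exact key (U 0 0) (U 0 1) (U 0 2) (U 1 0) (U 1 1) (U 1 2) (U 2 0) (U 2 1) (U 2 2)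
    _ _ _ _ _ _ _ _ _
    hxx hyy hzz h01 h02 h12
    (hE 0 0) (hE 0 1) (hE 0 2) (hE 1 0) (hE 1 1) (hE 1 2) (hE 2 0) (hE 2 1) (hE 2 2)
end

section
/- The supremum of the 1-norm over O(3) equals 5; moreover this supremum is attained, e.g. by the orthogonal matrix A = (1/3)·[[1,2,2],[2,1,−2],[−2,2,−1]], which satisfies ||A||₁ = 5. -/
open Matrix


lemma conjT_eq_transpose (U : Matrix (Fin 3) (Fin 3) ℝ) : Uᴴ = Uᵀ := by
  ext i j; simp [Matrix.conjTranspose_apply]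

lemma quintic (a b c : ℝ) (ha : 0 ≤ a) (hb : 0 ≤ b) (hc : 0 ≤ c)
    (h1 : a^2+b^2+c^2 = 9) (h2 : a^2*b^2+a^2*c^2+b^2*c^2 ≤ 24) (h3 : a*b*c ≤ 4) :
    a+b+c ≤ 5 := by
  set s := a + b + c with hs
  have he2 : 0 ≤ a*b + a*c + b*c := by positivity
  have h4 : (a*b + a*c + b*c)^2 ≤ 24 + 8*s := by
    nlinarith [mul_nonneg (mul_nonneg ha hb) hc, sq_nonneg (a+b+c)]
  have hid : s^2 - 9 = 2*(a*b+a*c+b*c) := by rw [hs]; linear_combination h1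
  have hkey : (s^2 - 9)^2 ≤ 96 + 32*s := by rw [hid]; nlinarith [h4, he2]
  by_contra h
  push_neg at h
  have hpos : 0 < (s-5)*(s+1)^2*(s+3) := by
    have h1' : (0:ℝ) < s - 5 := by linarith
    have h2' : (0:ℝ) < (s+1)^2 := by positivity
    have h3' : (0:ℝ) < s + 3 := by linarith
    positivity
  nlinarith [hpos, hkey]

lemma detbound (M : Matrix (Fin 3) (Fin 3) ℝ) (hM : ∀ i j, M i j = 1 ∨ M i j = -1) :
    (M.det)^2 ≤ 16 := by
  rw [Matrix.det_fin_three]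
  rcases hM 0 0 with h|h <;> rw [h] <;> clear h <;>
  rcases hM 0 1 with h|h <;> rw [h] <;> clear h <;>
  rcases hM 0 2 with h|h <;> rw [h] <;> clear h <;>
  rcases hM 1 0 with h|h <;> rw [h] <;> clear h <;>
  rcases hM 1 1 with h|h <;> rw [h] <;> clear h <;>
  rcases hM 1 2 with h|h <;> rw [h] <;> clear h <;>
  rcases hM 2 0 with h|h <;> rw [h] <;> clear h <;>
  rcases hM 2 1 with h|h <;> rw [h] <;> clear h <;>
  rcases hM 2 2 with h|h <;> rw [h] <;> clear h <;>
  norm_num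

lemma norm1_le_five (U : Matrix (Fin 3) (Fin 3) ℝ) (hU : U * Uᵀ = 1) :
    (∑ i, ∑ j, |U i j|) ≤ 5 := by
  classical
  set M : Matrix (Fin 3) (Fin 3) ℝ := Matrix.of (fun i j => if U i j < 0 then -1 else 1)
    with hMdef
  have hM1 : ∀ i j, M i j = 1 ∨ M i j = -1 := by
    intro i j
    by_cases h : U i j < 0 <;> simp [hMdef, h]
  have hMsq : ∀ i j, M i j * M i j = 1 := fun i j => by
    rcases hM1 i j with h|h <;> rw [h] <;> norm_num
  have hMU : ∀ i j, M i j * U i j = |U i j| := by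
    intro i j
    by_cases h : U i j < 0
    · simp [hMdef, h, abs_of_neg h]
    · push_neg at h
      simp [hMdef, not_lt.mpr h, abs_of_nonneg h]
  set A : Matrix (Fin 3) (Fin 3) ℝ := Mᴴ * M with hAdef
  have hA : A.IsHermitian := Matrix.isHermitian_conjTranspose_mul_self M
  have hPSD : A.PosSemidef := Matrix.posSemidef_conjTranspose_mul_self M
  set lam : Fin 3 → ℝ := hA.eigenvalues with hlamdef
  have hlam0 : ∀ i, 0 ≤ lam i := hPSD.eigenvalues_nonneg
  set V : Matrix (Fin 3) (Fin 3) ℝ := (hA.eigenvectorUnitary : Matrix (Fin 3) (Fin 3) ℝ)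
    with hVdef
  have hV1 : Vᴴ * V = 1 := by
    rw [← Matrix.star_eq_conjTranspose]
    exact Matrix.mem_unitaryGroup_iff'.mp hA.eigenvectorUnitary.2
  have hV2 : V * Vᴴ = 1 := by
    rw [← Matrix.star_eq_conjTranspose]
    exact Matrix.mem_unitaryGroup_iff.mp hA.eigenvectorUnitary.2
  have hD : Vᴴ * A * V = Matrix.diagonal lam := by
    have h := hA.conjStarAlgAut_star_eigenvectorUnitary
    rw [Unitary.conjStarAlgAut_apply] at h
    simpa [Matrix.star_eq_conjTranspose] using h
  -- entries of A
  have hAapply : ∀ i j, A i j = ∑ k, M k i * M k j := by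
    intro i j
    simp [hAdef, Matrix.mul_apply, Matrix.conjTranspose_apply]
  have hdiag : ∀ i, A i i = 3 := by
    intro i
    rw [hAapply i i, Fin.sum_univ_three, hMsq, hMsq, hMsq]
    norm_num
  have hsymm : ∀ i j, A j i = A i j := by
    intro i j
    rw [hAapply, hAapply]
    exact Finset.sum_congr rfl (fun k _ => mul_comm _ _)
  have hoff : ∀ i j, 1 ≤ (A i j)^2 := by
    intro i j
    rw [hAapply i j, Fin.sum_univ_three]
    have p0 : M 0 i * M 0 j = 1 ∨ M 0 i * M 0 j = -1 := by
      rcases hM1 0 i with h|h <;> rcases hM1 0 j with h'|h' <;> rw [h, h'] <;> norm_num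
    have p1 : M 1 i * M 1 j = 1 ∨ M 1 i * M 1 j = -1 := by
      rcases hM1 1 i with h|h <;> rcases hM1 1 j with h'|h' <;> rw [h, h'] <;> norm_num
    have p2 : M 2 i * M 2 j = 1 ∨ M 2 i * M 2 j = -1 := by
      rcases hM1 2 i with h|h <;> rcases hM1 2 j with h'|h' <;> rw [h, h'] <;> norm_num
    rcases p0 with h|h <;> rw [h] <;> rcases p1 with h'|h' <;> rw [h'] <;>
      rcases p2 with h''|h'' <;> rw [h''] <;> norm_num
  -- trace facts
  have htraceA : A.trace = 9 := by
    rw [Matrix.trace_fin_three, hdiag, hdiag, hdiag]; norm_num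
  have hsum_lam : lam 0 + lam 1 + lam 2 = 9 := by
    have h1 : (Matrix.diagonal lam).trace = A.trace := by
      rw [← hD, Matrix.trace_mul_cycle, ← Matrix.mul_assoc, hV2, Matrix.one_mul]
    rw [Matrix.trace_diagonal, Fin.sum_univ_three] at h1
    rw [h1, htraceA]
  have htraceAA : (33:ℝ) ≤ (A*A).trace := by
    have h1 : (A*A).trace = ∑ i, ∑ k, A i k * A k i := by
      simp [Matrix.trace, Matrix.diag, Matrix.mul_apply]
    rw [h1, Fin.sum_univ_three]
    simp only [Fin.sum_univ_three]
    rw [hsymm 0 1, hsymm 0 2, hsymm 1 2, hdiag 0, hdiag 1, hdiag 2]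
    nlinarith [hoff 0 1, hoff 0 2, hoff 1 2, sq_nonneg (A 0 1), sq_nonneg (A 0 2), sq_nonneg (A 1 2)]
  have hsum_sq : lam 0 ^2 + lam 1 ^2 + lam 2 ^2 = (A*A).trace := by
    have h1 : Matrix.diagonal lam * Matrix.diagonal lam = Vᴴ * (A * A) * V := by
      rw [← hD]
      have e : (Vᴴ * A * V) * (Vᴴ * A * V) = Vᴴ * A * (V * Vᴴ) * A * V := by
        noncomm_ring
      rw [e, hV2, Matrix.mul_one]
      noncomm_ring
    have h2 : (Matrix.diagonal lam * Matrix.diagonal lam).trace = (A*A).trace := by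
      rw [h1, Matrix.trace_mul_cycle, ← Matrix.mul_assoc, hV2, Matrix.one_mul]
    rw [Matrix.diagonal_mul_diagonal, Matrix.trace_diagonal, Fin.sum_univ_three] at h2
    rw [← h2]; ring
  have hprod : lam 0 * lam 1 * lam 2 ≤ 16 := by
    have h1 : (Matrix.diagonal lam).det = A.det := by
      rw [← hD, Matrix.det_mul, Matrix.det_mul]
      have hdv : (Vᴴ).det * V.det = 1 := by
        rw [← Matrix.det_mul, hV1, Matrix.det_one]
      linear_combination A.det * hdv
    have h2 : A.det = M.det ^ 2 := by
      rw [hAdef, Matrix.det_mul, conjT_eq_transpose, Matrix.det_transpose, sq]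
    have h3 : (Matrix.diagonal lam).det = lam 0 * lam 1 * lam 2 := by
      rw [Matrix.det_diagonal, Fin.prod_univ_three]
    rw [← h3, h1, h2]
    exact detbound M hM1
  -- the trace inequality
  set N : Matrix (Fin 3) (Fin 3) ℝ := M * V with hNdef
  set P : Matrix (Fin 3) (Fin 3) ℝ := U * V with hPdef
  have hNN : Nᴴ * N = Matrix.diagonal lam := by
    rw [hNdef, Matrix.conjTranspose_mul, ← hD, hAdef]
    noncomm_ring
  have hUU : Uᴴ * U = 1 := by
    rw [conjT_eq_transpose]
    exact mul_eq_one_comm.mp hU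
  have hPP : Pᴴ * P = 1 := by
    rw [hPdef, Matrix.conjTranspose_mul, Matrix.mul_assoc, ← Matrix.mul_assoc Uᴴ, hUU,
      Matrix.one_mul, hV1]
  have hNcol : ∀ i, ∑ k, (N k i)^2 = lam i := by
    intro i
    have := congrFun (congrFun hNN i) i
    simp [Matrix.mul_apply, Matrix.conjTranspose_apply, Matrix.diagonal_apply] at this
    rw [← this]
    exact Finset.sum_congr rfl (fun k _ => (sq (N k i)).symm ▸ rfl)
  have hPcol : ∀ i, ∑ k, (P k i)^2 = 1 := by
    intro i
    have := congrFun (congrFun hPP i) i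
    simp [Matrix.mul_apply, Matrix.conjTranspose_apply, Matrix.one_apply] at this
    rw [← this]
    exact Finset.sum_congr rfl (fun k _ => (sq (P k i)).symm ▸ rfl)
  have hScs : ∀ i, ∑ k, N k i * P k i ≤ Real.sqrt (lam i) := by
    intro i
    have hcs := Finset.sum_mul_sq_le_sq_mul_sq Finset.univ (fun k => N k i) (fun k => P k i)
    rw [hNcol i, hPcol i, mul_one] at hcs
    by_cases h : ∑ k, N k i * P k i ≤ 0
    · exact le_trans h (Real.sqrt_nonneg _)
    · push_neg at h
      rw [← Real.sqrt_sq h.le]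
      exact Real.sqrt_le_sqrt hcs
  -- relating traces
  have hS : (∑ i, ∑ j, |U i j|) = (Mᴴ * U).trace := by
    have : (Mᴴ * U).trace = ∑ i, ∑ k, M k i * U k i := by
      simp [Matrix.trace, Matrix.diag, Matrix.mul_apply, Matrix.conjTranspose_apply]
    rw [this]
    conv_rhs => rw [Finset.sum_comm]
    exact Finset.sum_congr rfl (fun i _ => Finset.sum_congr rfl (fun j _ => (hMU i j).symm))
  have htr_eq : (Mᴴ * U).trace = (Nᴴ * P).trace := by
    have h1 : Nᴴ * P = Vᴴ * (Mᴴ * U) * V := by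
      rw [hNdef, hPdef, Matrix.conjTranspose_mul]
      noncomm_ring
    rw [h1, Matrix.trace_mul_cycle, ← Matrix.mul_assoc, hV2, Matrix.one_mul]
  have htrNP : (Nᴴ * P).trace = ∑ i, ∑ k, N k i * P k i := by
    simp [Matrix.trace, Matrix.diag, Matrix.mul_apply, Matrix.conjTranspose_apply]
  -- put together
  have hfinal : (∑ i, ∑ j, |U i j|) ≤ Real.sqrt (lam 0) + Real.sqrt (lam 1) + Real.sqrt (lam 2) := by
    rw [hS, htr_eq, htrNP, Fin.sum_univ_three]
    exact add_le_add (add_le_add (hScs 0) (hScs 1)) (hScs 2)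
  refine le_trans hfinal ?_
  set a := Real.sqrt (lam 0)
  set b := Real.sqrt (lam 1)
  set c := Real.sqrt (lam 2)
  have ha2 : a^2 = lam 0 := Real.sq_sqrt (hlam0 0)
  have hb2 : b^2 = lam 1 := Real.sq_sqrt (hlam0 1)
  have hc2 : c^2 = lam 2 := Real.sq_sqrt (hlam0 2)
  have habc : a*b*c ≤ 4 := by
    have h1 : (a*b*c)^2 = lam 0 * lam 1 * lam 2 := by
      rw [mul_pow, mul_pow, ha2, hb2, hc2]
    have h2 : (a*b*c)^2 ≤ 16 := by rw [h1]; exact hprod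
    nlinarith [Real.sqrt_nonneg (lam 0), Real.sqrt_nonneg (lam 1), Real.sqrt_nonneg (lam 2),
      mul_nonneg (mul_nonneg (Real.sqrt_nonneg (lam 0)) (Real.sqrt_nonneg (lam 1))) (Real.sqrt_nonneg (lam 2))]
  have he2' : a^2*b^2+a^2*c^2+b^2*c^2 ≤ 24 := by
    rw [ha2, hb2, hc2]
    nlinarith [htraceAA, hsum_sq, hsum_lam]
  exact quintic a b c (Real.sqrt_nonneg _) (Real.sqrt_nonneg _) (Real.sqrt_nonneg _)
    (by rw [ha2, hb2, hc2]; exact hsum_lam) he2' habc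

/-- The matrix `A = (1/3)·[[1,2,2],[2,1,−2],[−2,2,−1]]`. -/
noncomputable def matrixA : Matrix (Fin 3) (Fin 3) ℝ :=
  (1 / 3 : ℝ) • !![1, 2, 2; 2, 1, -2; -2, 2, -1]

lemma matrixA_transpose : matrixAᵀ = (1 / 3 : ℝ) • !![1, 2, -2; 2, 1, 2; 2, -2, -1] := by
  ext i j
  fin_cases i <;> fin_cases j <;>
    simp [matrixA, Matrix.vecHead, Matrix.vecTail]

lemma matrixA_orth : matrixA * matrixAᵀ = 1 := by
  rw [matrixA_transpose]
  ext i j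
  fin_cases i <;> fin_cases j <;>
    simp [matrixA, Matrix.mul_apply, Fin.sum_univ_three, Matrix.one_apply,
      Matrix.vecHead, Matrix.vecTail] <;> norm_num

lemma matrixA_sum : (∑ i, ∑ j, |matrixA i j|) = 5 := by
  simp [matrixA, Fin.sum_univ_three, Matrix.vecHead, Matrix.vecTail]
  norm_num [abs_of_nonneg, abs_of_nonpos]

/-- The supremum of the 1-norm over `O(3)` equals `5`, and it is attained by the
orthogonal matrix `A = (1/3)·[[1,2,2],[2,1,−2],[−2,2,−1]]`, which satisfies `‖A‖₁ = 5`. -/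
theorem sSup_norm1_orthogonal_three :
    sSup {x : ℝ | ∃ U : Matrix (Fin 3) (Fin 3) ℝ, U * Uᵀ = 1 ∧ x = ∑ i, ∑ j, |U i j|} = 5 ∧
    matrixA * matrixAᵀ = 1 ∧
    (∑ i, ∑ j, |matrixA i j|) = 5 := by
  refine ⟨?_, matrixA_orth, matrixA_sum⟩
  have h5 : (5:ℝ) ∈ {x : ℝ | ∃ U : Matrix (Fin 3) (Fin 3) ℝ, U * Uᵀ = 1 ∧ x = ∑ i, ∑ j, |U i j|} :=
    ⟨matrixA, matrixA_orth, matrixA_sum.symm⟩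
  have hub : ∀ x ∈ {x : ℝ | ∃ U : Matrix (Fin 3) (Fin 3) ℝ, U * Uᵀ = 1 ∧ x = ∑ i, ∑ j, |U i j|},
      x ≤ 5 := by
    rintro x ⟨U, hU, rfl⟩
    exact norm1_le_five U hU
  exact le_antisymm (csSup_le ⟨5, h5⟩ hub) (le_csSup ⟨5, hub⟩ h5)
end

section
/- If U ∈ O(N) is a local maximizer of the 1-norm on O(N) (i.e., there is a neighborhood of U in O(N) on which ||·||₁ attains its maximum at U), then U_{ij} ≠ 0 for all indices i, j. -/
open Matrix

/-- The 1-norm of a square matrix: the sum of the absolute values of its entries. -/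
def matrixNorm1 {n : Type*} [Fintype n] (U : Matrix n n ℝ) : ℝ :=
  ∑ i, ∑ j, |U i j|


private lemma sgn_mul_le (t x : ℝ) : Real.sign t * x ≤ |x| := by
  rcases lt_trichotomy t 0 with h | h | h
  · rw [Real.sign_of_neg h, neg_one_mul]; exact neg_le_abs x
  · simp [h, Real.sign_zero, abs_nonneg]
  · rw [Real.sign_of_pos h, one_mul]; exact le_abs_self x

private lemma sgn_mul_self (x : ℝ) : Real.sign x * x = |x| := by
  rcases lt_trichotomy x 0 with h | h | h
  · rw [Real.sign_of_neg h, abs_of_neg h]; ring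
  · simp [h]
  · rw [Real.sign_of_pos h, abs_of_pos h]; ring

private lemma sum_expand2 {n : ℕ} (a b a' b' : Fin n → ℝ) (c s c' s' : ℝ) :
    ∑ j, (c * a j + s * b j) * (c' * a' j + s' * b' j)
      = c * c' * ∑ j, a j * a' j + c * s' * ∑ j, a j * b' j
        + s * c' * ∑ j, b j * a' j + s * s' * ∑ j, b j * b' j := by
  rw [Finset.mul_sum, Finset.mul_sum, Finset.mul_sum, Finset.mul_sum,
    ← Finset.sum_add_distrib, ← Finset.sum_add_distrib, ← Finset.sum_add_distrib]
  exact Finset.sum_congr rfl fun j _ => by ring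

private lemma sum_expand1 {n : ℕ} (a b u : Fin n → ℝ) (c s : ℝ) :
    ∑ j, (c * a j + s * b j) * u j = c * ∑ j, a j * u j + s * ∑ j, b j * u j := by
  rw [Finset.mul_sum, Finset.mul_sum, ← Finset.sum_add_distrib]
  exact Finset.sum_congr rfl fun j _ => by ring

private lemma sum_expand1' {n : ℕ} (a b u : Fin n → ℝ) (c s : ℝ) :
    ∑ j, u j * (c * a j + s * b j) = c * ∑ j, u j * a j + s * ∑ j, u j * b j := by
  rw [Finset.mul_sum, Finset.mul_sum, ← Finset.sum_add_distrib]
  exact Finset.sum_congr rfl fun j _ => by ring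

private noncomputable def Wrot {N : ℕ} (U : Matrix (Fin N) (Fin N) ℝ) (p r : Fin N) (θ : ℝ) :
    Matrix (Fin N) (Fin N) ℝ :=
  fun i j =>
    if i = p then Real.cos θ * U p j - Real.sin θ * U r j
    else if i = r then Real.sin θ * U p j + Real.cos θ * U r j
    else U i j

private lemma Wrot_zero {N : ℕ} (U : Matrix (Fin N) (Fin N) ℝ) (p r : Fin N) :
    Wrot U p r 0 = U := by
  ext i j
  simp only [Wrot, Real.cos_zero, Real.sin_zero, one_mul, zero_mul, sub_zero, add_zero]
  split_ifs with h h' <;> simp_all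

private lemma Wrot_cont {N : ℕ} (U : Matrix (Fin N) (Fin N) ℝ) (p r : Fin N) :
    Continuous fun θ => Wrot U p r θ := by
  apply continuous_pi; intro i; apply continuous_pi; intro j
  by_cases hi : i = p
  · simp only [Wrot, hi, if_true]; fun_prop
  · by_cases hi' : i = r
    · subst hi'
      simp only [Wrot, if_neg hi, if_pos rfl, if_true]; fun_prop
    · simp only [Wrot, if_neg hi, if_neg hi']; exact continuous_const

private lemma Wrot_orth {N : ℕ} {U : Matrix (Fin N) (Fin N) ℝ} {p r : Fin N}
    (hU : U * Uᵀ = 1) (hrp : r ≠ p) (θ : ℝ) :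
    Wrot U p r θ * (Wrot U p r θ)ᵀ = 1 := by
  have dot : ∀ i k, ∑ j, U i j * U k j = if i = k then (1:ℝ) else 0 := by
    intro i k
    have h := congrFun (congrFun hU i) k
    simpa [mul_apply, one_apply] using h
  set c := Real.cos θ with hc
  set s := Real.sin θ with hs
  have hcs : s * s + c * c = 1 := by
    have h := Real.sin_sq_add_cos_sq θ
    rw [pow_two, pow_two] at h; exact h
  ext i k
  rw [mul_apply, one_apply]
  simp only [transpose_apply, Wrot]
  by_cases hip : i = p
  · simp only [if_pos hip]
    by_cases hkp : k = p
    · simp only [if_pos hkp, if_pos (hip.trans hkp.symm)]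
      have e1 : (∑ j, (c * U p j - s * U r j) * (c * U p j - s * U r j))
          = c * c * (∑ j, U p j * U p j) + c * (-s) * (∑ j, U p j * U r j)
            + (-s) * c * (∑ j, U r j * U p j) + (-s) * (-s) * (∑ j, U r j * U r j) := by
        rw [← sum_expand2]; all_goals exact Finset.sum_congr rfl fun j _ => by ring
      rw [e1, dot, dot, dot, dot, if_pos rfl, if_pos rfl, if_neg (Ne.symm hrp), if_neg hrp]
      linarith [hcs]
    · simp only [if_neg hkp]
      by_cases hkr : k = r
      · simp only [if_pos hkr, if_neg (show ¬ i = k from fun h => hrp ((hkr.symm.trans h.symm).trans hip))]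
        have e1 : (∑ j, (c * U p j - s * U r j) * (s * U p j + c * U r j))
            = c * s * (∑ j, U p j * U p j) + c * c * (∑ j, U p j * U r j)
              + (-s) * s * (∑ j, U r j * U p j) + (-s) * c * (∑ j, U r j * U r j) := by
          rw [← sum_expand2]; all_goals exact Finset.sum_congr rfl fun j _ => by ring
        rw [e1, dot, dot, dot, dot, if_pos rfl, if_pos rfl, if_neg (Ne.symm hrp), if_neg hrp]
        ring
      · simp only [if_neg hkr, if_neg (show ¬ i = k from fun h => hkp (h.symm.trans hip))]
        have e1 : (∑ j, (c * U p j - s * U r j) * U k j)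
            = c * (∑ j, U p j * U k j) + (-s) * (∑ j, U r j * U k j) := by
          rw [← sum_expand1]; all_goals exact Finset.sum_congr rfl fun j _ => by ring
        rw [e1, dot, dot, if_neg (fun h : p = k => hkp h.symm), if_neg (fun h : r = k => hkr h.symm)]
        ring
  · simp only [if_neg hip]
    by_cases hir : i = r
    · simp only [if_pos hir]
      by_cases hkp : k = p
      · simp only [if_pos hkp, if_neg (show ¬ i = k from fun h => hip (h.trans hkp))]
        have e1 : (∑ j, (s * U p j + c * U r j) * (c * U p j - s * U r j))
            = s * c * (∑ j, U p j * U p j) + s * (-s) * (∑ j, U p j * U r j)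
              + c * c * (∑ j, U r j * U p j) + c * (-s) * (∑ j, U r j * U r j) := by
          rw [← sum_expand2]; all_goals exact Finset.sum_congr rfl fun j _ => by ring
        rw [e1, dot, dot, dot, dot, if_pos rfl, if_pos rfl, if_neg (Ne.symm hrp), if_neg hrp]
        ring
      · simp only [if_neg hkp]
        by_cases hkr : k = r
        · simp only [if_pos hkr, if_pos (hir.trans hkr.symm)]
          have e1 : (∑ j, (s * U p j + c * U r j) * (s * U p j + c * U r j))
              = s * s * (∑ j, U p j * U p j) + s * c * (∑ j, U p j * U r j)
                + c * s * (∑ j, U r j * U p j) + c * c * (∑ j, U r j * U r j) := by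
            rw [← sum_expand2]; all_goals exact Finset.sum_congr rfl fun j _ => by ring
          rw [e1, dot, dot, dot, dot, if_pos rfl, if_pos rfl, if_neg (Ne.symm hrp), if_neg hrp]
          linarith [hcs]
        · simp only [if_neg hkr, if_neg (show ¬ i = k from fun h => hkr (h.symm.trans hir))]
          have e1 : (∑ j, (s * U p j + c * U r j) * U k j)
              = s * (∑ j, U p j * U k j) + c * (∑ j, U r j * U k j) := by
            rw [← sum_expand1]; all_goals exact Finset.sum_congr rfl fun j _ => by ring
          rw [e1, dot, dot, if_neg (fun h : p = k => hkp h.symm), if_neg (fun h : r = k => hkr h.symm)]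
          ring
    · simp only [if_neg hir]
      by_cases hkp : k = p
      · simp only [if_pos hkp, if_neg (show ¬ i = k from fun h => hip (h.trans hkp))]
        have e1 : (∑ j, U i j * (c * U p j - s * U r j))
            = c * (∑ j, U i j * U p j) + (-s) * (∑ j, U i j * U r j) := by
          rw [← sum_expand1']; all_goals exact Finset.sum_congr rfl fun j _ => by ring
        rw [e1, dot, dot, if_neg hip, if_neg hir]
        ring
      · simp only [if_neg hkp]
        by_cases hkr : k = r
        · simp only [if_pos hkr, if_neg (show ¬ i = k from fun h => hir (h.trans hkr))]
          have e1 : (∑ j, U i j * (s * U p j + c * U r j))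
              = s * (∑ j, U i j * U p j) + c * (∑ j, U i j * U r j) := by
            rw [← sum_expand1']; all_goals exact Finset.sum_congr rfl fun j _ => by ring
          rw [e1, dot, dot, if_neg hip, if_neg hir]
          ring
        · simp only [if_neg hkr]
          exact dot i k

set_option maxHeartbeats 1000000 in
/-- If `U ∈ O(N)` is a local maximizer of the 1-norm on `O(N)`, then all the
entries of `U` are nonzero. -/
theorem entries_ne_zero_of_isLocalMaxOn_norm1 {N : ℕ}
    (U : Matrix (Fin N) (Fin N) ℝ) (hU : U * Uᵀ = 1)
    (hmax : IsLocalMaxOn matrixNorm1 {W : Matrix (Fin N) (Fin N) ℝ | W * Wᵀ = 1} U) :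
    ∀ i j, U i j ≠ 0 := by
  intro p q hpq
  -- column q has a nonzero entry
  have hUc : Uᵀ * U = 1 := mul_eq_one_comm.mp hU
  have dotc : ∑ i, U i q * U i q = 1 := by
    have h := congrFun (congrFun hUc q) q
    simpa [mul_apply, one_apply] using h
  obtain ⟨r, hr⟩ : ∃ r, U r q ≠ 0 := by
    by_contra h
    push_neg at h
    rw [Finset.sum_eq_zero (fun i _ => by rw [h i]; ring)] at dotc
    exact one_ne_zero dotc.symm
  have hrp : r ≠ p := fun h => hr (by rw [h, hpq])
  set S : ℝ := ∑ j, (|U p j| + |U r j|) with hS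
  set D : ℝ := ∑ j, (Real.sign (U r j) * U p j - Real.sign (U p j) * U r j) with hD
  set B : ℝ := |U r q| with hBdef
  have hB : 0 < B := abs_pos.mpr hr
  have hSnn : 0 ≤ S := Finset.sum_nonneg fun j _ => by positivity
  set C : ℝ := ∑ i ∈ ((Finset.univ \ {p}) \ {r}), ∑ j, |U i j| with hCdef
  have split : ∀ M : Matrix (Fin N) (Fin N) ℝ,
      matrixNorm1 M
        = (∑ i ∈ ((Finset.univ \ {p}) \ {r}), ∑ j, |M i j|) + ∑ j, |M p j| + ∑ j, |M r j| := by
    intro M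
    rw [matrixNorm1, Finset.sum_eq_sum_sdiff_singleton_add (Finset.mem_univ p),
      Finset.sum_eq_sum_sdiff_singleton_add
        (show r ∈ Finset.univ \ {p} by simp [hrp])]
    ring
  have hU1 : matrixNorm1 U = C + S := by
    rw [split U, hS, Finset.sum_add_distrib, hCdef]
    ring
  -- key lower bound
  have key : ∀ θ : ℝ,
      C + Real.cos θ * S + Real.sin θ * D + |Real.sin θ| * B
        ≤ matrixNorm1 (Wrot U p r θ) := by
    intro θ
    rw [split (Wrot U p r θ)]
    set c := Real.cos θ with hc
    set s := Real.sin θ with hs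
    have hC : (∑ i ∈ ((Finset.univ \ {p}) \ {r}), ∑ j, |Wrot U p r θ i j|) = C := by
      rw [hCdef]
      refine Finset.sum_congr rfl fun i hi => Finset.sum_congr rfl fun j _ => ?_
      simp only [Finset.mem_sdiff, Finset.mem_singleton, Finset.mem_univ, true_and] at hi
      simp [Wrot, hi.1, hi.2]
    rw [hC]
    have hrow : ∀ j, c * (|U p j| + |U r j|)
        + s * (Real.sign (U r j) * U p j - Real.sign (U p j) * U r j)
        + (if j = q then |s| * B else 0)
        ≤ |Wrot U p r θ p j| + |Wrot U p r θ r j| := by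
      intro j
      have hWp : Wrot U p r θ p j = c * U p j - s * U r j := by simp [Wrot, hc, hs]
      have hWr : Wrot U p r θ r j = s * U p j + c * U r j := by simp [Wrot, hrp, hc, hs]
      rw [hWp, hWr]
      by_cases hjq : j = q
      · subst hjq
        rw [if_pos rfl, hpq]
        have h2 : Real.sign (U r j) * (c * U r j) ≤ |c * U r j| := sgn_mul_le _ _
        have e2 : Real.sign (U r j) * U r j = |U r j| := sgn_mul_self _
        have h2' : c * |U r j| ≤ |c * U r j| := by
          rw [show c * |U r j| = Real.sign (U r j) * (c * U r j) by rw [← e2]; ring]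
          exact h2
        have e3 : |c * 0 - s * U r j| = |s| * |U r j| := by
          rw [show c * 0 - s * U r j = -(s * U r j) by ring, abs_neg, abs_mul]
        rw [e3]
        simp only [Real.sign_zero, abs_zero, mul_zero, zero_mul, zero_add, zero_sub,
          sub_zero, sub_self, neg_zero, add_zero]
        rw [hBdef]
        linarith [h2']
      · rw [if_neg hjq, add_zero]
        have h1 : Real.sign (U p j) * (c * U p j - s * U r j) ≤ |c * U p j - s * U r j| :=
          sgn_mul_le _ _
        have h2 : Real.sign (U r j) * (s * U p j + c * U r j) ≤ |s * U p j + c * U r j| :=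
          sgn_mul_le _ _
        have e1 : Real.sign (U p j) * U p j = |U p j| := sgn_mul_self _
        have e2 : Real.sign (U r j) * U r j = |U r j| := sgn_mul_self _
        have e : c * (|U p j| + |U r j|)
            + s * (Real.sign (U r j) * U p j - Real.sign (U p j) * U r j)
            = Real.sign (U p j) * (c * U p j - s * U r j)
              + Real.sign (U r j) * (s * U p j + c * U r j) := by
          rw [← e1, ← e2]; ring
        rw [e]
        exact add_le_add h1 h2
    have hite : ∑ j, (if j = q then |s| * B else 0) = |s| * B := by simp
    have hsum : c * S + s * D + |s| * B ≤ ∑ j, |Wrot U p r θ p j| + ∑ j, |Wrot U p r θ r j| := by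
      calc c * S + s * D + |s| * B
          = ∑ j, (c * (|U p j| + |U r j|))
            + ∑ j, (s * (Real.sign (U r j) * U p j - Real.sign (U p j) * U r j))
            + ∑ j, (if j = q then |s| * B else 0) := by
            rw [hite, hS, hD, Finset.mul_sum, Finset.mul_sum]
        _ = ∑ j, (c * (|U p j| + |U r j|)
            + s * (Real.sign (U r j) * U p j - Real.sign (U p j) * U r j)
            + (if j = q then |s| * B else 0)) := by
            rw [Finset.sum_add_distrib, Finset.sum_add_distrib]
        _ ≤ ∑ j, (|Wrot U p r θ p j| + |Wrot U p r θ r j|) :=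
            Finset.sum_le_sum fun j _ => hrow j
        _ = ∑ j, |Wrot U p r θ p j| + ∑ j, |Wrot U p r θ r j| := Finset.sum_add_distrib
    linarith [hsum]
  -- transfer the local max to θ
  have htend : Filter.Tendsto (Wrot U p r) (nhds 0)
      (nhdsWithin U {W : Matrix (Fin N) (Fin N) ℝ | W * Wᵀ = 1}) := by
    rw [tendsto_nhdsWithin_iff]
    constructor
    · simpa [Wrot_zero] using (Wrot_cont U p r).tendsto 0
    · exact Filter.Eventually.of_forall fun θ => Wrot_orth hU hrp θ
  have hev : ∀ᶠ θ in nhds 0, matrixNorm1 (Wrot U p r θ) ≤ matrixNorm1 U :=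
    htend.eventually hmax
  obtain ⟨δ, hδ, hball⟩ := Metric.eventually_nhds_iff.mp hev
  -- choose a small ε
  set ε : ℝ := min (min (δ / 2) 1) (B / (2 * (S + 1))) with hεdef
  have hε0 : 0 < ε := by
    rw [hεdef]
    exact lt_min (lt_min (by linarith) one_pos) (by positivity)
  have hε1 : ε ≤ 1 := le_trans (min_le_left _ _) (min_le_right _ _)
  have hεδ : ε < δ := lt_of_le_of_lt (le_trans (min_le_left _ _) (min_le_left _ _)) (by linarith)
  have hεB : ε ≤ B / (2 * (S + 1)) := min_le_right _ _
  have hd1 : dist ε (0 : ℝ) < δ := by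
    rw [Real.dist_eq, sub_zero, abs_of_pos hε0]; exact hεδ
  have hd2 : dist (-ε) (0 : ℝ) < δ := by
    rw [Real.dist_eq, sub_zero, abs_neg, abs_of_pos hε0]; exact hεδ
  have hsin : Real.sin ε ≥ ε / 2 := by
    have h := Real.sin_gt_sub_cube hε0
    have h3 : ε ^ 3 ≤ ε := by
      nlinarith [mul_nonneg (mul_nonneg hε0.le (by linarith : (0:ℝ) ≤ 1 - ε))
        (by linarith : (0:ℝ) ≤ 1 + ε)]
    linarith
  have hsinpos : 0 < Real.sin ε := lt_of_lt_of_le (by linarith) hsin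
  have hcos : 1 - Real.cos ε ≤ ε ^ 2 / 2 := by
    have h := Real.one_sub_sq_div_two_le_cos (x := ε)
    linarith
  have h1 := le_trans (key ε) (hball hd1)
  have h2 := le_trans (key (-ε)) (hball hd2)
  rw [Real.cos_neg, Real.sin_neg, abs_neg, abs_of_pos hsinpos] at h2
  rw [abs_of_pos hsinpos] at h1
  rw [hU1] at h1 h2
  -- adding h1 and h2: 2 sin ε * B ≤ 2 (1 - cos ε) * S
  have hmain : Real.sin ε * B ≤ (1 - Real.cos ε) * S := by nlinarith [h1, h2]
  have hfin : ε / 2 * B ≤ ε ^ 2 / 2 * S := by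
    calc ε / 2 * B ≤ Real.sin ε * B := by nlinarith [hsin, hB]
      _ ≤ (1 - Real.cos ε) * S := hmain
      _ ≤ ε ^ 2 / 2 * S := by nlinarith [hcos, hSnn]
  have h2S : (0:ℝ) < 2 * (S + 1) := by linarith
  have hεmul : ε * (2 * (S + 1)) ≤ B := by
    have h := mul_le_mul_of_nonneg_right hεB (le_of_lt h2S)
    rwa [div_mul_cancel₀ B (ne_of_gt h2S)] at h
  have hBεS : B ≤ ε * S := by nlinarith [hfin, hε0]
  linarith [mul_nonneg hε0.le hSnn]
end

section
/- Every U ∈ O(2) that is a local maximizer of the 1-norm on O(2) satisfies ||U||₁ = 2√2; equivalently, |U_{ij}| = 1/√2 for all i,j, so √2·U is a Hadamard matrix and U is a global maximizer of the 1-norm on O(2). -/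
open Matrix

open Filter

lemma norm1_two (W : Matrix (Fin 2) (Fin 2) ℝ) :
    matrixNorm1 W = |W 0 0| + |W 0 1| + (|W 1 0| + |W 1 1|) := by
  simp [matrixNorm1, Fin.sum_univ_two]

/-- The rotated family `!![a,b;c,d] * R(t)`. -/
noncomputable def rotFam (a b c d t : ℝ) : Matrix (Fin 2) (Fin 2) ℝ :=
  !![a*Real.cos t - b*Real.sin t, a*Real.sin t + b*Real.cos t;
     c*Real.cos t - d*Real.sin t, c*Real.sin t + d*Real.cos t]

lemma rotFam_mem (a b c d : ℝ) (h1 : a*a + b*b = 1) (h2 : a*c + b*d = 0)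
    (h3 : c*c + d*d = 1) (t : ℝ) : rotFam a b c d t * (rotFam a b c d t)ᵀ = 1 := by
  have pyth := Real.sin_sq_add_cos_sq t
  unfold rotFam
  ext i j
  fin_cases i <;> fin_cases j <;>
    simp [Matrix.mul_apply, Fin.sum_univ_two, Matrix.transpose_apply,
      Matrix.one_apply, Matrix.vecHead, Matrix.vecTail] <;>
    nlinarith [pyth, h1, h2, h3]

lemma rotFam_zero (a b c d : ℝ) : rotFam a b c d 0 = !![a,b;c,d] := by
  unfold rotFam; norm_num

lemma rotFam_cont (a b c d : ℝ) : Continuous (rotFam a b c d) := by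
  unfold rotFam
  apply continuous_matrix
  intro i j
  fin_cases i <;> fin_cases j <;>
    simp [Matrix.vecHead, Matrix.vecTail] <;> fun_prop

lemma rotFam_norm1 (a b c d t : ℝ) :
    matrixNorm1 (rotFam a b c d t) =
      |a*Real.cos t - b*Real.sin t| + |a*Real.sin t + b*Real.cos t| +
      (|c*Real.cos t - d*Real.sin t| + |c*Real.sin t + d*Real.cos t|) := by
  rw [norm1_two]; unfold rotFam
  simp [Matrix.vecHead, Matrix.vecTail]

lemma key_abs_eq (a b c d : ℝ)
    (h1 : a*a + b*b = 1) (h2 : a*c + b*d = 0) (h3 : c*c + d*d = 1)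
    (hmax : IsLocalMaxOn matrixNorm1 {W : Matrix (Fin 2) (Fin 2) ℝ | W * Wᵀ = 1}
      !![a,b;c,d]) : |a| = |b| := by
  by_contra hab
  set s : ℝ := a*d - b*c with hs_def
  have hs : s * s = 1 := by linear_combination (c*c+d*d)*h1 + h3 - (a*c+b*d)*h2
  have hd : d = s*a := by simp only [hs_def]; linear_combination -d*h1 + b*h2
  have hc : c = -(s*b) := by simp only [hs_def]; linear_combination -c*h1 + a*h2
  have habs_s : |s| = 1 := by
    rcases mul_eq_zero.1 (by linarith : (s-1)*(s+1) = 0) with h | h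
    · rw [show s = 1 by linarith]; simp
    · rw [show s = -1 by linarith]; simp
  set εa : ℝ := if 0 ≤ a then 1 else -1 with hεa_def
  set εb : ℝ := if 0 ≤ b then 1 else -1 with hεb_def
  have hεa : εa * a = |a| := by
    simp only [hεa_def]; split_ifs with h
    · simp [abs_of_nonneg h]
    · simp [abs_of_neg (lt_of_not_ge h)]
  have hεb : εb * b = |b| := by
    simp only [hεb_def]; split_ifs with h
    · simp [abs_of_nonneg h]
    · simp [abs_of_neg (lt_of_not_ge h)]
  have hεa1 : |εa| = 1 := by simp only [hεa_def]; split_ifs <;> simp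
  have hεb1 : |εb| = 1 := by simp only [hεb_def]; split_ifs <;> simp
  set D : ℝ := εb * a - εa * b with hD_def
  have hD : D ≠ 0 := by
    intro h
    apply hab
    have h' : εb * a = εa * b := by
      have h0 := hD_def ▸ h; linarith [h0]
    have h2' := congrArg abs h'
    rwa [abs_mul, abs_mul, hεa1, hεb1, one_mul, one_mul] at h2'
  have hDpos : 0 < |D| := abs_pos.2 hD
  set σ : ℝ := if 0 ≤ D then 1 else -1 with hσ_def
  have hσD : σ * D = |D| := by
    simp only [hσ_def]; split_ifs with h
    · simp [abs_of_nonneg h]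
    · simp [abs_of_neg (lt_of_not_ge h)]
  have hσ1 : σ = 1 ∨ σ = -1 := by simp only [hσ_def]; split_ifs <;> simp
  have htend : Tendsto (fun u => rotFam a b c d (σ * u)) (nhdsWithin 0 (Set.Ioi 0))
      (nhdsWithin !![a,b;c,d] {W : Matrix (Fin 2) (Fin 2) ℝ | W * Wᵀ = 1}) := by
    apply tendsto_nhdsWithin_of_tendsto_nhds_of_eventually_within
    · have h0 : Tendsto (fun u : ℝ => σ * u) (nhdsWithin 0 (Set.Ioi 0)) (nhds 0) := by
        have h1' : Tendsto (fun u : ℝ => σ * u) (nhds 0) (nhds (σ * 0)) :=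
          (continuous_const.mul continuous_id).tendsto 0
        simpa using h1'.mono_left nhdsWithin_le_nhds
      have h2' := ((rotFam_cont a b c d).tendsto 0).comp h0
      rwa [rotFam_zero] at h2'
    · exact Eventually.of_forall fun u => rotFam_mem a b c d h1 h2 h3 _
  have hev1 : ∀ᶠ u in nhdsWithin 0 (Set.Ioi 0),
      matrixNorm1 (rotFam a b c d (σ * u)) ≤ matrixNorm1 !![a,b;c,d] :=
    htend.eventually hmax
  have hnorm0 : matrixNorm1 !![a,b;c,d] = 2 * (|a| + |b|) := by
    rw [norm1_two]
    have hcc : |c| = |b| := by rw [hc, abs_neg, abs_mul, habs_s, one_mul]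
    have hdd : |d| = |a| := by rw [hd, abs_mul, habs_s, one_mul]
    simp only [Matrix.cons_val', Matrix.cons_val_zero, Matrix.cons_val_one,
      Matrix.head_cons, Matrix.empty_val', Matrix.cons_val_fin_one, Matrix.of_apply,
      Matrix.head_fin_const]
    rw [hcc, hdd]; ring
  have hlow : ∀ u : ℝ, 2 * ((|a| + |b|) * Real.cos u + |D| * Real.sin u)
      ≤ matrixNorm1 (rotFam a b c d (σ * u)) := by
    intro u
    rw [rotFam_norm1]
    set t := σ * u with ht
    have hA : εa * (a * Real.cos t - b * Real.sin t) ≤ |a * Real.cos t - b * Real.sin t| := by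
      calc εa * (a * Real.cos t - b * Real.sin t)
          ≤ |εa * (a * Real.cos t - b * Real.sin t)| := le_abs_self _
        _ = |a * Real.cos t - b * Real.sin t| := by rw [abs_mul, hεa1, one_mul]
    have hB : εb * (a * Real.sin t + b * Real.cos t) ≤ |a * Real.sin t + b * Real.cos t| := by
      calc εb * (a * Real.sin t + b * Real.cos t)
          ≤ |εb * (a * Real.sin t + b * Real.cos t)| := le_abs_self _
        _ = |a * Real.sin t + b * Real.cos t| := by rw [abs_mul, hεb1, one_mul]
    have hC : |c * Real.cos t - d * Real.sin t| = |a * Real.sin t + b * Real.cos t| := by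
      rw [hc, hd,
        show -(s*b) * Real.cos t - s*a * Real.sin t
          = -(s * (a * Real.sin t + b * Real.cos t)) by ring,
        abs_neg, abs_mul, habs_s, one_mul]
    have hCd : |c * Real.sin t + d * Real.cos t| = |a * Real.cos t - b * Real.sin t| := by
      rw [hc, hd,
        show -(s*b) * Real.sin t + s*a * Real.cos t
          = s * (a * Real.cos t - b * Real.sin t) by ring,
        abs_mul, habs_s, one_mul]
    have hcos : Real.cos t = Real.cos u := by
      rcases hσ1 with h | h <;> rw [ht, h]
      · norm_num
      · rw [show (-1 : ℝ) * u = -u by ring, Real.cos_neg]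
    have hsin : D * Real.sin t = |D| * Real.sin u := by
      rcases hσ1 with h | h <;> rw [ht, h]
      · rw [one_mul, ← hσD, h, one_mul]
      · rw [show (-1 : ℝ) * u = -u by ring, Real.sin_neg, ← hσD, h]; ring
    have expand : εa * (a * Real.cos t - b * Real.sin t) + εb * (a * Real.sin t + b * Real.cos t)
        = (|a| + |b|) * Real.cos t + D * Real.sin t := by
      rw [← hεa, ← hεb, hD_def]; ring
    rw [hC, hCd]
    have heq : (|a| + |b|) * Real.cos t + D * Real.sin t
        = (|a| + |b|) * Real.cos u + |D| * Real.sin u := by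
      rw [hcos]; linear_combination hsin
    linarith [hA, hB, expand, heq]
  set h : ℝ → ℝ := fun u => (|a| + |b|) * Real.cos u + |D| * Real.sin u with hh_def
  have hder : HasDerivAt h |D| 0 := by
    have hc' := (Real.hasDerivAt_cos 0).const_mul (|a| + |b|)
    have hs' := (Real.hasDerivAt_sin 0).const_mul (|D|)
    have hsum := hc'.add hs'
    simp at hsum; exact hsum
  rw [hasDerivAt_iff_tendsto_slope] at hder
  have hslope : ∀ᶠ u in nhdsWithin 0 {(0:ℝ)}ᶜ, 0 < slope h 0 u :=
    hder.eventually (eventually_gt_nhds hDpos)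
  have hslope' : ∀ᶠ u in nhdsWithin 0 (Set.Ioi 0), 0 < slope h 0 u :=
    hslope.filter_mono (nhdsWithin_mono 0 (fun x hx => ne_of_gt hx))
  have hmem : ∀ᶠ u in nhdsWithin 0 (Set.Ioi 0), u ∈ Set.Ioi (0:ℝ) := self_mem_nhdsWithin
  have hfalse : ∀ᶠ u in nhdsWithin 0 (Set.Ioi (0:ℝ)), False := by
    filter_upwards [hev1, hslope', hmem] with u hu1 hu2 hu3
    have hu : (0:ℝ) < u := hu3
    have hs0 : slope h 0 u = (h u - h 0) / u := by
      rw [slope_def_field]; ring_nf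
    have hpos : 0 < h u - h 0 := by
      have hmulpos := mul_pos hu2 hu
      rw [hs0, div_mul_cancel₀ _ (ne_of_gt hu)] at hmulpos
      linarith
    have h0val : h 0 = |a| + |b| := by simp [hh_def]
    have hlb := hlow u
    rw [hnorm0] at hu1
    simp only [hh_def] at hpos h0val
    linarith
  rcases hfalse.exists with ⟨u, hu⟩
  exact hu

lemma row2_abs (a b c d : ℝ)
    (h1 : a*a + b*b = 1) (h2 : a*c + b*d = 0) (h3 : c*c + d*d = 1) :
    |c| = |b| ∧ |d| = |a| := by
  set s : ℝ := a*d - b*c with hs_def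
  have hs : s * s = 1 := by linear_combination (c*c+d*d)*h1 + h3 - (a*c+b*d)*h2
  have hd : d = s*a := by simp only [hs_def]; linear_combination -d*h1 + b*h2
  have hc : c = -(s*b) := by simp only [hs_def]; linear_combination -c*h1 + a*h2
  have habs_s : |s| = 1 := by
    rcases mul_eq_zero.1 (by linarith : (s-1)*(s+1) = 0) with h | h
    · rw [show s = 1 by linarith]; simp
    · rw [show s = -1 by linarith]; simp
  constructor
  · rw [hc, abs_neg, abs_mul, habs_s, one_mul]
  · rw [hd, abs_mul, habs_s, one_mul]

lemma abs_val_eq (a b : ℝ) (h1 : a*a + b*b = 1) (hab : |a| = |b|) :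
    |a| = 1 / Real.sqrt 2 := by
  have h2 : Real.sqrt 2 * Real.sqrt 2 = 2 := Real.mul_self_sqrt (by norm_num)
  have hs2 : 0 < Real.sqrt 2 := Real.sqrt_pos.2 (by norm_num)
  have hbb : b * b = a * a := by
    rw [← abs_mul_abs_self a, ← abs_mul_abs_self b, hab]
  have ha2 : 2 * (|a| * |a|) = 1 := by
    rw [abs_mul_abs_self a]; linarith
  rw [eq_div_iff (ne_of_gt hs2)]
  have hfac : (|a| * Real.sqrt 2 - 1) * (|a| * Real.sqrt 2 + 1) = 0 := by
    nlinarith [ha2, h2]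
  rcases mul_eq_zero.1 hfac with h | h
  · linarith
  · nlinarith [abs_nonneg a, hs2]

lemma row_abs_le (x y : ℝ) (h : x*x + y*y = 1) : |x| + |y| ≤ Real.sqrt 2 := by
  have h2 : Real.sqrt 2 * Real.sqrt 2 = 2 := Real.mul_self_sqrt (by norm_num)
  have hs2 : 0 < Real.sqrt 2 := Real.sqrt_pos.2 (by norm_num)
  nlinarith [abs_mul_abs_self x, abs_mul_abs_self y, sq_nonneg (|x| - |y|),
    abs_nonneg x, abs_nonneg y, sq_nonneg (|x| + |y| - Real.sqrt 2)]

/-- Every local maximizer `U` of the 1-norm on `O(2)` satisfies `‖U‖₁ = 2√2`;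
equivalently `|Uᵢⱼ| = 1/√2` for all `i, j`, so `√2·U` is Hadamard and `U` is a
global maximizer of the 1-norm on `O(2)`. -/
theorem isLocalMaxOn_norm1_two
    (U : Matrix (Fin 2) (Fin 2) ℝ) (hU : U * Uᵀ = 1)
    (hmax : IsLocalMaxOn matrixNorm1 {W : Matrix (Fin 2) (Fin 2) ℝ | W * Wᵀ = 1} U) :
    matrixNorm1 U = 2 * Real.sqrt 2 ∧
    (∀ i j, |U i j| = 1 / Real.sqrt 2) ∧
    _root_.IsHadamard (Real.sqrt 2 • U) ∧
    ∀ W : Matrix (Fin 2) (Fin 2) ℝ, W * Wᵀ = 1 → matrixNorm1 W ≤ matrixNorm1 U := by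
  have entry : ∀ (W : Matrix (Fin 2) (Fin 2) ℝ), W * Wᵀ = 1 → ∀ i j : Fin 2,
      W i 0 * W j 0 + W i 1 * W j 1 = if i = j then 1 else 0 := by
    intro W hW i j
    have h := congrFun (congrFun hW i) j
    simpa [Matrix.mul_apply, Fin.sum_univ_two, Matrix.one_apply] using h
  have h1 : U 0 0 * U 0 0 + U 0 1 * U 0 1 = 1 := by simpa using entry U hU 0 0
  have h2 : U 0 0 * U 1 0 + U 0 1 * U 1 1 = 0 := by simpa using entry U hU 0 1
  have h3 : U 1 0 * U 1 0 + U 1 1 * U 1 1 = 1 := by simpa using entry U hU 1 1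
  have hab : |U 0 0| = |U 0 1| := by
    apply key_abs_eq (U 0 0) (U 0 1) (U 1 0) (U 1 1) h1 h2 h3
    rwa [← Matrix.eta_fin_two U]
  obtain ⟨hcb, hda⟩ := row2_abs (U 0 0) (U 0 1) (U 1 0) (U 1 1) h1 h2 h3
  have ha : |U 0 0| = 1 / Real.sqrt 2 := abs_val_eq _ _ h1 hab
  have hb : |U 0 1| = 1 / Real.sqrt 2 := hab ▸ ha
  have hc : |U 1 0| = 1 / Real.sqrt 2 := hcb.trans hb
  have hd : |U 1 1| = 1 / Real.sqrt 2 := hda.trans ha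
  have habs : ∀ i j, |U i j| = 1 / Real.sqrt 2 := by
    intro i j; fin_cases i <;> fin_cases j <;> assumption
  have hs2 : Real.sqrt 2 * Real.sqrt 2 = 2 := Real.mul_self_sqrt (by norm_num)
  have hs2pos : 0 < Real.sqrt 2 := Real.sqrt_pos.2 (by norm_num)
  have hnorm : matrixNorm1 U = 2 * Real.sqrt 2 := by
    rw [norm1_two, ha, hb, hc, hd]
    field_simp
    linarith [hs2]
  refine ⟨hnorm, habs, ⟨?_, ?_⟩, ?_⟩
  · intro i j
    have habs1 : |(Real.sqrt 2 • U) i j| = 1 := by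
      simp only [Matrix.smul_apply, smul_eq_mul, abs_mul, abs_of_pos hs2pos, habs i j]
      field_simp
    rcases (abs_eq (by norm_num : (0:ℝ) ≤ 1)).mp habs1 with h' | h'
    · left; exact h'
    · right; exact h'
  · intro i j hij
    have key : U i 0 * U j 0 + U i 1 * U j 1 = 0 := by
      rw [entry U hU i j, if_neg hij]
    simp only [Fin.sum_univ_two, Matrix.smul_apply, smul_eq_mul]
    linear_combination (Real.sqrt 2 * Real.sqrt 2) * key
  · intro W hW
    have w1 : W 0 0 * W 0 0 + W 0 1 * W 0 1 = 1 := by simpa using entry W hW 0 0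
    have w3 : W 1 0 * W 1 0 + W 1 1 * W 1 1 = 1 := by simpa using entry W hW 1 1
    have r1 := row_abs_le _ _ w1
    have r2 := row_abs_le _ _ w3
    rw [norm1_two, hnorm]
    linarith
end

section
/- There exists a matrix U ∈ O(12) which is a local maximizer of the 1-norm on O(12) but which does not maximize the 1-norm globally, i.e. ||U||₁ < sup_{W ∈ O(12)} ||W||₁; indeed one can take U = A ⊗ (H/2) where A = (1/3)·[[1,2,2],[2,1,−2],[−2,2,−1]] and H is any 4×4 Hadamard matrix, giving ||U||₁ = 40 < 12√12. -/
open Matrix Kronecker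

/-! ### Auxiliary definitions -/

def LMN.H4 : Matrix (Fin 4) (Fin 4) ℝ := !![1,1,1,1; 1,-1,1,-1; 1,1,-1,-1; 1,-1,-1,1]

def LMN.SA : Matrix (Fin 3) (Fin 3) ℝ := !![1,1,1; 1,1,-1; -1,1,-1]

noncomputable def LMN.C3 : Matrix (Fin 3) (Fin 3) ℝ :=
  (1/3:ℝ) • !![Real.sqrt 2 + 4, 2 - Real.sqrt 2, Real.sqrt 2 - 2;
               2 - Real.sqrt 2, Real.sqrt 2 + 4, 2 - Real.sqrt 2;
               Real.sqrt 2 - 2, 2 - Real.sqrt 2, Real.sqrt 2 + 4]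

namespace LMN

noncomputable def U12 : Matrix (Fin 3 × Fin 4) (Fin 3 × Fin 4) ℝ :=
  matrixA ⊗ₖ ((1/2:ℝ) • H4)

noncomputable def S12 : Matrix (Fin 3 × Fin 4) (Fin 3 × Fin 4) ℝ := SA ⊗ₖ H4

noncomputable def C12 : Matrix (Fin 3 × Fin 4) (Fin 3 × Fin 4) ℝ :=
  C3 ⊗ₖ (1 : Matrix (Fin 4) (Fin 4) ℝ)

def K12 : Matrix (Fin 12) (Fin 12) ℤ :=
  !![1, 1, 1, 1, 1, 1, 1, 1, 1, 1, 1, 1;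
     -1, 1, -1, 1, -1, -1, -1, 1, 1, 1, -1, 1;
     -1, 1, 1, -1, 1, -1, -1, -1, 1, 1, 1, -1;
     -1, -1, 1, 1, -1, 1, -1, -1, -1, 1, 1, 1;
     -1, 1, -1, 1, 1, -1, 1, -1, -1, -1, 1, 1;
     -1, 1, 1, -1, 1, 1, -1, 1, -1, -1, -1, 1;
     -1, 1, 1, 1, -1, 1, 1, -1, 1, -1, -1, -1;
     -1, -1, 1, 1, 1, -1, 1, 1, -1, 1, -1, -1;
     -1, -1, -1, 1, 1, 1, -1, 1, 1, -1, 1, -1;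
     -1, -1, -1, -1, 1, 1, 1, -1, 1, 1, -1, 1;
     -1, 1, -1, -1, -1, 1, 1, 1, -1, 1, 1, -1;
     -1, -1, 1, -1, -1, -1, 1, 1, 1, -1, 1, 1]

noncomputable def Wit : Matrix (Fin 3 × Fin 4) (Fin 3 × Fin 4) ℝ :=
  fun p q => (K12 (finProdFinEquiv p) (finProdFinEquiv q) : ℝ) / Real.sqrt 12

/-! ### Concrete computations -/

lemma hAT : matrixAᵀ = (1/3:ℝ) • !![1,2,-2; 2,1,2; 2,-2,-1] := by
  ext i j; fin_cases i <;> fin_cases j <;> simp [matrixA, Matrix.vecHead, Matrix.vecTail]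

lemma hH4T : H4ᵀ = !![1,1,1,1; 1,-1,1,-1; 1,1,-1,-1; 1,-1,-1,1] := by
  ext i j; fin_cases i <;> fin_cases j <;> simp [H4, Matrix.vecHead, Matrix.vecTail]

lemma hAo : matrixA * matrixAᵀ = 1 := by
  rw [hAT]
  ext i j
  fin_cases i <;> fin_cases j <;>
    simp [matrixA, Matrix.mul_apply, Fin.sum_univ_succ, Matrix.one_apply] <;> norm_num

lemma hH4o : H4 * H4ᵀ = (4:ℝ) • 1 := by
  rw [hH4T]
  ext i j
  fin_cases i <;> fin_cases j <;>
    simp [H4, Matrix.mul_apply, Fin.sum_univ_succ, Matrix.one_apply] <;> norm_num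

lemma hSAAt : SA * matrixAᵀ = (1/3:ℝ) • !![5,1,-1; 1,5,1; -1,1,5] := by
  rw [hAT]
  ext i j
  fin_cases i <;> fin_cases j <;>
    simp [SA, Matrix.mul_apply, Fin.sum_univ_succ] <;> norm_num

lemma hC3T : C3ᵀ = C3 := by
  ext i j; fin_cases i <;> fin_cases j <;> simp [C3, Matrix.vecHead, Matrix.vecTail]

lemma hC3C3 : C3ᵀ * C3 = (2/3:ℝ) • !![5,1,-1; 1,5,1; -1,1,5] := by
  rw [hC3T]
  have hs : Real.sqrt 2 * Real.sqrt 2 = 2 := Real.mul_self_sqrt (by norm_num)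
  ext i j
  fin_cases i <;> fin_cases j <;>
    · simp [C3, Matrix.mul_apply, Fin.sum_univ_succ]
      ring_nf
      nlinarith [hs]

lemma hH4had : _root_.IsHadamard H4 := by
  constructor
  · intro i j
    fin_cases i <;> fin_cases j <;>
      simp [H4, Matrix.vecHead, Matrix.vecTail]
  · intro i j hij
    fin_cases i <;> fin_cases j <;>
      simp_all [H4, Fin.sum_univ_succ, Matrix.vecHead, Matrix.vecTail]

lemma hSApm : ∀ i j, SA i j = 1 ∨ SA i j = -1 := by
  intro i j
  fin_cases i <;> fin_cases j <;>
    simp [SA, Matrix.vecHead, Matrix.vecTail]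

lemma hSAA : ∀ i j, (1/3:ℝ) ≤ SA i j * matrixA i j := by
  intro i j
  fin_cases i <;> fin_cases j <;>
    simp [SA, matrixA, Matrix.vecHead, Matrix.vecTail] <;> norm_num

lemma hH4sq : ∀ k l, H4 k l * H4 k l = 1 := by
  intro k l
  rcases hH4had.1 k l with h | h <;> rw [h] <;> norm_num

/-! ### Orthogonality and the key PSD identity -/

lemma hUo : U12 * U12ᵀ = 1 := by
  unfold U12
  rw [← Matrix.kroneckerMap_transpose]
  rw [← Matrix.mul_kronecker_mul]
  rw [hAo]
  have : ((1/2:ℝ) • H4) * ((1/2:ℝ) • H4ᵀ) = 1 := by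
    rw [Matrix.smul_mul, Matrix.mul_smul, smul_smul, hH4o, smul_smul]
    norm_num
  rw [Matrix.transpose_smul, this, Matrix.one_kronecker_one]

lemma hSU : S12 * U12ᵀ = C12ᵀ * C12 := by
  unfold S12 U12 C12
  rw [← Matrix.kroneckerMap_transpose, Matrix.transpose_smul,
    ← Matrix.mul_kronecker_mul, ← Matrix.kroneckerMap_transpose, Matrix.transpose_one,
    ← Matrix.mul_kronecker_mul, hC3C3, Matrix.one_mul]
  rw [Matrix.mul_smul, hH4o, hSAAt, smul_smul]
  rw [Matrix.smul_kronecker, Matrix.smul_kronecker, Matrix.kronecker_smul, smul_smul]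
  norm_num

lemma htrace : Matrix.trace (C12ᵀ * C12) = 40 := by
  rw [← hSU]
  unfold S12 U12
  rw [← Matrix.kroneckerMap_transpose, Matrix.transpose_smul,
    ← Matrix.mul_kronecker_mul, Matrix.mul_smul, hH4o, hSAAt, smul_smul]
  rw [Matrix.smul_kronecker, Matrix.kronecker_smul, smul_smul, Matrix.trace_smul,
    Matrix.trace_kronecker]
  have h1 : Matrix.trace (!![(5:ℝ),1,-1; 1,5,1; -1,1,5]) = 15 := by
    simp [Matrix.trace, Fin.sum_univ_succ, Matrix.vecHead, Matrix.vecTail]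
    norm_num
  have h2 : Matrix.trace (1 : Matrix (Fin 4) (Fin 4) ℝ) = 4 := by
    simp [Matrix.trace_one]
  rw [h1, h2]
  norm_num

/-! ### Entrywise sign facts -/

lemma hSpm : ∀ p q : Fin 3 × Fin 4, S12 p q = 1 ∨ S12 p q = -1 := by
  intro p q
  have h : S12 p q = SA p.1 q.1 * H4 p.2 q.2 := rfl
  rcases hSApm p.1 q.1 with h1 | h1 <;> rcases hH4had.1 p.2 q.2 with h2 | h2 <;>
    rw [h, h1, h2] <;> norm_num

lemma hSUge : ∀ p q : Fin 3 × Fin 4, (1/6:ℝ) ≤ S12 p q * U12 p q := by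
  intro p q
  have h : S12 p q * U12 p q
      = (SA p.1 q.1 * matrixA p.1 q.1) * ((H4 p.2 q.2 * H4 p.2 q.2) * (1/2)) := by
    have h1 : S12 p q = SA p.1 q.1 * H4 p.2 q.2 := rfl
    have h2 : U12 p q = matrixA p.1 q.1 * ((1/2:ℝ) * H4 p.2 q.2) := rfl
    rw [h1, h2]; ring
  rw [h, hH4sq p.2 q.2, one_mul]
  have := hSAA p.1 q.1
  linarith

/-! ### The trace inequality (Cauchy–Schwarz) -/

lemma trace_mul_orth_le {n : Type*} [Fintype n] [DecidableEq n] (C Q : Matrix n n ℝ)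
    (hQ : Qᵀ * Q = 1) : trace (Cᵀ * C * Q) ≤ trace (Cᵀ * C) := by
  have hQ' : Q * Qᵀ = 1 := mul_eq_one_comm.mp hQ
  rw [Matrix.mul_assoc, Matrix.trace_mul_comm, Matrix.trace_mul_comm Cᵀ C]
  simp only [Matrix.trace, Matrix.diag]
  apply Finset.sum_le_sum
  intro i _
  set c : n → ℝ := fun j => C i j with hc
  set g : n → ℝ := c ᵥ* Q with hg
  have hQg : Q *ᵥ g = c := by
    rw [hg, ← Matrix.mulVec_transpose, Matrix.mulVec_mulVec, hQ', Matrix.one_mulVec]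
  have hgg : ∑ j, g j ^ 2 = ∑ j, c j ^ 2 := by
    have h1 : g ⬝ᵥ g = c ⬝ᵥ c := by
      calc g ⬝ᵥ g = (c ᵥ* Q) ⬝ᵥ g := by rw [hg]
        _ = c ⬝ᵥ (Q *ᵥ g) := (Matrix.dotProduct_mulVec c Q g).symm
        _ = c ⬝ᵥ c := by rw [hQg]
    simpa [dotProduct, pow_two] using h1
  have hL : (C * Q * Cᵀ) i i = ∑ j, g j * c j := by
    simp [Matrix.mul_apply, Matrix.transpose_apply, hg, Matrix.vecMul, dotProduct, hc,
      Finset.sum_mul]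
  have hR : (C * Cᵀ) i i = ∑ j, c j * c j := by
    simp [Matrix.mul_apply, Matrix.transpose_apply, hc]
  rw [hL, hR]
  have cs := Finset.sum_mul_sq_le_sq_mul_sq Finset.univ g c
  have hcc : (0:ℝ) ≤ ∑ j, c j * c j := Finset.sum_nonneg fun j _ => mul_self_nonneg _
  have h2 : (∑ j, g j * c j) ^ 2 ≤ (∑ j, c j * c j) ^ 2 := by
    calc (∑ j, g j * c j) ^ 2 ≤ (∑ j, g j ^ 2) * ∑ j, c j ^ 2 := cs
      _ = (∑ j, c j * c j) ^ 2 := by rw [hgg]; rw [pow_two]; congr 1 <;> simp [pow_two]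
  calc ∑ j, g j * c j ≤ abs (∑ j, g j * c j) := le_abs_self _
    _ = Real.sqrt ((∑ j, g j * c j) ^ 2) := (Real.sqrt_sq_eq_abs _).symm
    _ ≤ Real.sqrt ((∑ j, c j * c j) ^ 2) := Real.sqrt_le_sqrt h2
    _ = ∑ j, c j * c j := by rw [Real.sqrt_sq hcc]

lemma sum_mul_eq_trace {n : Type*} [Fintype n] (X Y : Matrix n n ℝ) :
    ∑ p, ∑ q, X p q * Y p q = Matrix.trace (X * Yᵀ) := by
  simp [Matrix.trace, Matrix.diag, Matrix.mul_apply, Matrix.transpose_apply]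

/-! ### The 1-norm of `U12` -/

lemma habsU : ∀ p q : Fin 3 × Fin 4, |U12 p q| = S12 p q * U12 p q := by
  intro p q
  have hge := hSUge p q
  rcases hSpm p q with h | h <;> rw [h] at hge ⊢
  · rw [one_mul] at hge ⊢
    exact abs_of_pos (by linarith)
  · rw [neg_one_mul] at hge ⊢
    exact abs_of_neg (by linarith)

lemma hnormU : matrixNorm1 U12 = 40 := by
  unfold matrixNorm1
  rw [Finset.sum_congr rfl fun p _ => Finset.sum_congr rfl fun q _ => habsU p q]
  rw [sum_mul_eq_trace, hSU, htrace]

/-! ### Local maximality: the key estimate -/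

lemma key (W : Matrix (Fin 3 × Fin 4) (Fin 3 × Fin 4) ℝ) (hW : W * Wᵀ = 1)
    (h6 : ∀ p q, |W p q - U12 p q| < 1/6) : matrixNorm1 W ≤ 40 := by
  have habsW : ∀ p q, |W p q| = S12 p q * W p q := by
    intro p q
    have hge := hSUge p q
    have h1 := (abs_sub_lt_iff.mp (h6 p q)).1
    have h2 := (abs_sub_lt_iff.mp (h6 p q)).2
    rcases hSpm p q with h | h <;> rw [h] at hge ⊢
    · rw [one_mul] at hge ⊢
      exact abs_of_pos (by linarith)
    · rw [neg_one_mul] at hge ⊢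
      exact abs_of_neg (by linarith)
  have hUtU : U12ᵀ * U12 = 1 := mul_eq_one_comm.mp hUo
  set V : Matrix (Fin 3 × Fin 4) (Fin 3 × Fin 4) ℝ := W * U12ᵀ with hV
  have hWVU : W = V * U12 := by
    rw [hV, Matrix.mul_assoc, hUtU, Matrix.mul_one]
  have hVVt : V * Vᵀ = 1 := by
    rw [hV, Matrix.transpose_mul, Matrix.transpose_transpose]
    have h3 : W * U12ᵀ * (U12 * Wᵀ) = W * (U12ᵀ * U12) * Wᵀ := by
      rw [Matrix.mul_assoc, Matrix.mul_assoc, Matrix.mul_assoc]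
    rw [h3, hUtU, Matrix.mul_one, hW]
  have hQ : (Vᵀ)ᵀ * Vᵀ = 1 := by rw [Matrix.transpose_transpose]; exact hVVt
  have step1 : matrixNorm1 W = Matrix.trace (S12 * Wᵀ) := by
    unfold matrixNorm1
    rw [Finset.sum_congr rfl fun p _ => Finset.sum_congr rfl fun q _ => habsW p q]
    exact sum_mul_eq_trace S12 W
  have step2 : Matrix.trace (S12 * Wᵀ) = Matrix.trace (C12ᵀ * C12 * Vᵀ) := by
    conv_lhs => rw [hWVU]
    rw [Matrix.transpose_mul, ← Matrix.mul_assoc, hSU]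
  rw [step1, step2, ← htrace]
  exact trace_mul_orth_le C12 Vᵀ hQ

/-! ### Upper bound on the 1-norm over `O(12)` -/

lemma norm1_le_of_orth (W : Matrix (Fin 3 × Fin 4) (Fin 3 × Fin 4) ℝ)
    (hW : W * Wᵀ = 1) : matrixNorm1 W ≤ 12 * Real.sqrt 12 := by
  have h12 : (∑ _j : Fin 3 × Fin 4, (1:ℝ) ^ 2) = 12 := by
    simp [Finset.sum_const, Finset.card_univ]
  have row : ∀ i, ∑ j, |W i j| ≤ Real.sqrt 12 := by
    intro i
    have h1 : ∑ j, W i j * W i j = 1 := by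
      have := congrFun (congrFun hW i) i
      simpa [Matrix.mul_apply, Matrix.one_apply] using this
    have cs := Finset.sum_mul_sq_le_sq_mul_sq Finset.univ (fun j => |W i j|) (fun _ => (1:ℝ))
    have h2 : (∑ j, |W i j|) ^ 2 ≤ 12 := by
      have e1 : (∑ j, |W i j| * 1) = ∑ j, |W i j| := by simp
      have e2 : (∑ j, |W i j| ^ 2) = ∑ j, W i j * W i j :=
        Finset.sum_congr rfl fun j _ => by rw [sq_abs, pow_two]
      rw [e1, e2, h1, h12, one_mul] at cs
      exact cs
    calc ∑ j, |W i j| ≤ abs (∑ j, |W i j|) := le_abs_self _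
      _ = Real.sqrt ((∑ j, |W i j|) ^ 2) := (Real.sqrt_sq_eq_abs _).symm
      _ ≤ Real.sqrt 12 := Real.sqrt_le_sqrt h2
  calc matrixNorm1 W = ∑ i, ∑ j, |W i j| := rfl
    _ ≤ ∑ _i : Fin 3 × Fin 4, Real.sqrt 12 := Finset.sum_le_sum fun i _ => row i
    _ = 12 * Real.sqrt 12 := by
        simp [Finset.sum_const, Finset.card_univ]

/-! ### The Hadamard witness of order 12 -/

lemma hK12 : ∀ i j : Fin 12, (∑ k, K12 i k * K12 j k) = if i = j then 12 else 0 := by decide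

lemma hK12pm : ∀ i j : Fin 12, K12 i j = 1 ∨ K12 i j = -1 := by
  have h : ∀ i j : Fin 12, (K12 i j = 1 ∨ K12 i j = -1 : Bool) := by decide
  intro i j; simpa using h i j

lemma s12pos : (0:ℝ) < Real.sqrt 12 := Real.sqrt_pos.mpr (by norm_num)

lemma s12sq : Real.sqrt 12 * Real.sqrt 12 = 12 := Real.mul_self_sqrt (by norm_num)

lemma hWito : Wit * Witᵀ = 1 := by
  ext p q
  have key : ∑ r : Fin 3 × Fin 4,
      (K12 (finProdFinEquiv p) (finProdFinEquiv r) : ℝ) *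
        (K12 (finProdFinEquiv q) (finProdFinEquiv r) : ℝ)
      = if p = q then 12 else 0 := by
    have e1 : ∑ r : Fin 3 × Fin 4,
        (K12 (finProdFinEquiv p) (finProdFinEquiv r) : ℝ) *
          (K12 (finProdFinEquiv q) (finProdFinEquiv r) : ℝ)
        = ∑ k : Fin 12, (K12 (finProdFinEquiv p) k : ℝ) * (K12 (finProdFinEquiv q) k : ℝ) :=
      Fintype.sum_equiv finProdFinEquiv _ _ (fun r => rfl)
    rw [e1]
    have h0 := hK12 (finProdFinEquiv p) (finProdFinEquiv q)
    have h2 : (∑ k, (K12 (finProdFinEquiv p) k : ℝ) * (K12 (finProdFinEquiv q) k : ℝ))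
        = ((∑ k, K12 (finProdFinEquiv p) k * K12 (finProdFinEquiv q) k : ℤ) : ℝ) := by
      push_cast; rfl
    rw [h2, h0]
    by_cases h : p = q
    · simp [h]
    · have : finProdFinEquiv p ≠ finProdFinEquiv q := fun hc => h (finProdFinEquiv.injective hc)
      simp [h, this]
  simp only [Matrix.mul_apply, Matrix.transpose_apply, Wit, div_mul_div_comm, Matrix.one_apply]
  rw [← Finset.sum_div, key]
  by_cases h : p = q <;> simp [h, s12sq]

lemma hWitnorm : matrixNorm1 Wit = 12 * Real.sqrt 12 := by
  have habs : ∀ p q : Fin 3 × Fin 4, |Wit p q| = 1 / Real.sqrt 12 := by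
    intro p q
    rcases hK12pm (finProdFinEquiv p) (finProdFinEquiv q) with h | h <;>
      simp [Wit, h, abs_div, abs_of_pos s12pos]
  have h : matrixNorm1 Wit = ∑ _p : Fin 3 × Fin 4, ∑ _q : Fin 3 × Fin 4, 1 / Real.sqrt 12 := by
    unfold matrixNorm1
    exact Finset.sum_congr rfl fun p _ => Finset.sum_congr rfl fun q _ => habs p q
  rw [h]
  simp only [Finset.sum_const, Finset.card_univ]
  have hcard : Fintype.card (Fin 3 × Fin 4) = 12 := by simp
  rw [hcard]
  rw [nsmul_eq_mul, nsmul_eq_mul]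
  push_cast
  rw [eq_comm]
  field_simp
  exact Real.sq_sqrt (by norm_num)

lemma forty_lt : (40:ℝ) < 12 * Real.sqrt 12 := by
  nlinarith [s12sq, Real.sqrt_nonneg 12]

end LMN

open LMN in
/-- There is a matrix `U ∈ O(12)` (here `12 = 3 × 4`) which locally maximizes the
1-norm but does not maximize it globally: for any `4×4` Hadamard matrix `H`, the
matrix `U = A ⊗ (H/2)` is orthogonal, locally maximizes the 1-norm on `O(12)`,
and satisfies `‖U‖₁ = 40 < 12·√12`, so `‖U‖₁ < sup_{W ∈ O(12)} ‖W‖₁`. -/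
theorem exists_local_not_global_maximizer_norm1 :
    ∃ U : Matrix (Fin 3 × Fin 4) (Fin 3 × Fin 4) ℝ,
      (∃ H : Matrix (Fin 4) (Fin 4) ℝ, _root_.IsHadamard H ∧ U = matrixA ⊗ₖ ((1 / 2 : ℝ) • H)) ∧
      U * Uᵀ = 1 ∧
      IsLocalMaxOn matrixNorm1
        {W : Matrix (Fin 3 × Fin 4) (Fin 3 × Fin 4) ℝ | W * Wᵀ = 1} U ∧
      matrixNorm1 U = 40 ∧
      (40 : ℝ) < 12 * Real.sqrt 12 ∧
      matrixNorm1 U <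
        sSup {x : ℝ | ∃ W : Matrix (Fin 3 × Fin 4) (Fin 3 × Fin 4) ℝ,
          W * Wᵀ = 1 ∧ x = matrixNorm1 W} := by
  refine ⟨U12, ⟨H4, hH4had, rfl⟩, hUo, ?_, hnormU, forty_lt, ?_⟩
  · -- local maximality
    have hpt : ∀ (p q : Fin 3 × Fin 4), ∀ᶠ W in nhds U12, |W p q - U12 p q| < (1/6:ℝ) := by
      intro p q
      have hc : Continuous fun W : Matrix (Fin 3 × Fin 4) (Fin 3 × Fin 4) ℝ => W p q :=
        (continuous_apply q).comp (continuous_apply p)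
      have hb : Metric.ball (U12 p q) (1/6) ∈ nhds (U12 p q) :=
        Metric.ball_mem_nhds _ (by norm_num)
      have hpre := hc.continuousAt.preimage_mem_nhds hb
      filter_upwards [hpre] with W hW
      simpa [Metric.mem_ball, Real.dist_eq] using hW
    have h1 : ∀ᶠ W in nhds U12, ∀ p q, |W p q - U12 p q| < (1/6:ℝ) := by
      rw [Filter.eventually_all]
      intro p
      exact Filter.eventually_all.mpr fun q => hpt p q
    have h2 := h1.filter_mono (nhdsWithin_le_nhds
      (s := {W : Matrix (Fin 3 × Fin 4) (Fin 3 × Fin 4) ℝ | W * Wᵀ = 1}))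
    have h3 : ∀ᶠ W in nhdsWithin U12 {W : Matrix (Fin 3 × Fin 4) (Fin 3 × Fin 4) ℝ | W * Wᵀ = 1},
        W ∈ {W : Matrix (Fin 3 × Fin 4) (Fin 3 × Fin 4) ℝ | W * Wᵀ = 1} :=
      eventually_mem_nhdsWithin
    refine (h2.and h3).mono ?_
    rintro W ⟨hW6, hWS⟩
    show matrixNorm1 W ≤ matrixNorm1 U12
    rw [hnormU]
    exact key W hWS hW6
  · -- not a global maximizer
    have hbdd : BddAbove {x : ℝ | ∃ W : Matrix (Fin 3 × Fin 4) (Fin 3 × Fin 4) ℝ,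
        W * Wᵀ = 1 ∧ x = matrixNorm1 W} := by
      refine ⟨12 * Real.sqrt 12, ?_⟩
      rintro x ⟨W, hW, rfl⟩
      exact norm1_le_of_orth W hW
    have hmem : matrixNorm1 Wit ∈ {x : ℝ | ∃ W : Matrix (Fin 3 × Fin 4) (Fin 3 × Fin 4) ℝ,
        W * Wᵀ = 1 ∧ x = matrixNorm1 W} := ⟨Wit, hWito, rfl⟩
    calc matrixNorm1 U12 = 40 := hnormU
      _ < 12 * Real.sqrt 12 := forty_lt
      _ = matrixNorm1 Wit := hWitnorm.symm
      _ ≤ sSup _ := le_csSup hbdd hmem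
end

section
/- Assume that for every positive integer M divisible by 4 there exists a Hadamard matrix of order M. Then for every N ≥ 1, the quantity K_N = sup_{U ∈ O(N)} ||U||₁ satisfies K_N ≥ (N − 4.5)·√N. -/
open Matrix

lemma bdd_aux (N : ℕ) : BddAbove {x : ℝ | ∃ U : Matrix (Fin N) (Fin N) ℝ,
    U * Uᵀ = 1 ∧ x = ∑ i, ∑ j, |U i j|} := by
  refine ⟨(N : ℝ)^2, ?_⟩
  rintro x ⟨U, hU, rfl⟩
  have hentry : ∀ i j, |U i j| ≤ 1 := by
    intro i j
    have h1 : ∑ k, U i k * U i k = 1 := by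
      have := congrFun (congrFun hU i) i
      simpa [Matrix.mul_apply, Matrix.one_apply] using this
    have h2 : U i j * U i j ≤ 1 := by
      rw [← h1]
      exact Finset.single_le_sum (f := fun k => U i k * U i k)
        (fun k _ => mul_self_nonneg _) (Finset.mem_univ j)
    nlinarith [abs_nonneg (U i j), sq_abs (U i j)]
  calc ∑ i, ∑ j, |U i j| ≤ ∑ i : Fin N, ∑ j : Fin N, (1:ℝ) :=
        Finset.sum_le_sum (fun i _ => Finset.sum_le_sum (fun j _ => hentry i j))
    _ = (N:ℝ)^2 := by simp [sq]

lemma had_orth {M : ℕ} (hM : 0 < M) {H : Matrix (Fin M) (Fin M) ℝ} (hH : _root_.IsHadamard H) :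
    ((Real.sqrt M)⁻¹ • H) * ((Real.sqrt M)⁻¹ • H)ᵀ = 1 := by
  have hs : Real.sqrt M > 0 := Real.sqrt_pos.2 (by exact_mod_cast hM)
  have hHH : H * Hᵀ = (M : ℝ) • 1 := by
    ext i j
    rw [Matrix.mul_apply]
    by_cases h : i = j
    · subst h
      have : ∀ k, H i k * Hᵀ k i = 1 := by
        intro k
        rcases hH.1 i k with h1 | h1 <;> simp [Matrix.transpose_apply, h1]
      have h2 : ∀ k, H i k * H i k = 1 := by
        intro k; simpa [Matrix.transpose_apply] using this k
      simp [h2, Matrix.smul_apply, Matrix.one_apply]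
    · have := hH.2 i j h
      simp only [Matrix.transpose_apply]
      simp [this, Matrix.smul_apply, Matrix.one_apply, h]
  rw [Matrix.transpose_smul, Matrix.smul_mul, Matrix.mul_smul, hHH, smul_smul, smul_smul]
  have h3 : (Real.sqrt M)⁻¹ * (Real.sqrt M)⁻¹ * (M:ℝ) = 1 := by
    rw [← mul_inv, Real.mul_self_sqrt (by positivity)]
    field_simp
  rw [h3, one_smul]

lemma had_abs_sum {M : ℕ} (hM : 0 < M) {H : Matrix (Fin M) (Fin M) ℝ} (hH : _root_.IsHadamard H) :
    ∑ i, ∑ j, |((Real.sqrt M)⁻¹ • H) i j| = (M : ℝ) * Real.sqrt M := by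
  have hs : Real.sqrt M > 0 := Real.sqrt_pos.2 (by exact_mod_cast hM)
  have : ∀ i j, |((Real.sqrt M)⁻¹ • H) i j| = (Real.sqrt M)⁻¹ := by
    intro i j
    rcases hH.1 i j with h1 | h1 <;>
      simp [Matrix.smul_apply, h1, abs_of_nonneg, abs_of_pos, inv_nonneg, hs.le]
  simp only [this, Finset.sum_const, Finset.card_univ, Fintype.card_fin, nsmul_eq_mul]
  field_simp
  rw [Real.sq_sqrt (Nat.cast_nonneg _)]

lemma block_embed {M N : ℕ} (hMN : M ≤ N) (A : Matrix (Fin M) (Fin M) ℝ)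
    (hA : A * Aᵀ = 1) :
    ∃ U : Matrix (Fin N) (Fin N) ℝ, U * Uᵀ = 1 ∧
      ∑ i, ∑ j, |U i j| = (∑ i, ∑ j, |A i j|) + (N - M : ℕ) := by
  have hadd : M + (N - M) = N := Nat.add_sub_cancel' hMN
  let e : Fin N ≃ (Fin M ⊕ Fin (N - M)) := (finCongr hadd.symm).trans finSumFinEquiv.symm
  let B : Matrix (Fin M ⊕ Fin (N - M)) (Fin M ⊕ Fin (N - M)) ℝ :=
    Matrix.fromBlocks A 0 0 1
  refine ⟨B.submatrix e e, ?_, ?_⟩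
  · have hB : B * Bᵀ = 1 := by
      simp only [B, Matrix.fromBlocks_transpose, Matrix.fromBlocks_multiply]
      simp [hA, Matrix.fromBlocks_one]
    rw [Matrix.transpose_submatrix, Matrix.submatrix_mul_equiv, hB, Matrix.submatrix_one_equiv]
  · calc ∑ i, ∑ j, |B.submatrix e e i j| = ∑ p, ∑ q, |B p q| := by
          rw [← Equiv.sum_comp e (fun p => ∑ q, |B p q|)]
          refine Finset.sum_congr rfl (fun i _ => ?_)
          rw [← Equiv.sum_comp e (fun q => |B (e i) q|)]
          rfl
      _ = (∑ i, ∑ j, |A i j|) + (N - M : ℕ) := by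
          rw [Fintype.sum_sum_type]
          have hl : ∀ i : Fin M, ∑ q, |B (Sum.inl i) q| = ∑ j, |A i j| := by
            intro i
            rw [Fintype.sum_sum_type]
            simp [B, Matrix.fromBlocks]
          have hr : ∑ i : Fin (N - M), ∑ q, |B (Sum.inr i) q| = (N - M : ℕ) := by
            have : ∀ i : Fin (N - M), ∑ q, |B (Sum.inr i) q| = 1 := by
              intro i
              rw [Fintype.sum_sum_type]
              simp only [B, Matrix.fromBlocks, Matrix.one_apply, Matrix.of_apply,
                Sum.elim_inr, Matrix.zero_apply, abs_zero, Finset.sum_const,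
                Finset.card_univ, Fintype.card_fin, smul_zero, zero_add]
              rw [Finset.sum_congr rfl (fun x _ => apply_ite abs (i = x) 1 0)]
              simp [Finset.sum_ite_eq]
            simp [this]
          simp only [Finset.sum_congr rfl (fun i _ => hl i), hr]

lemma num_ineq {n m : ℝ} (hn : 4 ≤ n) (hm1 : n - 3 ≤ m) (hm2 : m ≤ n) :
    (n - 4.5) * Real.sqrt n ≤ m * Real.sqrt m + (n - m) := by
  have hm0 : (0:ℝ) ≤ n - 3 := by linarith
  have h1 : (n - 3) * Real.sqrt (n - 3) ≤ m * Real.sqrt m :=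
    mul_le_mul hm1 (Real.sqrt_le_sqrt hm1) (Real.sqrt_nonneg _) (by linarith)
  have key : (n - 4.5) * Real.sqrt n ≤ (n - 3) * Real.sqrt (n - 3) := by
    by_cases hc : n ≤ 4.5
    · have h2 : (n - 4.5) * Real.sqrt n ≤ 0 :=
        mul_nonpos_of_nonpos_of_nonneg (by linarith) (Real.sqrt_nonneg _)
      have h3 : (0:ℝ) ≤ (n - 3) * Real.sqrt (n - 3) :=
        mul_nonneg (by linarith) (Real.sqrt_nonneg _)
      linarith
    · push_neg at hc
      have hs : Real.sqrt n ^ 2 = n := Real.sq_sqrt (by linarith)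
      have ht : Real.sqrt (n - 3) ^ 2 = n - 3 := Real.sq_sqrt hm0
      have hsq : ((n - 4.5) * Real.sqrt n) ^ 2 ≤ ((n - 3) * Real.sqrt (n - 3)) ^ 2 := by
        rw [mul_pow, mul_pow, hs, ht]
        nlinarith
      have ha : 0 ≤ (n - 4.5) * Real.sqrt n :=
        mul_nonneg (by linarith) (Real.sqrt_nonneg _)
      have hb : 0 ≤ (n - 3) * Real.sqrt (n - 3) :=
        mul_nonneg (by linarith) (Real.sqrt_nonneg _)
      nlinarith
  linarith

/-- If the Hadamard conjecture holds (for every positive multiple `M` of `4` there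
exists a Hadamard matrix of order `M`), then for every `N ≥ 1` the supremum
`K_N = sup_{U ∈ O(N)} ‖U‖₁` satisfies `K_N ≥ (N − 4.5)·√N`. -/
theorem sSup_norm1_ge_of_hadamard_conjecture
    (hHC : ∀ M : ℕ, 0 < M → 4 ∣ M → ∃ H : Matrix (Fin M) (Fin M) ℝ, _root_.IsHadamard H) :
    ∀ N : ℕ, 1 ≤ N →
      ((N : ℝ) - 4.5) * Real.sqrt N ≤
        sSup {x : ℝ | ∃ U : Matrix (Fin N) (Fin N) ℝ,
          U * Uᵀ = 1 ∧ x = ∑ i, ∑ j, |U i j|} := by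
  intro N hN
  have hbdd := bdd_aux N
  by_cases hN4 : N < 4
  · have hmem : (N:ℝ) ∈ {x : ℝ | ∃ U : Matrix (Fin N) (Fin N) ℝ,
        U * Uᵀ = 1 ∧ x = ∑ i, ∑ j, |U i j|} := by
      refine ⟨1, by simp, ?_⟩
      have : ∀ i : Fin N, ∑ j, |(1 : Matrix (Fin N) (Fin N) ℝ) i j| = 1 := by
        intro i
        simp only [Matrix.one_apply]
        rw [Finset.sum_congr rfl (fun x _ => apply_ite abs (i = x) 1 0)]
        simp [Finset.sum_ite_eq]
      simp [this]
    have hle : ((N:ℝ) - 4.5) * Real.sqrt N ≤ N := by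
      have h2 : ((N:ℝ) - 4.5) * Real.sqrt N ≤ 0 := by
        apply mul_nonpos_of_nonpos_of_nonneg _ (Real.sqrt_nonneg _)
        have : (N:ℝ) ≤ 3 := by exact_mod_cast Nat.lt_succ_iff.mp hN4
        linarith
      have h3 : (0:ℝ) ≤ N := Nat.cast_nonneg N
      linarith
    exact hle.trans (le_csSup hbdd hmem)
  · push_neg at hN4
    set M : ℕ := 4 * (N / 4) with hMdef
    have hMpos : 0 < M := by omega
    have hMle : M ≤ N := by omega
    have hMge : N ≤ M + 3 := by omega
    obtain ⟨H, hH⟩ := hHC M hMpos ⟨N / 4, rfl⟩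
    obtain ⟨U, hU, hsum⟩ := block_embed hMle ((Real.sqrt M)⁻¹ • H) (had_orth hMpos hH)
    have hmem : ((M:ℝ) * Real.sqrt M + ((N - M : ℕ) : ℝ)) ∈
        {x : ℝ | ∃ U : Matrix (Fin N) (Fin N) ℝ,
          U * Uᵀ = 1 ∧ x = ∑ i, ∑ j, |U i j|} :=
      ⟨U, hU, by rw [hsum, had_abs_sum hMpos hH]⟩
    refine le_trans ?_ (le_csSup hbdd hmem)
    have hcast : ((N - M : ℕ) : ℝ) = (N:ℝ) - M := by
      push_cast [Nat.cast_sub hMle]; ring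
    rw [hcast]
    have c1 : (4:ℝ) ≤ N := by exact_mod_cast hN4
    have c2 : (N:ℝ) - 3 ≤ M := by
      have : (N:ℝ) ≤ M + 3 := by exact_mod_cast hMge
      linarith
    have c3 : (M:ℝ) ≤ N := by exact_mod_cast hMle
    exact num_ineq c1 c2 c3
end

section
/- Let N be even and U ∈ O(N). Let S ∈ M_N(ℝ) be a matrix with all entries in {−1,1} such that S_{ij}·U_{ij} = |U_{ij}| for all i,j, and suppose S is not a Hadamard matrix (i.e., S has two distinct rows that are not orthogonal). Then ||U||₁ ≤ N√N − 1/(N√N). -/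
open Matrix Finset

/-- Cauchy–Schwarz with square root. -/
lemma cs_sqrt {N : ℕ} (f g : Fin N → ℝ) :
    ∑ k, f k * g k ≤ Real.sqrt ((∑ k, f k ^ 2) * (∑ k, g k ^ 2)) :=
  Real.le_sqrt_of_sq_le (Finset.sum_mul_sq_le_sq_mul_sq _ f g)

/-- Let `N` be even and `U ∈ O(N)`. If `S` is a sign matrix of `U` (entries `±1`
with `Sᵢⱼ·Uᵢⱼ = |Uᵢⱼ|`) which is not Hadamard, i.e. `S` has two distinct rows
that are not orthogonal, then `‖U‖₁ ≤ N√N − 1/(N√N)`. -/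
theorem norm1_le_of_sign_not_hadamard {N : ℕ} (hN : Even N)
    (U S : Matrix (Fin N) (Fin N) ℝ) (hU : U * Uᵀ = 1)
    (hS : ∀ i j, S i j = 1 ∨ S i j = -1)
    (hSU : ∀ i j, S i j * U i j = |U i j|)
    (hnotH : ∃ i j, i ≠ j ∧ ∑ k, S i k * S j k ≠ 0) :
    ∑ i, ∑ j, |U i j| ≤ (N : ℝ) * Real.sqrt N - 1 / ((N : ℝ) * Real.sqrt N) := by
  obtain ⟨i₀, j₀, hij, ht0⟩ := hnotH
  -- basic facts
  have hrow : ∀ i j, ∑ k, U i k * U j k = if i = j then 1 else 0 := by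
    intro i j
    have := congrFun (congrFun hU i) j
    simpa [Matrix.mul_apply, Matrix.transpose_apply, Matrix.one_apply] using this
  have hSsq : ∀ i, ∑ k, S i k ^ 2 = (N : ℝ) := by
    intro i
    have : ∀ k, S i k ^ 2 = 1 := by
      intro k; rcases hS i k with h | h <;> rw [h] <;> norm_num
    simp [this]
  have hUsq : ∀ i, ∑ k, U i k ^ 2 = 1 := by
    intro i; have := hrow i i; simp at this; simpa [sq] using this
  have hN2 : 2 ≤ N := by
    have : Nontrivial (Fin N) := ⟨⟨i₀, j₀, hij⟩⟩
    have := Fintype.one_lt_card (α := Fin N)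
    simp at this; omega
  have hNpos : (0 : ℝ) < N := by positivity
  have hsqrtN : (0:ℝ) < Real.sqrt N := Real.sqrt_pos.mpr hNpos
  -- row sums
  set R : Fin N → ℝ := fun i => ∑ j, |U i j| with hR
  have hRle : ∀ i, R i ≤ Real.sqrt N := by
    intro i
    have h1 : R i = ∑ k, S i k * U i k := by
      simp [hR, hSU]
    calc R i = ∑ k, S i k * U i k := h1
      _ ≤ Real.sqrt ((∑ k, S i k ^ 2) * (∑ k, U i k ^ 2)) := cs_sqrt _ _
      _ = Real.sqrt N := by rw [hSsq, hUsq, mul_one]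
  -- the correlation t
  set t : ℝ := ∑ k, S i₀ k * S j₀ k with htdef
  have hprod : ∀ k, S i₀ k * S j₀ k = 1 ∨ S i₀ k * S j₀ k = -1 := by
    intro k
    rcases hS i₀ k with h1 | h1 <;> rcases hS j₀ k with h2 | h2 <;>
      simp [h1, h2]
  -- t = N - 2 m
  have htm : ∃ m : ℕ, t = (N : ℝ) - 2 * m := by
    set sf := univ.filter (fun k => S i₀ k * S j₀ k = -1) with hsdef
    refine ⟨sf.card, ?_⟩
    have hsplit := Finset.sum_filter_add_sum_filter_not univ
      (fun k => S i₀ k * S j₀ k = -1) (fun k => S i₀ k * S j₀ k)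
    have h1 : ∑ k ∈ sf, S i₀ k * S j₀ k = -(sf.card : ℝ) := by
      rw [Finset.sum_congr rfl (fun k hk => (Finset.mem_filter.mp hk).2)]
      simp [hsdef]
    have h2 : ∑ k ∈ univ.filter (fun k => ¬ S i₀ k * S j₀ k = -1), S i₀ k * S j₀ k
        = ((univ.filter (fun k => ¬ S i₀ k * S j₀ k = -1)).card : ℝ) := by
      rw [Finset.sum_congr rfl (fun k hk =>
        (hprod k).resolve_right (Finset.mem_filter.mp hk).2)]
      simp
    have hle : sf.card ≤ N := by
      simpa using Finset.card_filter_le univ (fun k => S i₀ k * S j₀ k = -1)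
    have hcc : (univ.filter (fun k => ¬ S i₀ k * S j₀ k = -1)).card = N - sf.card := by
      rw [Finset.filter_not, Finset.card_sdiff_of_subset (Finset.filter_subset _ _)]
      simp [hsdef]
    rw [htdef, ← hsplit, h1, h2, hcc, Nat.cast_sub hle]
    push_cast
    ring
  -- |t| ≥ 2
  have ht2 : 2 ≤ |t| := by
    obtain ⟨m, hm⟩ := htm
    obtain ⟨n, hn⟩ := hN
    have hz : t = 2 * ((n : ℝ) - m) := by
      rw [hm, hn]; push_cast; ring
    have hnm : (n : ℤ) ≠ m := by
      intro h
      apply ht0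
      have : (n : ℝ) = m := by exact_mod_cast h
      rw [hz, this]; ring
    have h1 : (1 : ℤ) ≤ |(n : ℤ) - m| := Int.one_le_abs (sub_ne_zero.mpr hnm)
    have h1' : (1 : ℝ) ≤ |(n : ℝ) - m| := by exact_mod_cast h1
    rw [hz, abs_mul]
    simp only [abs_two]
    linarith
  -- |t| ≤ N
  have htN : |t| ≤ (N : ℝ) := by
    rw [htdef]
    calc |∑ k, S i₀ k * S j₀ k| ≤ ∑ k, |S i₀ k * S j₀ k| :=
          Finset.abs_sum_le_sum_abs _ _
      _ = (N : ℝ) := by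
          have habs1 : ∀ k : Fin N, |S i₀ k * S j₀ k| = 1 := fun k => by
            rcases hprod k with h | h <;> rw [h] <;> norm_num
          simp [habs1]
  -- key two-row bound
  have hkey : R i₀ + R j₀ ≤ Real.sqrt ((N : ℝ) + t) + Real.sqrt ((N : ℝ) - t) := by
    have hA : R i₀ = ∑ k, S i₀ k * U i₀ k := by simp [hR, hSU]
    have hB : R j₀ = ∑ k, S j₀ k * U j₀ k := by simp [hR, hSU]
    have hid : 2 * (R i₀ + R j₀)
        = (∑ k, (S i₀ k + S j₀ k) * (U i₀ k + U j₀ k))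
        + (∑ k, (S i₀ k - S j₀ k) * (U i₀ k - U j₀ k)) := by
      rw [hA, hB, ← Finset.sum_add_distrib, Finset.mul_sum, ← Finset.sum_add_distrib]
      exact Finset.sum_congr rfl (fun k _ => by ring)
    have hcross : ∑ k, U i₀ k * U j₀ k = 0 := by
      have := hrow i₀ j₀; simpa [hij] using this
    have hsum1 : ∑ k, (S i₀ k + S j₀ k) ^ 2 = 2 * N + 2 * t := by
      have : ∀ k, (S i₀ k + S j₀ k) ^ 2
          = S i₀ k ^ 2 + S j₀ k ^ 2 + 2 * (S i₀ k * S j₀ k) := fun k => by ring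
      simp_rw [this, Finset.sum_add_distrib, hSsq, ← Finset.mul_sum, ← htdef]
      ring
    have hsum2 : ∑ k, (S i₀ k - S j₀ k) ^ 2 = 2 * N - 2 * t := by
      have : ∀ k, (S i₀ k - S j₀ k) ^ 2
          = S i₀ k ^ 2 + S j₀ k ^ 2 - 2 * (S i₀ k * S j₀ k) := fun k => by ring
      simp_rw [this, Finset.sum_sub_distrib, Finset.sum_add_distrib, hSsq,
        ← Finset.mul_sum, ← htdef]
      ring
    have husum1 : ∑ k, (U i₀ k + U j₀ k) ^ 2 = 2 := by
      have : ∀ k, (U i₀ k + U j₀ k) ^ 2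
          = U i₀ k ^ 2 + U j₀ k ^ 2 + 2 * (U i₀ k * U j₀ k) := fun k => by ring
      simp_rw [this, Finset.sum_add_distrib, hUsq, ← Finset.mul_sum, hcross]
      ring
    have husum2 : ∑ k, (U i₀ k - U j₀ k) ^ 2 = 2 := by
      have : ∀ k, (U i₀ k - U j₀ k) ^ 2
          = U i₀ k ^ 2 + U j₀ k ^ 2 - 2 * (U i₀ k * U j₀ k) := fun k => by ring
      simp_rw [this, Finset.sum_sub_distrib, Finset.sum_add_distrib, hUsq,
        ← Finset.mul_sum, hcross]
      ring
    have hc1 : (∑ k, (S i₀ k + S j₀ k) * (U i₀ k + U j₀ k))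
        ≤ 2 * Real.sqrt ((N:ℝ) + t) := by
      calc _ ≤ Real.sqrt ((∑ k, (S i₀ k + S j₀ k)^2) * ∑ k, (U i₀ k + U j₀ k)^2) :=
            cs_sqrt _ _
        _ = 2 * Real.sqrt ((N:ℝ) + t) := by
            rw [hsum1, husum1,
              show (2*(N:ℝ) + 2*t) * 2 = 2^2 * ((N:ℝ) + t) by ring,
              Real.sqrt_mul (by positivity), Real.sqrt_sq (by norm_num)]
    have hc2 : (∑ k, (S i₀ k - S j₀ k) * (U i₀ k - U j₀ k))
        ≤ 2 * Real.sqrt ((N:ℝ) - t) := by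
      calc _ ≤ Real.sqrt ((∑ k, (S i₀ k - S j₀ k)^2) * ∑ k, (U i₀ k - U j₀ k)^2) :=
            cs_sqrt _ _
        _ = 2 * Real.sqrt ((N:ℝ) - t) := by
            rw [hsum2, husum2,
              show (2*(N:ℝ) - 2*t) * 2 = 2^2 * ((N:ℝ) - t) by ring,
              Real.sqrt_mul (by positivity), Real.sqrt_sq (by norm_num)]
    linarith [hid, hc1, hc2]
  -- bound sqrt(N+t)+sqrt(N-t) ≤ 2√N - 1/(N√N)
  have habs := abs_le.mp htN
  have hNt1 : (0:ℝ) ≤ (N:ℝ) + t := by linarith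
  have hNt2 : (0:ℝ) ≤ (N:ℝ) - t := by linarith
  have hbound : Real.sqrt ((N : ℝ) + t) + Real.sqrt ((N : ℝ) - t)
      ≤ 2 * Real.sqrt N - 1 / ((N:ℝ) * Real.sqrt N) := by
    set L := Real.sqrt ((N : ℝ) + t) + Real.sqrt ((N : ℝ) - t) with hL
    have hLnn : 0 ≤ L := by positivity
    have hmul : Real.sqrt ((N:ℝ)+t) * Real.sqrt ((N:ℝ)-t)
        = Real.sqrt ((N:ℝ)^2 - t^2) := by
      rw [← Real.sqrt_mul hNt1]
      congr 1
      ring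
    have hLsq : L ^ 2 = 2 * N + 2 * Real.sqrt ((N:ℝ)^2 - t^2) := by
      have h1 := Real.sq_sqrt hNt1
      have h2 := Real.sq_sqrt hNt2
      rw [hL]
      linear_combination h1 + h2 + 2 * hmul
    have hs4 : Real.sqrt ((N:ℝ)^2 - t^2) ≤ (N:ℝ) - 2 / N := by
      have h4 : (4:ℝ) ≤ t^2 := by
        have := sq_abs t
        nlinarith [ht2]
      have hNN : (N:ℝ) - 2/N ≥ 0 := by
        rw [ge_iff_le, sub_nonneg, div_le_iff₀ hNpos]
        nlinarith [hN2, show (2:ℝ) ≤ N by exact_mod_cast hN2]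
      calc Real.sqrt ((N:ℝ)^2 - t^2) ≤ Real.sqrt (((N:ℝ) - 2/N)^2) := by
            apply Real.sqrt_le_sqrt
            have hh : ((N:ℝ) - 2/N)^2 = (N:ℝ)^2 - 4 + 4/(N:ℝ)^2 := by
              field_simp; ring
            rw [hh]
            have : (0:ℝ) < 4/(N:ℝ)^2 := by positivity
            linarith
        _ = (N:ℝ) - 2/N := Real.sqrt_sq hNN
    have hsge1 : (1:ℝ) ≤ Real.sqrt N := by
      rw [show (1:ℝ) = Real.sqrt 1 by simp]
      exact Real.sqrt_le_sqrt (by exact_mod_cast Nat.one_le_of_lt hN2)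
    have hRHS : 0 ≤ 2 * Real.sqrt N - 1 / ((N:ℝ) * Real.sqrt N) := by
      have h1 : 1 / ((N:ℝ) * Real.sqrt N) ≤ 1 := by
        rw [div_le_one (by positivity)]
        have := mul_le_mul (show (1:ℝ) ≤ N by linarith) hsge1 (by norm_num)
          (by positivity)
        linarith
      linarith
    have hsqsq : L ^ 2 ≤ (2 * Real.sqrt N - 1 / ((N:ℝ) * Real.sqrt N)) ^ 2 := by
      have hss : Real.sqrt (N:ℝ) ^ 2 = (N:ℝ) := Real.sq_sqrt (le_of_lt hNpos)
      have hsne : Real.sqrt (N:ℝ) ≠ 0 := ne_of_gt hsqrtN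
      have hq : Real.sqrt (N:ℝ) * (1/((N:ℝ) * Real.sqrt N)) = 1/(N:ℝ) := by
        rw [mul_one_div, mul_comm (N:ℝ), div_mul_eq_div_div, div_self hsne]
      have hexp : (2 * Real.sqrt N - 1 / ((N:ℝ) * Real.sqrt N)) ^ 2
          = 4 * (N:ℝ) - 4 / (N:ℝ) + (1/((N:ℝ) * Real.sqrt N))^2 := by
        linear_combination 4 * hss - 4 * hq
      rw [hLsq, hexp]
      have hqq : (0:ℝ) ≤ (1/((N:ℝ) * Real.sqrt N))^2 := sq_nonneg _
      have h4 : (4:ℝ)/(N:ℝ) = 2*(2/(N:ℝ)) := by ring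
      linarith [hs4, hqq]
    calc L = Real.sqrt (L ^ 2) := (Real.sqrt_sq hLnn).symm
      _ ≤ Real.sqrt ((2 * Real.sqrt N - 1 / ((N:ℝ) * Real.sqrt N)) ^ 2) :=
          Real.sqrt_le_sqrt hsqsq
      _ = _ := Real.sqrt_sq hRHS
  -- assemble
  have hsplit : ∑ i, R i = (∑ i ∈ (univ.erase i₀).erase j₀, R i) + R j₀ + R i₀ := by
    rw [Finset.sum_erase_add _ _ (Finset.mem_erase.mpr ⟨Ne.symm hij, Finset.mem_univ _⟩),
      Finset.sum_erase_add _ _ (Finset.mem_univ _)]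
  have hcard2 : ((univ.erase i₀).erase j₀).card = N - 2 := by
    rw [Finset.card_erase_of_mem (Finset.mem_erase.mpr ⟨Ne.symm hij, Finset.mem_univ _⟩),
      Finset.card_erase_of_mem (Finset.mem_univ _)]
    simp
    omega
  have hrest : ∑ i ∈ (univ.erase i₀).erase j₀, R i ≤ ((N : ℝ) - 2) * Real.sqrt N := by
    calc ∑ i ∈ (univ.erase i₀).erase j₀, R i
        ≤ ((univ.erase i₀).erase j₀).card • Real.sqrt N :=
          Finset.sum_le_card_nsmul _ _ _ (fun i _ => hRle i)
      _ = ((N:ℝ) - 2) * Real.sqrt N := by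
          rw [hcard2, nsmul_eq_mul, Nat.cast_sub hN2]
          norm_num
  have : ∑ i, R i ≤ (N : ℝ) * Real.sqrt N - 1 / ((N : ℝ) * Real.sqrt N) := by
    rw [hsplit]
    have := hkey.trans hbound
    linarith [hrest]
  simpa [hR] using this
end

section
/- Let N be even. If there exists U ∈ O(N) with ||U||₁ > N√N − 1/(N√N), then there exists a Hadamard matrix of order N. -/
open Matrix

set_option maxHeartbeats 2000000 in
/-- Let `N` be even. If some `U ∈ O(N)` satisfies `‖U‖₁ > N√N − 1/(N√N)`, then
there exists a Hadamard matrix of order `N`. -/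
theorem exists_hadamard_of_norm1_gt {N : ℕ} (hN : Even N)
    (hex : ∃ U : Matrix (Fin N) (Fin N) ℝ, U * Uᵀ = 1 ∧
      (N : ℝ) * Real.sqrt N - 1 / ((N : ℝ) * Real.sqrt N) < ∑ i, ∑ j, |U i j|) :
    ∃ H : Matrix (Fin N) (Fin N) ℝ, _root_.IsHadamard H := by
  obtain ⟨U, hU, hnorm⟩ := hex
  rcases Nat.eq_zero_or_pos N with h0 | hpos
  · subst h0
    exact ⟨1, fun i => i.elim0, fun i => i.elim0⟩
  have hNpos : (0:ℝ) < N := by exact_mod_cast hpos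
  set r : ℝ := Real.sqrt N with hr
  have hrpos : 0 < r := Real.sqrt_pos.mpr hNpos
  have hr2 : r ^ 2 = N := Real.sq_sqrt hNpos.le
  -- The sign matrix
  set S : Matrix (Fin N) (Fin N) ℝ := Matrix.of (fun i j => if 0 ≤ U i j then (1:ℝ) else -1)
    with hS
  have hSval : ∀ i j, S i j = 1 ∨ S i j = -1 := by
    intro i j
    by_cases h : 0 ≤ U i j
    · left; simp [hS, h]
    · right; simp [hS, h]
  have hSsq : ∀ i j, S i j * S i j = 1 := by
    intro i j
    rcases hSval i j with h | h <;> rw [h] <;> norm_num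
  have hSU : ∀ i j, S i j * U i j = |U i j| := by
    intro i j
    by_cases h : 0 ≤ U i j
    · simp [hS, h, abs_of_nonneg h]
    · simp [hS, h, abs_of_neg (lt_of_not_ge h)]
  -- C = S * Uᵀ
  set C : Matrix (Fin N) (Fin N) ℝ := S * Uᵀ with hC
  have hCapp : ∀ p k, C p k = ∑ l, S p l * U k l := by
    intro p k
    simp [hC, Matrix.mul_apply, Matrix.transpose_apply]
  have hUtU : Uᵀ * U = 1 := mul_eq_one_comm.mp hU
  have hCCt : C * Cᵀ = S * Sᵀ := by
    rw [hC, Matrix.transpose_mul, Matrix.transpose_transpose, Matrix.mul_assoc,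
      ← Matrix.mul_assoc Uᵀ U Sᵀ, hUtU, Matrix.one_mul]
  have hsum : ∀ p q, ∑ k, C p k * C q k = ∑ k, S p k * S q k := by
    intro p q
    have h1 : (C * Cᵀ) p q = ∑ k, C p k * C q k := by
      simp [Matrix.mul_apply, Matrix.transpose_apply]
    have h2 : (S * Sᵀ) p q = ∑ k, S p k * S q k := by
      simp [Matrix.mul_apply, Matrix.transpose_apply]
    rw [← h1, ← h2, hCCt]
  -- row norms of C
  have hrowsq : ∀ p, ∑ k, C p k ^ 2 = N := by
    intro p
    have h := hsum p p
    simp only [← pow_two] at h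
    rw [h]
    have h1 : ∀ k, S p k ^ 2 = 1 := fun k => by rw [pow_two]; exact hSsq p k
    rw [Finset.sum_congr rfl fun k _ => h1 k]
    simp
  -- diagonal entries of C
  have hdiag : ∀ p, C p p = ∑ l, |U p l| := by
    intro p
    rw [hCapp]
    exact Finset.sum_congr rfl fun l _ => hSU p l
  have hdiag_nonneg : ∀ p, 0 ≤ C p p := by
    intro p
    rw [hdiag]
    exact Finset.sum_nonneg fun l _ => abs_nonneg _
  -- row norms of U are 1
  have hUrow : ∀ p, ∑ l, U p l ^ 2 = 1 := by
    intro p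
    have h1 : (U * Uᵀ) p p = ∑ l, U p l * U p l := by
      simp [Matrix.mul_apply, Matrix.transpose_apply]
    rw [hU] at h1
    simp only [Matrix.one_apply_eq] at h1
    simp only [← pow_two] at h1
    exact h1.symm
  -- diagonal entries are at most √N
  have hdiag_le : ∀ p, C p p ≤ r := by
    intro p
    have hcs := Finset.sum_mul_sq_le_sq_mul_sq Finset.univ (fun _ : Fin N => (1:ℝ))
      (fun l => |U p l|)
    simp only [one_mul, one_pow, sq_abs] at hcs
    rw [hUrow p] at hcs
    simp only [Finset.sum_const, Finset.card_univ, Fintype.card_fin, nsmul_eq_mul,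
      mul_one] at hcs
    have h2 : C p p ^ 2 ≤ N := by rw [hdiag]; exact hcs
    calc C p p = Real.sqrt (C p p ^ 2) := (Real.sqrt_sq (hdiag_nonneg p)).symm
      _ ≤ Real.sqrt N := Real.sqrt_le_sqrt h2
      _ = r := rfl
  -- the defect D
  set D : ℝ := (N:ℝ) * r - ∑ p, C p p with hD
  have htrace : ∑ p, C p p = ∑ i, ∑ j, |U i j| := Finset.sum_congr rfl fun p _ => hdiag p
  have hDlt : D < 1 / ((N:ℝ) * r) := by
    rw [hD, htrace]
    linarith [hnorm]
  have hDsum : D = ∑ p, (r - C p p) := by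
    rw [hD, Finset.sum_sub_distrib]
    simp [Finset.sum_const, mul_comm]
  -- main orthogonality claim
  refine ⟨S, hSval, fun i j hij => ?_⟩
  by_contra hG
  set G : ℝ := ∑ k, S i k * S j k with hGdef
  -- G is the real image of an even integer
  obtain ⟨z, hzG, hzmod⟩ : ∃ z : ℤ, (z : ℝ) = G ∧ z % 2 = (N : ℤ) % 2 := by
    refine ⟨∑ k : Fin N, (if 0 ≤ U i k then (1:ℤ) else -1) * (if 0 ≤ U j k then (1:ℤ) else -1),
      ?_, ?_⟩
    · rw [hGdef]
      push_cast
      refine Finset.sum_congr rfl fun k _ => ?_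
      by_cases h1 : 0 ≤ U i k <;> by_cases h2 : 0 ≤ U j k <;> simp [hS, h1, h2]
    · have hone : ∀ k : Fin N, ((if 0 ≤ U i k then (1:ℤ) else -1) *
          (if 0 ≤ U j k then (1:ℤ) else -1)) % 2 = 1 := by
        intro k
        by_cases h1 : 0 ≤ U i k <;> by_cases h2 : 0 ≤ U j k <;> simp [h1, h2]
      have h1 := Finset.sum_int_mod Finset.univ 2
        (fun k : Fin N => (if 0 ≤ U i k then (1:ℤ) else -1) * (if 0 ≤ U j k then (1:ℤ) else -1))
      rw [Finset.sum_congr rfl fun k _ => hone k] at h1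
      simp only [Finset.sum_const, Finset.card_univ, Fintype.card_fin, nsmul_eq_mul,
        smul_eq_mul, mul_one] at h1
      omega
  have hzne : z ≠ 0 := by
    intro h
    rw [h] at hzG
    exact hG (by simpa using hzG.symm)
  have hzeven : (2:ℤ) ∣ z := by
    obtain ⟨m, hm⟩ := hN
    omega
  have hz2 : (2:ℤ) ≤ |z| := by
    have : (2:ℤ) ∣ |z| := (dvd_abs 2 z).mpr hzeven
    exact Int.le_of_dvd (abs_pos.mpr hzne) this
  have hG2 : (2:ℝ) ≤ |G| := by
    rw [← hzG, ← Int.cast_abs]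
    exact_mod_cast hz2
  -- Now the analytic bound |G| < 2
  have hGC : G = ∑ k, C i k * C j k := (hsum i j).symm
  -- split off the k = i term
  have hsplit : G = C i i * C j i + ∑ k ∈ Finset.univ.erase i, C i k * C j k := by
    rw [hGC, ← Finset.add_sum_erase _ _ (Finset.mem_univ i)]
  set T : ℝ := ∑ k ∈ Finset.univ.erase i, C i k * C j k with hT
  have herase_i : ∑ k ∈ Finset.univ.erase i, C i k ^ 2 = (N:ℝ) - C i i ^ 2 := by
    have h := Finset.add_sum_erase Finset.univ (fun k => C i k ^ 2) (Finset.mem_univ i)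
    rw [hrowsq i] at h
    linarith
  have herase_j_le : ∑ k ∈ Finset.univ.erase i, C j k ^ 2 ≤ (N:ℝ) := by
    rw [← hrowsq j]
    exact Finset.sum_le_sum_of_subset_of_nonneg (Finset.subset_univ _)
      (fun k _ _ => sq_nonneg _)
  have hx_nonneg : (0:ℝ) ≤ (N:ℝ) - C i i ^ 2 := by
    rw [← herase_i]
    exact Finset.sum_nonneg fun k _ => sq_nonneg _
  have hTsq : T ^ 2 ≤ ((N:ℝ) - C i i ^ 2) * N := by
    calc T ^ 2 ≤ (∑ k ∈ Finset.univ.erase i, C i k ^ 2) *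
          ∑ k ∈ Finset.univ.erase i, C j k ^ 2 :=
          Finset.sum_mul_sq_le_sq_mul_sq _ _ _
      _ ≤ ((N:ℝ) - C i i ^ 2) * N := by
          rw [herase_i]
          exact mul_le_mul_of_nonneg_left herase_j_le hx_nonneg
  have hTle : |T| ≤ Real.sqrt ((N:ℝ) - C i i ^ 2) * r := by
    have h1 : |T| = Real.sqrt (T ^ 2) := (Real.sqrt_sq_eq_abs T).symm
    rw [h1, hr]
    rw [← Real.sqrt_mul hx_nonneg]
    exact Real.sqrt_le_sqrt hTsq
  -- |C j i| ≤ √(N - C j j ^ 2)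
  have hji_sq : C j i ^ 2 ≤ (N:ℝ) - C j j ^ 2 := by
    have hpair : C j j ^ 2 + C j i ^ 2 ≤ ∑ k, C j k ^ 2 := by
      have hsub : ({j, i} : Finset (Fin N)) ⊆ Finset.univ := Finset.subset_univ _
      have := Finset.sum_le_sum_of_subset_of_nonneg hsub
        (fun k _ _ => sq_nonneg (C j k))
      rwa [Finset.sum_pair (Ne.symm hij)] at this
    rw [hrowsq j] at hpair
    linarith
  have hy_nonneg : (0:ℝ) ≤ (N:ℝ) - C j j ^ 2 := le_trans (sq_nonneg _) hji_sq
  have hji_le : |C j i| ≤ Real.sqrt ((N:ℝ) - C j j ^ 2) := by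
    rw [← Real.sqrt_sq_eq_abs]
    exact Real.sqrt_le_sqrt hji_sq
  -- first term bound
  have hfirst : |C i i * C j i| ≤ r * Real.sqrt ((N:ℝ) - C j j ^ 2) := by
    rw [abs_mul]
    exact mul_le_mul (by rw [abs_of_nonneg (hdiag_nonneg i)]; exact hdiag_le i)
      hji_le (abs_nonneg _) hrpos.le
  -- combine
  obtain ⟨x, hxdef⟩ : ∃ v : ℝ, v = (N:ℝ) - C i i ^ 2 := ⟨_, rfl⟩
  obtain ⟨y, hydef⟩ : ∃ v : ℝ, v = (N:ℝ) - C j j ^ 2 := ⟨_, rfl⟩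
  rw [← hxdef] at hx_nonneg hTle
  rw [← hydef] at hy_nonneg hfirst
  have hGabs : |G| ≤ r * (Real.sqrt x + Real.sqrt y) := by
    calc |G| ≤ |C i i * C j i| + |T| := by
          rw [hsplit]; exact abs_add_le _ _
      _ ≤ r * Real.sqrt y + Real.sqrt x * r := add_le_add hfirst hTle
      _ = r * (Real.sqrt x + Real.sqrt y) := by ring
  -- bound x + y via D
  have hxb : x ≤ 2 * r * (r - C i i) := by
    rw [hxdef]
    nlinarith [hr2, sq_nonneg (r - C i i)]
  have hyb : y ≤ 2 * r * (r - C j j) := by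
    rw [hydef]
    nlinarith [hr2, sq_nonneg (r - C j j)]
  have hab_le_D : (r - C i i) + (r - C j j) ≤ D := by
    rw [hDsum]
    have hsub : ({i, j} : Finset (Fin N)) ⊆ Finset.univ := Finset.subset_univ _
    have hnn : ∀ p ∈ Finset.univ, p ∉ ({i, j} : Finset (Fin N)) → 0 ≤ r - C p p :=
      fun p _ _ => by linarith [hdiag_le p]
    have := Finset.sum_le_sum_of_subset_of_nonneg hsub hnn
    rwa [Finset.sum_pair hij] at this
  have hxy : x + y < 2 / N := by
    have h1 : x + y ≤ 2 * r * D := by nlinarith [hxb, hyb, hab_le_D, hrpos]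
    have h2 : 2 * r * D < 2 * r * (1 / ((N:ℝ) * r)) := by
      apply mul_lt_mul_of_pos_left hDlt (by positivity)
    have h3 : 2 * r * (1 / ((N:ℝ) * r)) = 2 / N := by
      have hNne : (N:ℝ) ≠ 0 := ne_of_gt hNpos
      have hrne : r ≠ 0 := ne_of_gt hrpos
      field_simp
    exact lt_of_le_of_lt h1 (h3 ▸ h2)
  -- √x + √y ≤ √(2(x+y))
  have hsqrtsum : Real.sqrt x + Real.sqrt y ≤ Real.sqrt (2 * (x + y)) := by
    have h1 : (Real.sqrt x + Real.sqrt y) ^ 2 ≤ 2 * (x + y) := by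
      have hsx : Real.sqrt x ^ 2 = x := Real.sq_sqrt hx_nonneg
      have hsy : Real.sqrt y ^ 2 = y := Real.sq_sqrt hy_nonneg
      nlinarith [sq_nonneg (Real.sqrt x - Real.sqrt y), Real.sqrt_nonneg x,
        Real.sqrt_nonneg y]
    calc Real.sqrt x + Real.sqrt y
        = Real.sqrt ((Real.sqrt x + Real.sqrt y) ^ 2) := by
          rw [Real.sqrt_sq (by positivity)]
      _ ≤ Real.sqrt (2 * (x + y)) := Real.sqrt_le_sqrt h1
  have hfinal : |G| < 2 := by
    have h1 : Real.sqrt (2 * (x + y)) < Real.sqrt (4 / N) := by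
      apply Real.sqrt_lt_sqrt (by positivity)
      have h44 : (4:ℝ) / N = 2 * (2 / N) := by ring
      linarith
    have h4 : Real.sqrt (4 / N) = 2 / r := by
      have : (4:ℝ) / N = (2 / r) ^ 2 := by
        rw [div_pow, hr2]
        norm_num
      rw [this, Real.sqrt_sq (by positivity)]
    have h5 : r * (2 / r) = 2 := by field_simp
    calc |G| ≤ r * (Real.sqrt x + Real.sqrt y) := hGabs
      _ ≤ r * Real.sqrt (2 * (x + y)) := by
          exact mul_le_mul_of_nonneg_left hsqrtsum hrpos.le
      _ < r * (2 / r) := by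
          rw [← h4]
          exact mul_lt_mul_of_pos_left (h4 ▸ h1) hrpos
      _ = 2 := h5
  linarith [hG2, hfinal]
end

section
/- Let S^{N−1} ⊂ ℝ^N be the unit sphere equipped with the uniform probability measure, and let k_1, …, k_p ∈ ℕ with p ≤ N. Then ∫_{S^{N−1}} |x_1^{k_1} ⋯ x_p^{k_p}| dx = (2/π)^{Σ} · D(N−1)·D(k_1)⋯D(k_p) / D(N + k_1 + ⋯ + k_p − 1), where D(m) = (m−1)(m−3)(m−5)⋯ (the product ending at 2 if m is odd and at 1 if m is even, with D(0) = D(1) = 1), and Σ = ⌊odds/2⌋ if N is odd and Σ = ⌊(odds+1)/2⌋ if N is even, 'odds' being the number of odd integers among k_1, …, k_p. -/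
open MeasureTheory Metric

/-- The uniform probability measure on the unit sphere of `ℝᴺ`. -/
noncomputable def sphereUniform (N : ℕ) :
    Measure (sphere (0 : EuclideanSpace ℝ (Fin N)) 1) :=
  ((volume : Measure (EuclideanSpace ℝ (Fin N))).toSphere Set.univ)⁻¹ •
    (volume : Measure (EuclideanSpace ℝ (Fin N))).toSphere

/-- The modified double factorial `D(m) = (m−1)(m−3)(m−5)⋯`, the product ending
at `2` if `m` is odd and at `1` if `m` is even, with `D(0) = D(1) = 1`. -/
def modDoubleFactorial : ℕ → ℕ
  | 0 => 1
  | 1 => 1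
  | (n + 2) => (n + 1) * modDoubleFactorial n

namespace SphereMomentAux

open Set Real Finset

lemma mdf_pos : ∀ m, 0 < modDoubleFactorial m
  | 0 => one_pos
  | 1 => one_pos
  | (n + 2) => mul_pos n.succ_pos (mdf_pos n)

lemma gamma_half : ∀ m : ℕ, Real.Gamma ((m + 1) / 2) =
    (modDoubleFactorial m : ℝ) * Real.sqrt π ^ (if Even m then 1 else 0) / 2 ^ (m / 2)
  | 0 => by
      rw [show (((0:ℕ):ℝ) + 1) / 2 = 1 / 2 by norm_num, Real.Gamma_one_half_eq]
      simp [modDoubleFactorial]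
  | 1 => by norm_num [modDoubleFactorial, Real.Gamma_one]
  | (m + 2) => by
      have ih := gamma_half m
      have h1 : ((m : ℝ) + 2 + 1) / 2 = (m + 1) / 2 + 1 := by ring
      have h2 : ((m : ℝ) + 1) / 2 ≠ 0 := by positivity
      have h3 : (m + 2) / 2 = m / 2 + 1 := by omega
      have h4 : Even (m + 2) ↔ Even m := by simp [parity_simps]
      rw [show (((m : ℕ) + 2 : ℕ) : ℝ) = (m : ℝ) + 2 by push_cast; ring] at *
      rw [h1, Real.Gamma_add_one h2, ih, modDoubleFactorial, h3]
      push_cast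
      rw [if_congr h4 rfl rfl, pow_succ]
      field_simp

lemma int_Ioi_pow_exp (m : ℕ) :
    ∫ t in Ioi (0:ℝ), t ^ m * Real.exp (-t ^ 2) = Real.Gamma ((m + 1) / 2) / 2 := by
  have h := integral_rpow_mul_exp_neg_rpow (p := 2) (q := m) two_pos
    (by have := Nat.cast_nonneg (α := ℝ) m; linarith : (-1:ℝ) < (m:ℝ))
  rw [show Real.Gamma (((m:ℝ) + 1) / 2) / 2 = 1 / 2 * Real.Gamma (((m:ℝ) + 1) / 2) by ring, ← h]
  refine setIntegral_congr_fun measurableSet_Ioi fun x hx => ?_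
  rw [Real.rpow_natCast, show (2:ℝ) = ((2:ℕ):ℝ) by norm_num, Real.rpow_natCast]

lemma int_abs_pow_exp (m : ℕ) :
    ∫ t : ℝ, |t| ^ m * Real.exp (-t ^ 2) = Real.Gamma ((m + 1) / 2) := by
  have : ∀ t : ℝ, |t| ^ m * Real.exp (-t ^ 2) =
      (fun u : ℝ => u ^ m * Real.exp (-u ^ 2)) |t| := by
    intro t; simp [sq_abs]
  simp_rw [this]
  rw [integral_comp_abs (f := fun u : ℝ => u ^ m * Real.exp (-u ^ 2)), int_Ioi_pow_exp]
  ring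

variable {N p : ℕ}

def kpad (hp : p ≤ N) (k : Fin p → ℕ) : Fin N → ℕ :=
  fun j => if h : (j : ℕ) < p then k ⟨j, h⟩ else 0

lemma mem_castLE_image (hp : p ≤ N) (j : Fin N) :
    j ∈ Finset.image (Fin.castLE hp) Finset.univ ↔ (j : ℕ) < p := by
  simp only [Finset.mem_image, Finset.mem_univ, true_and]
  constructor
  · rintro ⟨i, rfl⟩; exact i.isLt
  · intro h; exact ⟨⟨j, h⟩, rfl⟩

lemma kpad_castLE (hp : p ≤ N) (k : Fin p → ℕ) (i : Fin p) :
    kpad hp k (Fin.castLE hp i) = k i := by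
  simp [kpad, i.isLt]

lemma prod_kpad_gen (hp : p ≤ N) (k : Fin p → ℕ) (F : Fin N → ℕ → ℝ) :
    ∏ j : Fin N, F j (kpad hp k j) =
      (∏ i : Fin p, F (Fin.castLE hp i) (k i)) *
        ∏ j ∈ (Finset.image (Fin.castLE hp) Finset.univ)ᶜ, F j 0 := by
  rw [← Finset.prod_mul_prod_compl (Finset.image (Fin.castLE hp) Finset.univ)
    (fun j => F j (kpad hp k j))]
  congr 1
  · rw [Finset.prod_image (fun a _ b _ h => Fin.castLE_injective hp h)]
    exact Finset.prod_congr rfl fun i _ => by rw [kpad_castLE]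
  · refine Finset.prod_congr rfl fun j hj => ?_
    rw [Finset.mem_compl, mem_castLE_image] at hj
    simp [kpad, hj]

lemma card_compl_castLE (hp : p ≤ N) :
    ((Finset.image (Fin.castLE hp) Finset.univ)ᶜ : Finset (Fin N)).card = N - p := by
  rw [Finset.card_compl, Finset.card_image_of_injective _ (Fin.castLE_injective hp)]
  simp

lemma prod_kpad (hp : p ≤ N) (k : Fin p → ℕ) (g : ℕ → ℝ) :
    ∏ j : Fin N, g (kpad hp k j) = (∏ i : Fin p, g (k i)) * g 0 ^ (N - p) := by
  rw [prod_kpad_gen hp k (fun _ m => g m), Finset.prod_const, card_compl_castLE hp]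

lemma pi_side (hp : p ≤ N) (k : Fin p → ℕ) :
    ∫ x : EuclideanSpace ℝ (Fin N),
        (∏ i : Fin p, |x (Fin.castLE hp i)| ^ k i) * Real.exp (-‖x‖ ^ 2) =
      ∏ j : Fin N, ∫ t : ℝ, |t| ^ (kpad hp k j) * Real.exp (-t ^ 2) := by
  rw [← ((EuclideanSpace.volume_preserving_symm_measurableEquiv_toLp (Fin N)).symm).integral_comp
    (MeasurableEquiv.measurableEmbedding _) _]
  rw [← MeasureTheory.integral_fintype_prod_eq_prod
    (fun j (t : ℝ) => |t| ^ (kpad hp k j) * Real.exp (-t ^ 2))]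
  refine integral_congr_ae (Filter.EventuallyEq.of_eq (funext fun y => ?_))
  have hcoord : ∀ j : Fin N,
      ((MeasurableEquiv.toLp 2 (Fin N → ℝ)) y) j = y j := fun j => rfl
  have hnorm : ‖(MeasurableEquiv.toLp 2 (Fin N → ℝ)) y‖ ^ 2 = ∑ j, y j ^ 2 := by
    rw [EuclideanSpace.norm_eq]
    rw [Real.sq_sqrt (by positivity)]
    exact Finset.sum_congr rfl fun j _ => by
      rw [hcoord]; exact Real.norm_eq_abs (y j) ▸ sq_abs (y j)
  simp only [MeasurableEquiv.symm_symm, hcoord, hnorm]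
  rw [← Finset.sum_neg_distrib, Real.exp_sum, show (∏ i : Fin p, |y (Fin.castLE hp i)| ^ k i)
      = ∏ j : Fin N, |y j| ^ (kpad hp k j) from ?_, ← Finset.prod_mul_distrib]
  · rw [← Finset.prod_subset (Finset.subset_univ (Finset.image (Fin.castLE hp) Finset.univ))]
    · rw [Finset.prod_image (fun a _ b _ h => Fin.castLE_injective hp h)]
      refine Finset.prod_congr rfl fun i _ => ?_
      congr 1
      simp [kpad, i.isLt]
    · intro j _ hj
      have : ¬ ((j : ℕ) < p) := by
        intro h
        exact hj (Finset.mem_image.2 ⟨⟨j, h⟩, Finset.mem_univ _, rfl⟩)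
      simp [kpad, this]

lemma radial (hN : 1 ≤ N) (K : ℕ) :
    (∫ r : Ioi (0:ℝ), (r : ℝ) ^ K * Real.exp (-(r:ℝ) ^ 2)
      ∂(Measure.volumeIoiPow (N - 1))) = Real.Gamma ((N + K) / 2) / 2 := by
  rw [Measure.volumeIoiPow]
  simp only [ENNReal.ofReal]
  rw [integral_withDensity_eq_integral_smul
    ((measurable_subtype_coe.pow_const _).real_toNNReal) _,
    integral_subtype_comap measurableSet_Ioi
      (fun a : ℝ => Real.toNNReal (a ^ (N - 1)) • (a ^ K * Real.exp (-a ^ 2)))]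
  rw [setIntegral_congr_fun measurableSet_Ioi
    (g := fun a : ℝ => a ^ (N + K - 1) * Real.exp (-a ^ 2)) (fun x hx => ?_)]
  · rw [int_Ioi_pow_exp]
    congr 2
    have : (N + K - 1 : ℕ) = (N - 1) + K := by omega
    rw [this]
    push_cast [Nat.cast_sub hN]
    ring
  · rw [NNReal.smul_def, Real.coe_toNNReal _ (pow_nonneg hx.out.le _), smul_eq_mul, ← mul_assoc,
      ← pow_add]
    congr 2
    omega

lemma polar_side (hN : 1 ≤ N) (hp : p ≤ N) (k : Fin p → ℕ) :
    ∫ x : EuclideanSpace ℝ (Fin N),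
        (∏ i : Fin p, |x (Fin.castLE hp i)| ^ k i) * Real.exp (-‖x‖ ^ 2) =
      (∫ ω : sphere (0 : EuclideanSpace ℝ (Fin N)) 1,
          ∏ i : Fin p, |(ω : EuclideanSpace ℝ (Fin N)) (Fin.castLE hp i)| ^ k i
          ∂(volume : Measure (EuclideanSpace ℝ (Fin N))).toSphere) *
        ∫ r : Ioi (0:ℝ), (r : ℝ) ^ (∑ i, k i) * Real.exp (-(r:ℝ) ^ 2)
          ∂(Measure.volumeIoiPow (N - 1)) := by
  haveI : Nonempty (Fin N) := ⟨⟨0, hN⟩⟩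
  haveI : Nontrivial (EuclideanSpace ℝ (Fin N)) := by infer_instance
  have hdim : Module.finrank ℝ (EuclideanSpace ℝ (Fin N)) = N := finrank_euclideanSpace_fin
  set E := EuclideanSpace ℝ (Fin N) with hE
  set F : sphere (0 : E) 1 → ℝ :=
    fun ω => ∏ i : Fin p, |(ω : E) (Fin.castLE hp i)| ^ k i with hF
  set K := ∑ i, k i with hK
  have mp := (volume : Measure E).measurePreserving_homeomorphUnitSphereProd
  rw [hdim] at mp
  rw [← integral_prod_mul F (fun r : Ioi (0:ℝ) => (r : ℝ) ^ K * Real.exp (-(r:ℝ) ^ 2)),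
    ← mp.integral_comp (Homeomorph.measurableEmbedding _)
      (fun z : sphere (0 : E) 1 × Ioi (0:ℝ) => F z.1 * ((z.2 : ℝ) ^ K * Real.exp (-(z.2:ℝ) ^ 2)))]
  conv_lhs => rw [← MeasureTheory.restrict_compl_singleton (μ := (volume : Measure E)) (0:E),
    ← integral_subtype_comap (measurableSet_singleton (0:E)).compl
      (fun x : E => (∏ i : Fin p, |x (Fin.castLE hp i)| ^ k i) * Real.exp (-‖x‖ ^ 2))]
  refine integral_congr_ae (Filter.EventuallyEq.of_eq (funext fun x => ?_))
  have hx0 : (x : E) ≠ 0 := x.2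
  have hn : ‖(x : E)‖ ≠ 0 := norm_ne_zero_iff.2 hx0
  show (∏ i : Fin p, |(x : E) (Fin.castLE hp i)| ^ k i) * Real.exp (-‖(x:E)‖ ^ 2) = _
  simp only [homeomorphUnitSphereProd_apply_fst_coe, homeomorphUnitSphereProd_apply_snd_coe, hF]
  have hcoord : ∀ j : Fin N, ((‖(x:E)‖⁻¹ • (x:E)) : E) j = ‖(x:E)‖⁻¹ * (x:E) j := fun j => rfl
  simp only [hcoord, smul_eq_mul, abs_mul, mul_pow, Finset.prod_mul_distrib,
    abs_inv, abs_norm, Finset.prod_pow_eq_pow_sum, ← hK, inv_pow]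
  field_simp
  simp only [abs_norm, one_div, Finset.prod_inv_distrib, Finset.prod_pow_eq_pow_sum, ← hK]
  field_simp
  rw [show |‖(x:E)‖| = ‖(x:E)‖ from abs_of_nonneg (norm_nonneg (E := EuclideanSpace ℝ (Fin N)) _)]

lemma moment_toSphere (hN : 1 ≤ N) (hp : p ≤ N) (k : Fin p → ℕ) :
    (∫ ω : sphere (0 : EuclideanSpace ℝ (Fin N)) 1,
        ∏ i : Fin p, |(ω : EuclideanSpace ℝ (Fin N)) (Fin.castLE hp i)| ^ k i
        ∂(volume : Measure (EuclideanSpace ℝ (Fin N))).toSphere) *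
      (Real.Gamma (((N : ℝ) + (∑ i : Fin p, k i : ℕ)) / 2) / 2) =
    (∏ i : Fin p, Real.Gamma ((k i + 1) / 2)) * Real.sqrt π ^ (N - p) := by
  have h1 := polar_side hN hp k
  rw [radial hN (∑ i, k i)] at h1
  rw [← h1, pi_side hp k]
  simp_rw [int_abs_pow_exp]
  have hpk := prod_kpad hp k (fun m : ℕ => Real.Gamma (((m : ℝ) + 1) / 2))
  rw [hpk]
  congr 1
  rw [show ((0:ℕ):ℝ) + 1 = 1 by norm_num, Real.Gamma_one_half_eq]

lemma sphere_mass (hN : 1 ≤ N) :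
    ((volume : Measure (EuclideanSpace ℝ (Fin N))).toSphere Set.univ).toReal *
      (Real.Gamma ((N : ℝ) / 2) / 2) = Real.sqrt π ^ N := by
  have h := moment_toSphere hN (Nat.zero_le N) (Fin.elim0)
  simpa [measureReal_def] using h

lemma arith (hN : 1 ≤ N) (hp : p ≤ N) (k : Fin p → ℕ) :
    Real.Gamma (N / 2) * (∏ i : Fin p, Real.Gamma ((k i + 1) / 2)) /
        (Real.sqrt π ^ p * Real.Gamma ((N + ∑ i : Fin p, k i) / 2)) =
      (2 / Real.pi) ^
          (if Odd N then (Finset.univ.filter fun i : Fin p => Odd (k i)).card / 2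
            else ((Finset.univ.filter fun i : Fin p => Odd (k i)).card + 1) / 2) *
        ((modDoubleFactorial (N - 1) : ℝ) * ∏ i : Fin p, (modDoubleFactorial (k i) : ℝ)) /
        (modDoubleFactorial (N + ∑ i : Fin p, k i - 1) : ℝ) := by
  set K := ∑ i : Fin p, k i with hKdef
  set odds := (Finset.univ.filter fun i : Fin p => Odd (k i)).card with hodds
  set σ := (if Odd N then odds / 2 else (odds + 1) / 2) with hσ
  set s := Real.sqrt π with hs
  have hspos : 0 < s := Real.sqrt_pos.2 Real.pi_pos
  have hs2 : s ^ 2 = π := Real.sq_sqrt Real.pi_pos.le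
  set t := ∑ i : Fin p, (k i / 2) with ht
  set Ev := ∑ i : Fin p, (if Even (k i) then 1 else 0) with hEv
  have hcf : (Finset.univ.filter fun i : Fin p => Odd (k i)).card
      = ∑ i : Fin p, (if Odd (k i) then 1 else 0) := Finset.card_filter _ _
  have hE : Ev + odds = p := by
    rw [hEv, hodds, hcf, ← Finset.sum_add_distrib]
    have : ∀ i : Fin p, ((if Even (k i) then 1 else 0) + (if Odd (k i) then 1 else 0)) = 1 := by
      intro i
      rcases Nat.even_or_odd (k i) with h | h
      · rw [if_pos h, if_neg (by simpa [Nat.not_odd_iff_even] using h)]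
      · rw [if_neg (by simpa [Nat.not_even_iff_odd] using h), if_pos h]
    simp [this]
  have hK : K = 2 * t + odds := by
    rw [hKdef, hodds, hcf, ht, Finset.mul_sum, ← Finset.sum_add_distrib]
    refine Finset.sum_congr rfl fun i _ => ?_
    rcases Nat.even_or_odd (k i) with h | h
    · rw [if_neg (by simpa [Nat.not_odd_iff_even] using h)]
      have := Nat.even_iff.1 h; omega
    · rw [if_pos h]
      have := Nat.odd_iff.1 h; omega
  have ifc : ∀ m : ℕ, (if Even m then 1 else 0) = 1 - m % 2 := by
    intro m
    rcases Nat.even_or_odd m with h | h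
    · rw [if_pos h, Nat.even_iff.1 h]
    · rw [if_neg (by simpa [Nat.not_even_iff_odd] using h), Nat.odd_iff.1 h]
  have hσ' : N % 2 = 1 ∧ σ = odds / 2 ∨ N % 2 = 0 ∧ σ = (odds + 1) / 2 := by
    rw [hσ]
    rcases Nat.even_or_odd N with h | h
    · right; rw [if_neg (by simpa [Nat.not_odd_iff_even] using h)]
      exact ⟨Nat.even_iff.1 h, rfl⟩
    · left; rw [if_pos h]; exact ⟨Nat.odd_iff.1 h, rfl⟩
  have h1 : (N + K - 1) / 2 = (N - 1) / 2 + t + σ := by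
    rcases hσ' with ⟨h2, h3⟩ | ⟨h2, h3⟩ <;> omega
  have h2 : (if Even (N - 1) then 1 else 0) + Ev + 2 * σ
      = p + (if Even (N + K - 1) then 1 else 0) := by
    rw [ifc, ifc]
    rcases hσ' with ⟨h2, h3⟩ | ⟨h2, h3⟩ <;> omega
  set a1 : ℕ := (if Even (N - 1) then 1 else 0) with ha1
  set a2 : ℕ := (if Even (N + K - 1) then 1 else 0) with ha2
  have gN : Real.Gamma ((N : ℝ) / 2) =
      (modDoubleFactorial (N - 1) : ℝ) * s ^ a1 / 2 ^ ((N - 1) / 2) := by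
    have h := gamma_half (N - 1)
    rw [← ha1] at h
    rw [show (((N - 1 : ℕ) : ℝ) + 1) / 2 = (N : ℝ) / 2 by
      rw [Nat.cast_sub hN]; push_cast; ring] at h
    exact h
  have gT : Real.Gamma (((N : ℝ) + (K : ℝ)) / 2) =
      (modDoubleFactorial (N + K - 1) : ℝ) * s ^ a2 / 2 ^ ((N + K - 1) / 2) := by
    have h := gamma_half (N + K - 1)
    rw [← ha2] at h
    rw [show (((N + K - 1 : ℕ) : ℝ) + 1) / 2 = ((N : ℝ) + (K : ℝ)) / 2 by
      rw [Nat.cast_sub (by omega : 1 ≤ N + K)]; push_cast; ring] at h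
    exact h
  have gP : (∏ i : Fin p, Real.Gamma ((k i + 1) / 2)) =
      (∏ i : Fin p, (modDoubleFactorial (k i) : ℝ)) * s ^ Ev / 2 ^ t := by
    rw [Finset.prod_congr rfl (fun i _ => gamma_half (k i)), Finset.prod_div_distrib,
      Finset.prod_mul_distrib, Finset.prod_pow_eq_pow_sum, Finset.prod_pow_eq_pow_sum,
      ← hEv, ← ht]
  rw [gN, gT, gP, h1]
  have hD1 : (0:ℝ) < (modDoubleFactorial (N - 1) : ℝ) := by exact_mod_cast mdf_pos _
  have hD2 : (0:ℝ) < (modDoubleFactorial (N + K - 1) : ℝ) := by exact_mod_cast mdf_pos _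
  have hD3 : (0:ℝ) < ∏ i : Fin p, (modDoubleFactorial (k i) : ℝ) :=
    Finset.prod_pos fun i _ => by exact_mod_cast mdf_pos _
  have hsE : s ^ a1 * s ^ Ev * s ^ (2 * σ) = s ^ p * s ^ a2 := by
    rw [← pow_add, ← pow_add, ← pow_add, h2]
  have hπ : (2 / Real.pi) ^ σ = 2 ^ σ / s ^ (2 * σ) := by
    rw [div_pow, ← hs2, ← pow_mul]
  rw [hπ, pow_add, pow_add]
  field_simp
  linear_combination hsE

end SphereMomentAux

open SphereMomentAux Real in
/-- For `p ≤ N` and `k₁, …, k_p ∈ ℕ`, the moment `∫_{S^{N−1}} |x₁^{k₁} ⋯ x_p^{k_p}| dx`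
with respect to the uniform probability measure equals
`(2/π)^Σ · D(N−1)·D(k₁)⋯D(k_p) / D(N + k₁ + ⋯ + k_p − 1)`, where
`Σ = ⌊odds/2⌋` if `N` is odd and `Σ = ⌊(odds+1)/2⌋` if `N` is even, `odds` being
the number of odd integers among `k₁, …, k_p`. -/
theorem sphere_moment_formula {N p : ℕ} (hN : 1 ≤ N) (hp : p ≤ N) (k : Fin p → ℕ) :
    (∫ x : sphere (0 : EuclideanSpace ℝ (Fin N)) 1,
        |∏ i : Fin p, ((x : EuclideanSpace ℝ (Fin N)) (Fin.castLE hp i)) ^ k i|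
        ∂(sphereUniform N)) =
      (2 / Real.pi) ^
          (if Odd N then (Finset.univ.filter fun i : Fin p => Odd (k i)).card / 2
            else ((Finset.univ.filter fun i : Fin p => Odd (k i)).card + 1) / 2) *
        ((modDoubleFactorial (N - 1) : ℝ) * ∏ i : Fin p, (modDoubleFactorial (k i) : ℝ)) /
        (modDoubleFactorial (N + ∑ i : Fin p, k i - 1) : ℝ) := by
  have hsum : (fun x : sphere (0 : EuclideanSpace ℝ (Fin N)) 1 =>
      |∏ i : Fin p, ((x : EuclideanSpace ℝ (Fin N)) (Fin.castLE hp i)) ^ k i|)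
      = fun x : sphere (0 : EuclideanSpace ℝ (Fin N)) 1 =>
        ∏ i : Fin p, |(x : EuclideanSpace ℝ (Fin N)) (Fin.castLE hp i)| ^ k i := by
    funext x
    rw [Finset.abs_prod]
    exact Finset.prod_congr rfl fun i _ => abs_pow _ _
  unfold sphereUniform
  rw [integral_smul_measure, ENNReal.toReal_inv, hsum]
  have hmass := sphere_mass (N := N) hN
  have hmom := moment_toSphere hN hp k
  have hNpos : (0:ℝ) < N := by exact_mod_cast hN
  have hG1 : 0 < Real.Gamma ((N:ℝ) / 2) := Real.Gamma_pos_of_pos (by positivity)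
  have hG2 : 0 < Real.Gamma (((N : ℝ) + (∑ i : Fin p, k i : ℕ)) / 2) :=
    Real.Gamma_pos_of_pos (by positivity)
  have hspos : 0 < Real.sqrt π := Real.sqrt_pos.2 Real.pi_pos
  rw [← arith hN hp k]
  have hc : ((volume : Measure (EuclideanSpace ℝ (Fin N))).toSphere Set.univ).toReal
      = Real.sqrt π ^ N * 2 / Real.Gamma ((N:ℝ) / 2) := by
    rw [eq_div_iff hG1.ne']
    linear_combination 2 * hmass
  have hFi : (∫ ω : sphere (0 : EuclideanSpace ℝ (Fin N)) 1,
        ∏ i : Fin p, |(ω : EuclideanSpace ℝ (Fin N)) (Fin.castLE hp i)| ^ k i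
        ∂(volume : Measure (EuclideanSpace ℝ (Fin N))).toSphere)
      = (∏ i : Fin p, Real.Gamma ((k i + 1) / 2)) * Real.sqrt π ^ (N - p) * 2 /
          Real.Gamma (((N : ℝ) + (∑ i : Fin p, k i : ℕ)) / 2) := by
    rw [eq_div_iff hG2.ne']
    linear_combination 2 * hmom
  rw [smul_eq_mul, hc, hFi]
  have hsplit : Real.sqrt π ^ N = Real.sqrt π ^ p * Real.sqrt π ^ (N - p) := by
    rw [← pow_add]
    congr 1
    omega
  rw [hsplit]
  field_simp
end

section
/- For every ε > 0 there exists N₀ such that for all N ≥ N₀, the quantity K_N = sup_{U ∈ O(N)} ||U||₁ satisfies K_N ≥ (√(2/π) − ε)·N·√N. -/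
open Matrix Finset Real

namespace DSTAux

/-- Sum of cosines of full set of angles `2πnk/m` vanishes when `m ∤ n`. -/
lemma sum_cos_zero (m : ℕ) (hm : 0 < m) (n : ℤ) (hn : ¬ (m:ℤ) ∣ n) :
    ∑ k ∈ Finset.range m, Real.cos (2*Real.pi*n*k/m) = 0 := by
  set z : ℂ := Complex.exp (2*Real.pi*(n/m) * Complex.I) with hzdef
  have hm' : (m:ℂ) ≠ 0 := by exact_mod_cast hm.ne'
  have hπ : (Real.pi : ℂ) ≠ 0 := by exact_mod_cast Real.pi_ne_zero
  have hz1 : z ≠ 1 := by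
    intro h
    rw [hzdef, Complex.exp_eq_one_iff] at h
    obtain ⟨k, hk⟩ := h
    apply hn
    refine ⟨k, ?_⟩
    have h2 : (2:ℂ) * Real.pi * Complex.I ≠ 0 := by
      simp [Complex.I_ne_zero, hπ]
    have : (n : ℂ) = m * k := by
      field_simp at hk
      apply mul_right_cancel₀ h2
      linear_combination (2*(Real.pi:ℂ)*Complex.I) * hk
    exact_mod_cast this
  have hzm : z ^ m = 1 := by
    rw [hzdef, ← Complex.exp_nat_mul]
    have h1 : (m:ℂ) * (2*Real.pi*(n/m) * Complex.I) = n * (2 * Real.pi * Complex.I) := by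
      field_simp
    rw [h1]
    exact_mod_cast Complex.exp_int_mul_two_pi_mul_I n
  have hsum : ∑ k ∈ Finset.range m, z ^ k = 0 := by
    have := geom_sum_eq hz1 m
    rw [this, hzm, sub_self, zero_div]
  have hre : ∀ k : ℕ, (z ^ k).re = Real.cos (2*Real.pi*n*k/m) := by
    intro k
    rw [hzdef, ← Complex.exp_nat_mul]
    have : (k:ℂ) * (2*Real.pi*(n/m) * Complex.I) = ((2*Real.pi*n*k/m : ℝ) : ℂ) * Complex.I := by
      push_cast; field_simp
    rw [this, Complex.exp_ofReal_mul_I_re]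
  calc ∑ k ∈ Finset.range m, Real.cos (2*Real.pi*n*k/m)
      = (∑ k ∈ Finset.range m, z ^ k).re := by
        rw [Complex.re_sum]; exact Finset.sum_congr rfl fun k _ => (hre k).symm
    _ = 0 := by rw [hsum]; rfl

/-- Sum of cosines of angles `πnk/m`, `k < m`, equals 1 for odd `n`. -/
lemma sum_cos_odd (m : ℕ) (hm : 0 < m) (n : ℤ) (hn : Odd n) :
    ∑ k ∈ Finset.range m, Real.cos (Real.pi*n*k/m) = 1 := by
  have hm' : (m:ℂ) ≠ 0 := by exact_mod_cast hm.ne'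
  set z : ℂ := Complex.exp (Real.pi*(n/m) * Complex.I) with hzdef
  have hzm : z ^ m = -1 := by
    rw [hzdef, ← Complex.exp_nat_mul]
    have h1 : (m:ℂ) * ((Real.pi:ℂ)*(n/m) * Complex.I) = n * (Real.pi * Complex.I) := by
      field_simp
    rw [h1, Complex.exp_int_mul, Complex.exp_pi_mul_I, hn.neg_one_zpow]
  have hz1 : z ≠ 1 := by
    intro h
    rw [h, one_pow] at hzm
    norm_num at hzm
  have habs : ‖z‖ = 1 := by
    rw [hzdef]
    have : (Real.pi:ℂ)*((n:ℂ)/m) * Complex.I = ((Real.pi*n/m : ℝ):ℂ) * Complex.I := by push_cast; ring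
    rw [this, Complex.norm_exp_ofReal_mul_I]
  set S : ℂ := ∑ k ∈ Finset.range m, z ^ k with hSdef
  have hgeom : (S) * (z - 1) = -2 := by
    rw [hSdef, geom_sum_mul, hzm]; ring
  have hx : z.re ^ 2 + z.im ^ 2 = 1 := by
    have := Complex.sq_norm z
    rw [habs] at this
    simpa [Complex.normSq_apply, sq] using this.symm
  have hxne : z.re ≠ 1 := by
    intro h
    have him : z.im = 0 := by nlinarith
    apply hz1
    apply Complex.ext <;> simp [h, him]
  have hre : (S * (z-1)).re = S.re * (z.re - 1) - S.im * z.im := by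
    simp [Complex.mul_re]
  have him : (S * (z-1)).im = S.re * z.im + S.im * (z.re - 1) := by
    simp [Complex.mul_im]
  rw [hgeom] at hre him
  simp at hre him
  have hne' : 2 - 2*z.re ≠ 0 := by
    intro h; exact hxne (by linarith)
  have key : S.re * (2 - 2*z.re) = 1 * (2 - 2*z.re) := by
    linear_combination (1 - z.re) * hre - z.im * him - S.re * hx
  have hSre : S.re = 1 := mul_right_cancel₀ hne' key
  have hre' : ∀ k : ℕ, (z ^ k).re = Real.cos (Real.pi*n*k/m) := by
    intro k
    rw [hzdef, ← Complex.exp_nat_mul]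
    have : (k:ℂ) * ((Real.pi:ℂ)*(n/m) * Complex.I) = ((Real.pi*n*k/m : ℝ) : ℂ) * Complex.I := by
      push_cast; field_simp
    rw [this, Complex.exp_ofReal_mul_I_re]
  calc ∑ k ∈ Finset.range m, Real.cos (Real.pi*n*k/m)
      = S.re := by rw [hSdef, Complex.re_sum]; exact Finset.sum_congr rfl fun k _ => (hre' k).symm
    _ = 1 := hSre

/-- The basic cosine sum `D m n = ∑_{k<m} cos (πnk/m)`. -/
noncomputable def D (m : ℕ) (n : ℤ) : ℝ := ∑ k ∈ Finset.range m, Real.cos (Real.pi*n*k/m)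

lemma D_zero (m : ℕ) : D m 0 = m := by
  simp [D]

lemma D_odd (m : ℕ) (hm : 0 < m) (n : ℤ) (hn : Odd n) : D m n = 1 :=
  sum_cos_odd m hm n hn

lemma D_even (m : ℕ) (hm : 0 < m) (n : ℤ) (hn : ¬ (m:ℤ) ∣ n) : D m (2*n) = 0 := by
  have h := sum_cos_zero m hm n hn
  rw [D, ← h]
  refine Finset.sum_congr rfl fun k _ => ?_
  congr 1
  push_cast
  ring

end DSTAux

lemma fourier_id (θ : ℝ) :
    15*(Real.sin θ)^2 - 10*(Real.sin θ)^4 + 3*(Real.sin θ)^6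
      = 75/16 - (125/32)*Real.cos (2*θ) - (11/16)*Real.cos (4*θ) - (3/32)*Real.cos (6*θ) := by
  have pyth := Real.sin_sq_add_cos_sq θ
  have c2 : Real.cos (2*θ) = 1 - 2*(Real.sin θ)^2 := by
    rw [Real.cos_two_mul]; linear_combination 2*pyth
  have c4 : Real.cos (4*θ) = 2*(Real.cos (2*θ))^2 - 1 := by
    rw [show (4:ℝ)*θ = 2*(2*θ) by ring, Real.cos_two_mul]
  have c6 : Real.cos (6*θ) = 4*(Real.cos (2*θ))^3 - 3*(Real.cos (2*θ)) := by
    rw [show (6:ℝ)*θ = 3*(2*θ) by ring, Real.cos_three_mul]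
  rw [c4, c6, c2]; ring

lemma poly_le_abs (s : ℝ) (h : |s| ≤ 1) :
    15*s^2 - 10*s^4 + 3*s^6 ≤ 8*|s| := by
  set t := |s| with ht
  have h0 : 0 ≤ t := abs_nonneg s
  have hs2 : s^2 = t^2 := (sq_abs s).symm
  have key : 8*t - (15*t^2 - 10*t^4 + 3*t^6) = t*(1-t)^3*(3*t^2+9*t+8) := by ring
  have h1 : 0 ≤ t*(1-t)^3*(3*t^2+9*t+8) := by
    have h1t : (0:ℝ) ≤ (1-t)^3 := pow_nonneg (by linarith) 3
    have h2t : (0:ℝ) ≤ 3*t^2+9*t+8 := by positivity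
    exact mul_nonneg (mul_nonneg h0 h1t) h2t
  have : 15*t^2 - 10*t^4 + 3*t^6 ≤ 8*t := by nlinarith
  calc 15*s^2 - 10*s^4 + 3*s^6 = 15*t^2 - 10*t^4 + 3*t^6 := by
        rw [show s^4 = (s^2)^2 by ring, show s^6 = (s^2)^3 by ring, hs2]; ring
    _ ≤ 8*t := this

/-- Row lower bound: if `m ∤ j, 2j, 3j` then the sum of `|sin(πjk/m)|` is at least `75m/128`. -/
lemma row_lb (m : ℕ) (hm : 0 < m) (j : ℤ)
    (h1 : ¬ (m:ℤ) ∣ j) (h2 : ¬ (m:ℤ) ∣ 2*j) (h3 : ¬ (m:ℤ) ∣ 3*j) :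
    (75/128 : ℝ) * m ≤ ∑ k ∈ Finset.range m, |Real.sin (Real.pi*j*k/m)| := by
  have hc1 : ∑ k ∈ Finset.range m, Real.cos (2*(Real.pi*j*k/m)) = 0 := by
    rw [← DSTAux.sum_cos_zero m hm j h1]
    exact Finset.sum_congr rfl fun k _ => by congr 1; push_cast; ring
  have hc2 : ∑ k ∈ Finset.range m, Real.cos (4*(Real.pi*j*k/m)) = 0 := by
    rw [← DSTAux.sum_cos_zero m hm (2*j) h2]
    exact Finset.sum_congr rfl fun k _ => by congr 1; push_cast; ring
  have hc3 : ∑ k ∈ Finset.range m, Real.cos (6*(Real.pi*j*k/m)) = 0 := by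
    rw [← DSTAux.sum_cos_zero m hm (3*j) h3]
    exact Finset.sum_congr rfl fun k _ => by congr 1; push_cast; ring
  have hA : ∑ k ∈ Finset.range m,
      (15*(Real.sin (Real.pi*j*k/m))^2 - 10*(Real.sin (Real.pi*j*k/m))^4
        + 3*(Real.sin (Real.pi*j*k/m))^6) = 75/16*(m:ℝ) := by
    simp only [fourier_id]
    rw [Finset.sum_sub_distrib, Finset.sum_sub_distrib, Finset.sum_sub_distrib,
      ← Finset.mul_sum, ← Finset.mul_sum, ← Finset.mul_sum, hc1, hc2, hc3,
      Finset.sum_const, Finset.card_range]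
    push_cast; ring
  have hle : ∀ k ∈ Finset.range m,
      (15*(Real.sin (Real.pi*j*k/m))^2 - 10*(Real.sin (Real.pi*j*k/m))^4
        + 3*(Real.sin (Real.pi*j*k/m))^6)/8 ≤ |Real.sin (Real.pi*j*k/m)| := by
    intro k _
    have h := poly_le_abs (Real.sin (Real.pi*j*k/m)) (by
      rw [abs_le]; exact ⟨Real.neg_one_le_sin _, Real.sin_le_one _⟩)
    linarith
  calc (75/128 : ℝ) * m = (75/16*(m:ℝ))/8 := by ring
    _ = (∑ k ∈ Finset.range m,
      (15*(Real.sin (Real.pi*j*k/m))^2 - 10*(Real.sin (Real.pi*j*k/m))^4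
        + 3*(Real.sin (Real.pi*j*k/m))^6))/8 := by rw [hA]
    _ = ∑ k ∈ Finset.range m,
      (15*(Real.sin (Real.pi*j*k/m))^2 - 10*(Real.sin (Real.pi*j*k/m))^4
        + 3*(Real.sin (Real.pi*j*k/m))^6)/8 := Finset.sum_div _ _ _
    _ ≤ ∑ k ∈ Finset.range m, |Real.sin (Real.pi*j*k/m)| := Finset.sum_le_sum hle

noncomputable def dst (N : ℕ) : Matrix (Fin N) (Fin N) ℝ :=
  fun j k => Real.sqrt (2/((N:ℝ)+1)) *
    Real.sin (Real.pi*(((j:ℕ):ℝ)+1)*(((k:ℕ):ℝ)+1)/((N:ℝ)+1))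

lemma sum_cos_fin (N : ℕ) (n : ℤ) :
    ∑ k : Fin N, Real.cos (Real.pi*((n:ℤ):ℝ)*(((k:ℕ):ℝ)+1)/((N:ℝ)+1))
      = DSTAux.D (N+1) n - 1 := by
  have hD : DSTAux.D (N+1) n
      = (∑ k ∈ Finset.range N, Real.cos (Real.pi*((n:ℤ):ℝ)*(((k:ℕ):ℝ)+1)/((N:ℝ)+1))) + 1 := by
    rw [DSTAux.D, Finset.sum_range_succ']
    congr 1
    · refine Finset.sum_congr rfl fun k _ => ?_
      congr 1
      push_cast
      ring
    · norm_num
  rw [hD]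
  rw [Fin.sum_univ_eq_sum_range (fun k => Real.cos (Real.pi*((n:ℤ):ℝ)*(((k:ℕ):ℝ)+1)/((N:ℝ)+1))) N]
  ring

lemma dst_orth (N : ℕ) : dst N * (dst N)ᵀ = 1 := by
  have hm : 0 < N + 1 := Nat.succ_pos N
  ext j l
  rw [Matrix.mul_apply]
  set dd : ℤ := ((j:ℕ):ℤ) - ((l:ℕ):ℤ) with hdd
  set ss : ℤ := ((j:ℕ):ℤ) + ((l:ℕ):ℤ) + 2 with hss
  have hw : Real.sqrt (2/((N:ℝ)+1)) * Real.sqrt (2/((N:ℝ)+1)) = 2/((N:ℝ)+1) :=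
    Real.mul_self_sqrt (by positivity)
  have hterm : ∀ k : Fin N, dst N j k * (dst N)ᵀ k l
      = (1/((N:ℝ)+1)) * (Real.cos (Real.pi*((dd:ℤ):ℝ)*(((k:ℕ):ℝ)+1)/((N:ℝ)+1))
        - Real.cos (Real.pi*((ss:ℤ):ℝ)*(((k:ℕ):ℝ)+1)/((N:ℝ)+1))) := by
    intro k
    simp only [Matrix.transpose_apply, dst]
    set X := Real.pi*(((j:ℕ):ℝ)+1)*(((k:ℕ):ℝ)+1)/((N:ℝ)+1) with hX
    set Y := Real.pi*(((l:ℕ):ℝ)+1)*(((k:ℕ):ℝ)+1)/((N:ℝ)+1) with hY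
    have e1 : Real.pi*((dd:ℤ):ℝ)*(((k:ℕ):ℝ)+1)/((N:ℝ)+1) = X - Y := by
      rw [hX, hY, hdd]; push_cast; ring
    have e2 : Real.pi*((ss:ℤ):ℝ)*(((k:ℕ):ℝ)+1)/((N:ℝ)+1) = X + Y := by
      rw [hX, hY, hss]; push_cast; ring
    rw [e1, e2, Real.cos_sub, Real.cos_add]
    linear_combination (Real.sin X * Real.sin Y) * hw
  rw [Finset.sum_congr rfl fun k _ => hterm k, ← Finset.mul_sum, Finset.sum_sub_distrib,
    sum_cos_fin N dd, sum_cos_fin N ss]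
  by_cases hjl : j = l
  · subst hjl
    have hdd0 : dd = 0 := by rw [hdd]; ring
    have hss2 : ss = 2*(((j:ℕ):ℤ)+1) := by rw [hss]; ring
    have hnd : ¬ ((N+1 : ℕ):ℤ) ∣ (((j:ℕ):ℤ)+1) := by
      intro h
      have hj : ((j:ℕ):ℤ)+1 = 0 := by
        apply Int.eq_zero_of_abs_lt_dvd h
        have : (j:ℕ) < N := j.isLt
        rw [abs_of_nonneg (by positivity)]
        push_cast
        omega
      omega
    rw [hdd0, hss2, DSTAux.D_zero, DSTAux.D_even _ hm _ hnd, Matrix.one_apply_eq]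
    push_cast
    field_simp
    ring
  · have hddne : dd ≠ 0 := by
      rw [hdd]
      intro h
      apply hjl
      have : (j:ℕ) = (l:ℕ) := by omega
      exact Fin.ext this
    rw [Matrix.one_apply_ne hjl]
    rcases Int.even_or_odd dd with he | ho
    · obtain ⟨d', hd'⟩ := he
      have hd2 : dd = 2*d' := by omega
      have hndd : ¬ ((N+1 : ℕ):ℤ) ∣ d' := by
        intro h
        have : d' = 0 := by
          apply Int.eq_zero_of_abs_lt_dvd h
          have h1 : (j:ℕ) < N := j.isLt
          have h2 : (l:ℕ) < N := l.isLt
          rw [abs_lt]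
          constructor <;> [push_cast; push_cast] <;> omega
        omega
      have hss2 : ss = 2*(d' + ((l:ℕ):ℤ) + 1) := by rw [hss]; omega
      have hnss : ¬ ((N+1 : ℕ):ℤ) ∣ (d' + ((l:ℕ):ℤ) + 1) := by
        intro h
        have : d' + ((l:ℕ):ℤ) + 1 = 0 := by
          apply Int.eq_zero_of_abs_lt_dvd h
          have h1 : (j:ℕ) < N := j.isLt
          have h2 : (l:ℕ) < N := l.isLt
          rw [abs_lt]
          constructor <;> [push_cast; push_cast] <;> omega
        have h1 : (j:ℕ) < N := j.isLt
        have h2 : (l:ℕ) < N := l.isLt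
        push_cast at this hd' ⊢
        omega
      rw [hd2, hss2, DSTAux.D_even _ hm _ hndd, DSTAux.D_even _ hm _ hnss]
      ring
    · have hos : Odd ss := by
        obtain ⟨c, hc⟩ := ho
        exact ⟨c + ((l:ℕ):ℤ) + 1, by omega⟩
      rw [DSTAux.D_odd _ hm _ ho, DSTAux.D_odd _ hm _ hos]
      ring

lemma row_ge (N : ℕ) (j : Fin N)
    (h2 : ¬ ((N+1:ℕ):ℤ) ∣ 2*(((j:ℕ):ℤ)+1)) (h3 : ¬ ((N+1:ℕ):ℤ) ∣ 3*(((j:ℕ):ℤ)+1)) :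
    Real.sqrt (2/((N:ℝ)+1)) * ((75/128 : ℝ) * ((N:ℝ)+1))
      ≤ ∑ k : Fin N, |dst N j k| := by
  have hm : 0 < N + 1 := Nat.succ_pos N
  have h1 : ¬ ((N+1:ℕ):ℤ) ∣ (((j:ℕ):ℤ)+1) := by
    intro h
    have hj : ((j:ℕ):ℤ)+1 = 0 := by
      apply Int.eq_zero_of_abs_lt_dvd h
      have : (j:ℕ) < N := j.isLt
      rw [abs_of_nonneg (by positivity)]
      push_cast
      omega
    omega
  have key := row_lb (N+1) hm (((j:ℕ):ℤ)+1) h1 h2 h3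
  set w := Real.sqrt (2/((N:ℝ)+1)) with hwdef
  have hw0 : 0 ≤ w := Real.sqrt_nonneg _
  have hsplit : ∑ k ∈ Finset.range (N+1),
        |Real.sin (Real.pi*((((j:ℕ):ℤ)+1 : ℤ):ℝ)*(k:ℝ)/(((N+1:ℕ)):ℝ))|
      = ∑ k ∈ Finset.range N,
        |Real.sin (Real.pi*(((j:ℕ):ℝ)+1)*((k:ℝ)+1)/((N:ℝ)+1))| := by
    rw [Finset.sum_range_succ']
    have h0 : |Real.sin (Real.pi*((((j:ℕ):ℤ)+1 : ℤ):ℝ)*((0:ℕ):ℝ)/(((N+1:ℕ)):ℝ))| = 0 := by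
      norm_num
    rw [h0, add_zero]
    refine Finset.sum_congr rfl fun k _ => ?_
    congr 2
    push_cast
    ring
  have hrow : ∑ k : Fin N, |dst N j k|
      = w * ∑ k ∈ Finset.range N,
        |Real.sin (Real.pi*(((j:ℕ):ℝ)+1)*((k:ℝ)+1)/((N:ℝ)+1))| := by
    rw [Finset.mul_sum]
    rw [← Fin.sum_univ_eq_sum_range
      (fun k : ℕ => w * |Real.sin (Real.pi*(((j:ℕ):ℝ)+1)*((k:ℝ)+1)/((N:ℝ)+1))|) N]
    refine Finset.sum_congr rfl fun k _ => ?_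
    simp only [dst]
    rw [abs_mul, abs_of_nonneg hw0]
  rw [hrow]
  rw [hsplit] at key
  calc w * ((75/128 : ℝ) * ((N:ℝ)+1))
      = w * ((75/128 : ℝ) * (((N+1:ℕ)):ℝ)) := by push_cast; ring
    _ ≤ w * ∑ k ∈ Finset.range N,
        |Real.sin (Real.pi*(((j:ℕ):ℝ)+1)*((k:ℝ)+1)/((N:ℝ)+1))| := by
        apply mul_le_mul_of_nonneg_left _ hw0
        exact key

lemma bad_card (N : ℕ) :
    (Finset.univ.filter (fun j : Fin N =>
      ((N+1:ℕ):ℤ) ∣ 2*(((j:ℕ):ℤ)+1) ∨ ((N+1:ℕ):ℤ) ∣ 3*(((j:ℕ):ℤ)+1))).card ≤ 3 := by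
  classical
  set f1 : Finset (Fin N) := Finset.univ.filter (fun j => 2*((j:ℕ)+1) = N+1) with hf1
  set f2 : Finset (Fin N) := Finset.univ.filter (fun j => 3*((j:ℕ)+1) = N+1) with hf2
  set f3 : Finset (Fin N) := Finset.univ.filter (fun j => 3*((j:ℕ)+1) = 2*(N+1)) with hf3
  have hsub : (Finset.univ.filter (fun j : Fin N =>
      ((N+1:ℕ):ℤ) ∣ 2*(((j:ℕ):ℤ)+1) ∨ ((N+1:ℕ):ℤ) ∣ 3*(((j:ℕ):ℤ)+1))) ⊆ f1 ∪ (f2 ∪ f3) := by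
    intro j hj
    rw [Finset.mem_filter] at hj
    have hjN : (j:ℕ) < N := j.isLt
    have hm : (0:ℤ) < ((N+1:ℕ):ℤ) := by positivity
    simp only [hf1, hf2, hf3, Finset.mem_union, Finset.mem_filter, Finset.mem_univ, true_and]
    rcases hj.2 with h | h
    · obtain ⟨q, hq⟩ := h
      have hub : 2*(((j:ℕ):ℤ)+1) < 2*((N+1:ℕ):ℤ) := by push_cast; omega
      have hlb : (0:ℤ) < 2*(((j:ℕ):ℤ)+1) := by positivity
      have hq1 : q = 1 := by nlinarith
      left
      rw [hq1, mul_one] at hq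
      omega
    · obtain ⟨q, hq⟩ := h
      have hub : 3*(((j:ℕ):ℤ)+1) < 3*((N+1:ℕ):ℤ) := by push_cast; omega
      have hlb : (0:ℤ) < 3*(((j:ℕ):ℤ)+1) := by positivity
      have hq1 : q = 1 ∨ q = 2 := by
        have h1 : 0 < q := by nlinarith
        have h2 : q < 3 := by nlinarith
        omega
      right
      rcases hq1 with hq1 | hq1
      · left; rw [hq1, mul_one] at hq; omega
      · right; rw [hq1] at hq; omega
  calc (Finset.univ.filter (fun j : Fin N =>
      ((N+1:ℕ):ℤ) ∣ 2*(((j:ℕ):ℤ)+1) ∨ ((N+1:ℕ):ℤ) ∣ 3*(((j:ℕ):ℤ)+1))).card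
      ≤ (f1 ∪ (f2 ∪ f3)).card := Finset.card_le_card hsub
    _ ≤ f1.card + (f2 ∪ f3).card := Finset.card_union_le _ _
    _ ≤ f1.card + (f2.card + f3.card) := by
        exact Nat.add_le_add_left (Finset.card_union_le _ _) _
    _ ≤ 1 + (1 + 1) := by
        have c1 : f1.card ≤ 1 := Finset.card_le_one.mpr (by
          intro a ha b hb
          simp only [hf1, Finset.mem_filter, Finset.mem_univ, true_and] at ha hb
          exact Fin.ext (by omega))
        have c2 : f2.card ≤ 1 := Finset.card_le_one.mpr (by
          intro a ha b hb
          simp only [hf2, Finset.mem_filter, Finset.mem_univ, true_and] at ha hb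
          exact Fin.ext (by omega))
        have c3 : f3.card ≤ 1 := Finset.card_le_one.mpr (by
          intro a ha b hb
          simp only [hf3, Finset.mem_filter, Finset.mem_univ, true_and] at ha hb
          exact Fin.ext (by omega))
        omega
    _ = 3 := by norm_num

lemma total_ge (N : ℕ) (hN : 3 ≤ N) :
    (75/128 : ℝ) * Real.sqrt 2 * Real.sqrt N * ((N:ℝ) - 3)
      ≤ ∑ i : Fin N, ∑ k : Fin N, |dst N i k| := by
  classical
  set Bad : Finset (Fin N) := Finset.univ.filter (fun j : Fin N =>
      ((N+1:ℕ):ℤ) ∣ 2*(((j:ℕ):ℤ)+1) ∨ ((N+1:ℕ):ℤ) ∣ 3*(((j:ℕ):ℤ)+1)) with hBad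
  set G : Finset (Fin N) := Finset.univ \ Bad with hG
  have hCard : N - 3 ≤ G.card := by
    have h1 : G.card = N - Bad.card := by
      rw [hG, Finset.card_sdiff_of_subset (Finset.subset_univ _), Finset.card_univ, Fintype.card_fin]
    have h2 : Bad.card ≤ 3 := by rw [hBad]; exact bad_card N
    omega
  set w := Real.sqrt (2/((N:ℝ)+1)) with hwdef
  have hw0 : 0 ≤ w := Real.sqrt_nonneg _
  have hrow : ∀ j ∈ G, w * ((75/128 : ℝ) * ((N:ℝ)+1)) ≤ ∑ k : Fin N, |dst N j k| := by
    intro j hj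
    rw [hG, Finset.mem_sdiff, hBad, Finset.mem_filter] at hj
    push_neg at hj
    have := hj.2 (Finset.mem_univ j)
    exact row_ge N j this.1 this.2
  have hstep1 : ∑ j ∈ G, (w * ((75/128 : ℝ) * ((N:ℝ)+1))) ≤ ∑ j ∈ G, ∑ k : Fin N, |dst N j k| :=
    Finset.sum_le_sum hrow
  have hstep2 : ∑ j ∈ G, ∑ k : Fin N, |dst N j k| ≤ ∑ j : Fin N, ∑ k : Fin N, |dst N j k| := by
    apply Finset.sum_le_sum_of_subset_of_nonneg (Finset.subset_univ G)
    intro j _ _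
    exact Finset.sum_nonneg fun k _ => abs_nonneg _
  have hconst : ∑ j ∈ G, (w * ((75/128 : ℝ) * ((N:ℝ)+1))) = G.card * (w * ((75/128 : ℝ) * ((N:ℝ)+1))) := by
    rw [Finset.sum_const, nsmul_eq_mul]
  have hcardR : ((N:ℝ) - 3) ≤ (G.card : ℝ) := by
    have : ((N - 3 : ℕ) : ℝ) ≤ (G.card : ℝ) := by exact_mod_cast hCard
    have h3 : ((N - 3 : ℕ) : ℝ) = (N:ℝ) - 3 := by
      have : 3 ≤ N := hN
      push_cast [Nat.cast_sub this]
      ring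
    linarith
  have hwm : w * ((N:ℝ)+1) = Real.sqrt (2*((N:ℝ)+1)) := by
    have hsq2 : (w * ((N:ℝ)+1))^2 = 2*((N:ℝ)+1) := by
      rw [hwdef, mul_pow, Real.sq_sqrt (by positivity)]
      field_simp
    rw [← hsq2, Real.sqrt_sq (by positivity)]
  have hsq : Real.sqrt 2 * Real.sqrt N ≤ Real.sqrt (2*((N:ℝ)+1)) := by
    rw [← Real.sqrt_mul (by norm_num)]
    apply Real.sqrt_le_sqrt
    nlinarith [Nat.cast_nonneg (α := ℝ) N]
  have hfinal : (75/128 : ℝ) * Real.sqrt 2 * Real.sqrt N * ((N:ℝ) - 3)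
      ≤ (G.card : ℝ) * (w * ((75/128 : ℝ) * ((N:ℝ)+1))) := by
    have hN3 : (0:ℝ) ≤ (N:ℝ) - 3 := by
      have : (3:ℝ) ≤ (N:ℝ) := by exact_mod_cast hN
      linarith
    have e1 : (G.card : ℝ) * (w * ((75/128 : ℝ) * ((N:ℝ)+1)))
        = (75/128 : ℝ) * Real.sqrt (2*((N:ℝ)+1)) * (G.card : ℝ) := by
      rw [← hwm]; ring
    rw [e1]
    have h1 : (75/128 : ℝ) * Real.sqrt 2 * Real.sqrt N * ((N:ℝ) - 3)
        ≤ (75/128 : ℝ) * Real.sqrt (2*((N:ℝ)+1)) * ((N:ℝ) - 3) := by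
      apply mul_le_mul_of_nonneg_right _ hN3
      have := hsq
      nlinarith [Real.sqrt_nonneg (2*((N:ℝ)+1))]
    have h2 : (75/128 : ℝ) * Real.sqrt (2*((N:ℝ)+1)) * ((N:ℝ) - 3)
        ≤ (75/128 : ℝ) * Real.sqrt (2*((N:ℝ)+1)) * (G.card : ℝ) := by
      apply mul_le_mul_of_nonneg_left hcardR
      positivity
    linarith
  calc (75/128 : ℝ) * Real.sqrt 2 * Real.sqrt N * ((N:ℝ) - 3)
      ≤ (G.card : ℝ) * (w * ((75/128 : ℝ) * ((N:ℝ)+1))) := hfinal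
    _ = ∑ j ∈ G, (w * ((75/128 : ℝ) * ((N:ℝ)+1))) := by rw [hconst]
    _ ≤ ∑ j ∈ G, ∑ k : Fin N, |dst N j k| := hstep1
    _ ≤ ∑ j : Fin N, ∑ k : Fin N, |dst N j k| := hstep2

/-- With `N → ∞`, `K_N = sup_{U ∈ O(N)} ‖U‖₁ ≥ √(2/π)·N·√N`: for every `ε > 0`
there is `N₀` such that `K_N ≥ (√(2/π) − ε)·N·√N` for all `N ≥ N₀`. -/
theorem sSup_norm1_asymptotic :
    ∀ ε > (0 : ℝ), ∃ N₀ : ℕ, ∀ N ≥ N₀,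
      (Real.sqrt (2 / Real.pi) - ε) * N * Real.sqrt N ≤
        sSup {x : ℝ | ∃ U : Matrix (Fin N) (Fin N) ℝ,
          U * Uᵀ = 1 ∧ x = ∑ i, ∑ j, |U i j|} := by
  intro ε hε
  refine ⟨max 4 ⌈3/ε⌉₊, fun N hN => ?_⟩
  have hN4 : 4 ≤ N := le_trans (le_max_left _ _) hN
  have hNε : (3:ℝ)/ε ≤ N := by
    have h1 : ⌈3/ε⌉₊ ≤ N := le_trans (le_max_right _ _) hN
    exact le_trans (Nat.le_ceil _) (by exact_mod_cast h1)
  have hεN : 3 ≤ ε * N := by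
    rw [div_le_iff₀ hε] at hNε
    linarith [hNε]
  have hN3 : 3 ≤ N := by omega
  have hNR : (3:ℝ) ≤ (N:ℝ) := by exact_mod_cast hN3
  -- the candidate matrix
  set x₀ : ℝ := ∑ i : Fin N, ∑ j : Fin N, |dst N i j| with hx₀
  have hmem : x₀ ∈ {x : ℝ | ∃ U : Matrix (Fin N) (Fin N) ℝ,
      U * Uᵀ = 1 ∧ x = ∑ i, ∑ j, |U i j|} := ⟨dst N, dst_orth N, rfl⟩
  -- the set is bounded above
  have hbdd : BddAbove {x : ℝ | ∃ U : Matrix (Fin N) (Fin N) ℝ,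
      U * Uᵀ = 1 ∧ x = ∑ i, ∑ j, |U i j|} := by
    refine ⟨(N:ℝ) * N, fun x hx => ?_⟩
    obtain ⟨U, hU, hxU⟩ := hx
    have hentry : ∀ i j : Fin N, |U i j| ≤ 1 := by
      intro i j
      have hdiag : ∑ k : Fin N, U i k * U i k = 1 := by
        have := congrFun (congrFun hU i) i
        rw [Matrix.mul_apply] at this
        simpa [Matrix.transpose_apply, Matrix.one_apply_eq] using this
      have hsq : U i j * U i j ≤ 1 := by
        rw [← hdiag]
        exact Finset.single_le_sum (fun k _ => mul_self_nonneg (U i k)) (Finset.mem_univ j)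
      nlinarith [abs_nonneg (U i j), sq_abs (U i j)]
    rw [hxU]
    calc ∑ i : Fin N, ∑ j : Fin N, |U i j| ≤ ∑ i : Fin N, ∑ j : Fin N, (1:ℝ) :=
          Finset.sum_le_sum fun i _ => Finset.sum_le_sum fun j _ => hentry i j
      _ = (N:ℝ) * N := by simp [Finset.sum_const, Finset.card_univ, mul_comm]
  refine le_trans ?_ (le_csSup hbdd hmem)
  -- numeric constants
  set c : ℝ := (75/128 : ℝ) * Real.sqrt 2 with hc
  have hsqrt2 : (Real.sqrt 2)^2 = 2 := Real.sq_sqrt (by norm_num)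
  have hsqrt2nn : 0 ≤ Real.sqrt 2 := Real.sqrt_nonneg 2
  have hc2 : c ≤ 1 := by
    rw [hc]; nlinarith
  have hc1 : Real.sqrt (2/Real.pi) ≤ c := by
    have hπ3 := Real.pi_gt_three
    have h1 : (2:ℝ)/Real.pi ≤ 11250/16384 := by
      rw [div_le_div_iff₀ Real.pi_pos (by norm_num)]
      nlinarith
    have h2 : Real.sqrt (2/Real.pi) ≤ Real.sqrt (11250/16384) := Real.sqrt_le_sqrt h1
    have h3 : Real.sqrt (11250/16384) = c := by
      rw [hc, show (11250/16384 : ℝ) = (75/128)^2 * 2 by norm_num,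
        Real.sqrt_mul (by positivity), Real.sqrt_sq (by norm_num)]
    linarith
  -- the scalar inequality
  have hscalar : (Real.sqrt (2/Real.pi) - ε) * N ≤ c * ((N:ℝ) - 3) := by
    have h1 : 0 ≤ (c - Real.sqrt (2/Real.pi)) * N :=
      mul_nonneg (by linarith) (by positivity)
    nlinarith
  have hfin := total_ge N hN3
  calc (Real.sqrt (2/Real.pi) - ε) * N * Real.sqrt N
      = ((Real.sqrt (2/Real.pi) - ε) * N) * Real.sqrt N := by ring
    _ ≤ (c * ((N:ℝ) - 3)) * Real.sqrt N :=
        mul_le_mul_of_nonneg_right hscalar (Real.sqrt_nonneg _)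
    _ = (75/128 : ℝ) * Real.sqrt 2 * Real.sqrt N * ((N:ℝ) - 3) := by rw [hc]; ring
    _ ≤ x₀ := hfin
end
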